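/- arXiv:2509.07972 — 9 statements merged into one kernel-verified Lean document; each statement's English description precedes it below -/
import Mathlib

section
/- Let f : ℝ^d → ℝ be twice differentiable, bounded below with f* = inf_w f(w) > −∞, and (ρ, L₀, L_ρ)-smooth for some 0 ≤ ρ < 2 and L₀, L_ρ ≥ 0 (i.e. ‖∇²f(w)‖ ≤ L₀ + L_ρ‖∇f(w)‖^ρ for all w). Then for all w ∈ ℝ^d, ‖∇²f(w)‖ ≤ 2L₀ + L_ρ^{2/(2−ρ)} · 2^{ρ(ρ+2)/(2−ρ)} · (f(w) − f*)^{ρ/(2−ρ)}; in particular f is (α, K₀, K_α)-smooth with α = ρ/(2−ρ), K₀ = 2L₀ and K_α = L_ρ^{2/(2−ρ)} 2^{ρ(ρ+2)/(2−ρ)}. -/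
open Real

noncomputable section

section KeyLemma

set_option maxHeartbeats 1000000

open Set

variable {F : Type*} [NormedAddCommGroup F] [InnerProductSpace ℝ F] [CompleteSpace F]

theorem key_ineq (f : F → ℝ) (hf : ContDiff ℝ 2 f) (fstar : ℝ)
    (hglb : IsGLB (Set.range f) fstar) (w : F) (L : ℝ)
    (hbound : ∀ v, ‖gradient f v‖ ≤ 2 * ‖gradient f w‖ → ‖fderiv ℝ (gradient f) v‖ ≤ L)
    (hG : gradient f w ≠ 0) :
    ‖gradient f w‖ ^ (2 : ℕ) ≤ 2 * L * (f w - fstar) := by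
  have hgrad_cd : ContDiff ℝ 1 (gradient f) := by
    have h1 : ContDiff ℝ 1 (fderiv ℝ f) := hf.fderiv_right (by norm_num)
    exact (InnerProductSpace.toDual ℝ F).symm.toContinuousLinearEquiv.contDiff.comp h1
  have hgrad_diff : Differentiable ℝ (gradient f) := hgrad_cd.differentiable (by norm_num)
  have hf_diff : Differentiable ℝ f := hf.differentiable (by norm_num)
  set G : ℝ := ‖gradient f w‖ with hGdef
  have hGpos : 0 < G := norm_pos_iff.mpr hG
  have hL0 : 0 ≤ L := le_trans (norm_nonneg _) (hbound w (by linarith [norm_nonneg (gradient f w)]))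
  set u : F := (-G⁻¹) • gradient f w with hudef
  have hu : ‖u‖ = 1 := by
    rw [hudef, norm_smul, Real.norm_eq_abs, abs_neg, abs_of_pos (inv_pos.mpr hGpos), ← hGdef]
    field_simp
  have hinner_wu : inner (𝕜 := ℝ) (gradient f w) u = -G := by
    rw [hudef, real_inner_smul_right, real_inner_self_eq_norm_sq, ← hGdef]
    field_simp
  set γ : ℝ → F := fun t => w + t • u with hγdef
  have hγ0 : γ 0 = w := by simp [hγdef]
  have hγd : ∀ t : ℝ, HasDerivAt γ u t := by
    intro t
    simpa [hγdef] using ((hasDerivAt_id t).smul_const u).const_add w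
  have hfderiv_inner : ∀ x : F, ∀ v : F, (fderiv ℝ f x) v = inner (𝕜 := ℝ) (gradient f x) v := by
    intro x v
    simp [gradient, InnerProductSpace.toDual_apply_apply]
  -- the composed maps
  have hgγ : ∀ t : ℝ, HasDerivAt (fun s => gradient f (γ s))
      ((fderiv ℝ (gradient f) (γ t)) u) t := fun t =>
    ((hgrad_diff (γ t)).hasFDerivAt).comp_hasDerivAt t (hγd t)
  have hfγ : ∀ t : ℝ, HasDerivAt (fun s => f (γ s))
      (inner (𝕜 := ℝ) (gradient f (γ t)) u) t := fun t => by
    have := ((hf_diff (γ t)).hasFDerivAt).comp_hasDerivAt t (hγd t)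
    rwa [hfderiv_inner] at this
  have hΔ0 : 0 ≤ f w - fstar := sub_nonneg.mpr (hglb.1 ⟨w, rfl⟩)
  -- epsilon version
  have stepε : ∀ ε : ℝ, 0 < ε → G ^ (2:ℕ) ≤ 2 * (L + ε) * (f w - fstar) := by
    intro ε hε
    set M : ℝ := L + ε with hMdef
    have hM : 0 < M := by positivity
    set T : ℝ := G / M with hTdef
    have hT : 0 < T := div_pos hGpos hM
    -- Step A: gradient norm bound along the path
    have stepA : ∀ t ∈ Icc (0:ℝ) T, ‖gradient f (γ t)‖ ≤ G + M * t := by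
      apply image_norm_le_of_norm_deriv_right_lt_deriv_boundary'
        (f := fun s => gradient f (γ s)) (f' := fun s => (fderiv ℝ (gradient f) (γ s)) u)
        (B := fun t => G + M * t) (B' := fun _ => M)
      · exact (hgrad_diff.continuous.comp (continuous_const.add (continuous_id.smul continuous_const))).continuousOn
      · exact fun x _ => (hgγ x).hasDerivWithinAt
      · simp [hγ0, hGdef]
      · exact (continuous_const.add (continuous_const.mul continuous_id)).continuousOn
      · intro x _
        simpa using ((hasDerivAt_id x).const_mul M).const_add G |>.hasDerivWithinAt
      · intro x hx heq
        have hx2 : ‖gradient f (γ x)‖ ≤ 2 * G := by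
          rw [heq]
          have : M * x ≤ M * T := by
            have := hx.2.le
            nlinarith
          have : M * T = G := by rw [hTdef]; field_simp
          nlinarith [hx.2.le, hM.le]
        have h1 : ‖fderiv ℝ (gradient f) (γ x)‖ ≤ L := hbound _ hx2
        calc ‖(fderiv ℝ (gradient f) (γ x)) u‖ ≤ ‖fderiv ℝ (gradient f) (γ x)‖ * ‖u‖ :=
              (fderiv ℝ (gradient f) (γ x)).le_opNorm u
          _ = ‖fderiv ℝ (gradient f) (γ x)‖ := by rw [hu, mul_one]
          _ ≤ L := h1
          _ < M := by rw [hMdef]; linarith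
    -- Step B: Lipschitz bound for the gradient along the path
    have stepB : ∀ t ∈ Icc (0:ℝ) T, ‖gradient f (γ t) - gradient f w‖ ≤ M * t := by
      intro t ht
      have := norm_image_sub_le_of_norm_deriv_le_segment'
        (f := fun s => gradient f (γ s)) (f' := fun s => (fderiv ℝ (gradient f) (γ s)) u)
        (a := 0) (b := T) (C := M)
        (fun x _ => (hgγ x).hasDerivWithinAt)
        (fun x hx => by
          have hx2 : ‖gradient f (γ x)‖ ≤ 2 * G := by
            have h1 := stepA x ⟨hx.1, hx.2.le⟩
            have : M * x ≤ M * T := by nlinarith [hx.2.le]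
            have hMT : M * T = G := by rw [hTdef]; field_simp
            nlinarith
          have h1 : ‖fderiv ℝ (gradient f) (γ x)‖ ≤ L := hbound _ hx2
          calc ‖(fderiv ℝ (gradient f) (γ x)) u‖
              ≤ ‖fderiv ℝ (gradient f) (γ x)‖ * ‖u‖ :=
                (fderiv ℝ (gradient f) (γ x)).le_opNorm u
            _ = ‖fderiv ℝ (gradient f) (γ x)‖ := by rw [hu, mul_one]
            _ ≤ M := by rw [hMdef]; linarith) t ht
      simpa [hγ0] using this
    -- Step D: function value decrease
    have stepD : f (γ T) ≤ f w - G * T + M * T ^ 2 / 2 := by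
      have := image_le_of_deriv_right_le_deriv_boundary
        (f := fun s => f (γ s)) (f' := fun s => inner (𝕜 := ℝ) (gradient f (γ s)) u)
        (a := 0) (b := T)
        (B := fun t => f w - G * t + M * t ^ 2 / 2) (B' := fun t => -G + M * t)
        (hf_diff.continuous.comp (continuous_const.add (continuous_id.smul continuous_const))).continuousOn
        (fun x _ => (hfγ x).hasDerivWithinAt)
        (by simp [hγ0])
        (Continuous.continuousOn (by fun_prop))
        (fun x _ => by
          have : HasDerivAt (fun t : ℝ => f w - G * t + M * t ^ 2 / 2) (-G + M * x) x := by
            have h1 : HasDerivAt (fun t : ℝ => f w - G * t) (-G) x := by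
              simpa using ((hasDerivAt_id x).const_mul G).const_sub (f w)
            have h2 : HasDerivAt (fun t : ℝ => M * t ^ 2 / 2) (M * x) x := by
              have := (hasDerivAt_pow 2 x).const_mul M
              have h3 := this.div_const 2
              refine h3.congr_deriv ?_
              ring
            exact h1.add h2
          exact this.hasDerivWithinAt)
        (fun x hx => by
          have hB := stepB x ⟨hx.1, hx.2.le⟩
          have : inner (𝕜 := ℝ) (gradient f (γ x)) u
              = inner (𝕜 := ℝ) (gradient f w) u
                + inner (𝕜 := ℝ) (gradient f (γ x) - gradient f w) u := by
            rw [← inner_add_left]; congr 1; abel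
          show inner (𝕜 := ℝ) (gradient f (γ x)) u ≤ -G + M * x
          rw [this, hinner_wu]
          have habs : inner (𝕜 := ℝ) (gradient f (γ x) - gradient f w) u ≤ M * x := by
            calc inner (𝕜 := ℝ) (gradient f (γ x) - gradient f w) u
                ≤ ‖gradient f (γ x) - gradient f w‖ * ‖u‖ := real_inner_le_norm _ _
              _ = ‖gradient f (γ x) - gradient f w‖ := by rw [hu, mul_one]
              _ ≤ M * x := hB
          linarith)
      exact this (right_mem_Icc.mpr hT.le)
    have hfs : fstar ≤ f (γ T) := hglb.1 ⟨γ T, rfl⟩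
    have hMT : M * T = G := by rw [hTdef]; field_simp
    have : fstar ≤ f w - G * T + M * T ^ 2 / 2 := le_trans hfs stepD
    have hGT : G * T = G ^ 2 / M := by rw [hTdef]; field_simp
    have hMT2 : M * T ^ 2 / 2 = G ^ 2 / (2 * M) := by
      rw [hTdef]; field_simp
    rw [hGT, hMT2] at this
    have h2M : 0 < 2 * M := by linarith
    have h1' : G ^ 2 / (2 * M) ≤ f w - fstar := by
      have h2 : f w - G ^ 2 / M + G ^ 2 / (2 * M) = f w - G ^ 2 / (2 * M) := by
        field_simp; ring
      linarith [h2 ▸ this]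
    have h3 := (div_le_iff₀ h2M).mp h1'
    calc G ^ 2 ≤ (f w - fstar) * (2 * M) := h3
      _ = 2 * (L + ε) * (f w - fstar) := by rw [hMdef]; ring
  -- take ε → 0
  by_contra hcon
  push_neg at hcon
  rcases eq_or_lt_of_le hΔ0 with hΔ | hΔ
  · have h0 : f w - fstar = 0 := hΔ.symm
    have h1 := stepε 1 one_pos
    rw [h0, mul_zero] at h1
    rw [h0, mul_zero] at hcon
    nlinarith [sq_nonneg G, hGpos]
  · set Δ : ℝ := f w - fstar with hΔdef
    set D : ℝ := (G ^ 2 - 2 * L * Δ) / (4 * Δ) with hDdef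
    have hε : 0 < D := div_pos (by nlinarith) (by nlinarith)
    have h1 := stepε _ hε
    have hD : 2 * Δ * D = (G ^ 2 - 2 * L * Δ) / 2 := by
      rw [hDdef]; field_simp; ring
    have hexp : 2 * (L + D) * Δ = 2 * L * Δ + 2 * Δ * D := by ring
    rw [hexp, hD] at h1
    clear_value D Δ
    linarith


end KeyLemma

/-- If `f` is twice differentiable, bounded below with infimum `fstar`,
and `(ρ, L₀, L_ρ)`-smooth with `0 ≤ ρ < 2`, then
`‖∇²f(w)‖ ≤ 2L₀ + L_ρ^{2/(2−ρ)} 2^{ρ(ρ+2)/(2−ρ)} (f(w) − f*)^{ρ/(2−ρ)}` for all `w`;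
in particular `f` is `(ρ/(2−ρ), 2L₀, L_ρ^{2/(2−ρ)} 2^{ρ(ρ+2)/(2−ρ)})`-smooth. -/
theorem statement0 (d : ℕ) (f : EuclideanSpace ℝ (Fin d) → ℝ)
    (hf : ContDiff ℝ 2 f)
    (fstar : ℝ) (hglb : IsGLB (Set.range f) fstar)
    (ρ L0 Lρ : ℝ) (hρ0 : 0 ≤ ρ) (hρ2 : ρ < 2) (hL0 : 0 ≤ L0) (hLρ : 0 ≤ Lρ)
    (hsmooth : ∀ w, ‖fderiv ℝ (gradient f) w‖ ≤ L0 + Lρ * ‖gradient f w‖ ^ ρ) :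
    ∀ w, ‖fderiv ℝ (gradient f) w‖ ≤
      2 * L0 + Lρ ^ (2 / (2 - ρ)) * 2 ^ (ρ * (ρ + 2) / (2 - ρ)) * (f w - fstar) ^ (ρ / (2 - ρ)) := by
  intro w
  have h2ρ : 0 < 2 - ρ := by linarith
  have hΔ0 : 0 ≤ f w - fstar := sub_nonneg.mpr (hglb.1 ⟨w, rfl⟩)
  have hKnn : 0 ≤ Lρ ^ (2 / (2 - ρ)) * 2 ^ (ρ * (ρ + 2) / (2 - ρ)) * (f w - fstar) ^ (ρ / (2 - ρ)) := by
    positivity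
  rcases eq_or_lt_of_le hρ0 with hρz | hρpos
  · -- ρ = 0
    subst hρz
    have h1 := hsmooth w
    rw [Real.rpow_zero, mul_one] at h1
    rw [show (2:ℝ) / (2 - 0) = 1 by norm_num, show (0:ℝ) * (0 + 2) / (2 - 0) = 0 by norm_num,
      show (0:ℝ) / (2 - 0) = 0 by norm_num, Real.rpow_one, Real.rpow_zero, Real.rpow_zero,
      mul_one, mul_one]
    linarith
  · by_cases hg : gradient f w = 0
    · have hz : ‖gradient f w‖ ^ ρ = 0 := by
        rw [hg, norm_zero, Real.zero_rpow (ne_of_gt hρpos)]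
      have h1 := hsmooth w
      rw [hz, mul_zero, add_zero] at h1
      linarith
    · set G : ℝ := ‖gradient f w‖ with hGdef
      have hGpos : 0 < G := norm_pos_iff.mpr hg
      set L : ℝ := L0 + Lρ * (2 * G) ^ ρ with hLdef
      have hbound : ∀ v, ‖gradient f v‖ ≤ 2 * G → ‖fderiv ℝ (gradient f) v‖ ≤ L := by
        intro v hv
        refine le_trans (hsmooth v) ?_
        rw [hLdef]
        have := Real.rpow_le_rpow (norm_nonneg (gradient f v)) hv hρ0
        nlinarith [this, hLρ]
      have hkey := key_ineq f hf fstar hglb w L hbound hg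
      set Δ : ℝ := f w - fstar with hΔdef
      -- suffices to bound Lρ * G ^ ρ
      have main : Lρ * G ^ ρ ≤ L0 + Lρ ^ (2 / (2 - ρ)) * 2 ^ (ρ * (ρ + 2) / (2 - ρ)) * Δ ^ (ρ / (2 - ρ)) := by
        rcases le_or_gt (Lρ * (2 * G) ^ ρ) L0 with h1 | h1
        · have h2 : Lρ * G ^ ρ ≤ Lρ * (2 * G) ^ ρ := by
            have := Real.rpow_le_rpow (le_of_lt hGpos) (by linarith : G ≤ 2 * G) hρ0
            nlinarith [this, hLρ]
          have hK2 : 0 ≤ Lρ ^ (2 / (2 - ρ)) * 2 ^ (ρ * (ρ + 2) / (2 - ρ)) * Δ ^ (ρ / (2 - ρ)) := by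
            positivity
          linarith
        · have hLρpos : 0 < Lρ := by
            by_contra hc
            push_neg at hc
            have h0 : Lρ = 0 := le_antisymm hc hLρ
            rw [h0, zero_mul] at h1
            linarith
          have h2Gρ : 0 < (2 * G) ^ ρ := Real.rpow_pos_of_pos (by linarith) ρ
          have hLpos : 0 < L := by rw [hLdef]; positivity
          have hΔpos : 0 < Δ := by nlinarith [pow_pos hGpos 2, hkey]
          -- G^2 ≤ 4 * Lρ * (2G)^ρ * Δ
          have h2 : G ^ (2:ℕ) ≤ 4 * Lρ * ((2 * G) ^ ρ) * Δ := by
            rw [hLdef] at hkey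
            nlinarith [hkey, h1, hΔpos]
          have hmul : (2 * G) ^ ρ = 2 ^ ρ * G ^ ρ :=
            Real.mul_rpow (by norm_num) (le_of_lt hGpos)
          have h4 : (4:ℝ) * 2 ^ ρ = 2 ^ (ρ + 2) := by
            rw [Real.rpow_add (by norm_num : (0:ℝ) < 2)]
            rw [show ((2:ℝ) ^ (2:ℝ)) = 4 by
              rw [show (2:ℝ) = ((2:ℕ):ℝ) by norm_num, Real.rpow_natCast]; norm_num]
            ring
          have hGρpos : 0 < G ^ ρ := Real.rpow_pos_of_pos hGpos ρ
          have hsplit : G ^ (2:ℕ) = G ^ ((2:ℝ) - ρ) * G ^ ρ := by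
            rw [← Real.rpow_add hGpos, show (2:ℝ) - ρ + ρ = ((2:ℕ):ℝ) by push_cast; ring,
              Real.rpow_natCast]
          have hstep : G ^ ((2:ℝ) - ρ) ≤ 2 ^ (ρ + 2) * Lρ * Δ := by
            have h3 : G ^ ((2:ℝ) - ρ) * G ^ ρ ≤ (2 ^ (ρ + 2) * Lρ * Δ) * G ^ ρ := by
              rw [← hsplit]
              calc G ^ (2:ℕ) ≤ 4 * Lρ * ((2 * G) ^ ρ) * Δ := h2
                _ = (2 ^ (ρ + 2) * Lρ * Δ) * G ^ ρ := by rw [hmul, ← h4]; ring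
            exact le_of_mul_le_mul_right h3 hGρpos
          set α : ℝ := ρ / (2 - ρ) with hαdef
          have hαpos : 0 < α := div_pos hρpos h2ρ
          have hGρ_eq : G ^ ρ = (G ^ ((2:ℝ) - ρ)) ^ α := by
            rw [← Real.rpow_mul (le_of_lt hGpos), show ((2:ℝ) - ρ) * α = ρ by
              rw [hαdef]; field_simp]
          have hmono : (G ^ ((2:ℝ) - ρ)) ^ α ≤ (2 ^ (ρ + 2) * Lρ * Δ) ^ α :=
            Real.rpow_le_rpow (Real.rpow_nonneg (le_of_lt hGpos) _) hstep (le_of_lt hαpos)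
          have hRHS : (2 ^ (ρ + 2) * Lρ * Δ) ^ α
              = 2 ^ ((ρ + 2) * α) * Lρ ^ α * Δ ^ α := by
            rw [Real.mul_rpow (by positivity) (le_of_lt hΔpos),
              Real.mul_rpow (by positivity) (le_of_lt hLρpos),
              ← Real.rpow_mul (by norm_num : (0:ℝ) ≤ 2)]
          have hfinal : Lρ * G ^ ρ ≤ Lρ ^ (2 / (2 - ρ)) * 2 ^ (ρ * (ρ + 2) / (2 - ρ)) * Δ ^ α := by
            have e1 : Lρ * (2 ^ ((ρ + 2) * α) * Lρ ^ α * Δ ^ α)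
                = (Lρ * Lρ ^ α) * 2 ^ ((ρ + 2) * α) * Δ ^ α := by ring
            have e2 : Lρ * Lρ ^ α = Lρ ^ (2 / (2 - ρ)) := by
              nth_rewrite 1 [← Real.rpow_one Lρ]
              rw [← Real.rpow_add hLρpos, show (1:ℝ) + α = 2 / (2 - ρ) by
                rw [hαdef]; field_simp; ring]
            have e3 : (ρ + 2) * α = ρ * (ρ + 2) / (2 - ρ) := by
              rw [hαdef]; field_simp
            calc Lρ * G ^ ρ ≤ Lρ * (2 ^ ((ρ + 2) * α) * Lρ ^ α * Δ ^ α) := by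
                  rw [hGρ_eq]
                  exact mul_le_mul_of_nonneg_left (hmono.trans_eq hRHS) (le_of_lt hLρpos)
              _ = (Lρ * Lρ ^ α) * 2 ^ ((ρ + 2) * α) * Δ ^ α := e1
              _ = Lρ ^ (2 / (2 - ρ)) * 2 ^ (ρ * (ρ + 2) / (2 - ρ)) * Δ ^ α := by rw [e2, e3]
          linarith
      calc ‖fderiv ℝ (gradient f) w‖ ≤ L0 + Lρ * G ^ ρ := hsmooth w
        _ ≤ 2 * L0 + Lρ ^ (2 / (2 - ρ)) * 2 ^ (ρ * (ρ + 2) / (2 - ρ)) * Δ ^ (ρ / (2 - ρ)) := by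
            linarith
end
end

section
/- Define f : ℝ → ℝ by f(x) = 2x + x·sin(x) for x ≥ 0 and f(x) = 2(e^x − 1) for x < 0. Then f is twice differentiable, bounded below with f* = inf f > −∞, and there exist constants K₀, K₁ ≥ 0 such that |f''(x)| ≤ K₀ + K₁(f(x) − f*) for all x ∈ ℝ (f is (1, K₀, K₁)-smooth); however, for every ρ > 0 and all constants L₀, L_ρ ≥ 0, f is not (ρ, L₀, L_ρ)-smooth, i.e. there exists x ∈ ℝ with |f''(x)| > L₀ + L_ρ|f'(x)|^ρ. -/
open Real

noncomputable section

namespace Stmt1Aux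

def F (x : ℝ) : ℝ := if 0 ≤ x then 2 * x + x * Real.sin x else 2 * (Real.exp x - 1)

def G (x : ℝ) : ℝ := if 0 ≤ x then 2 + Real.sin x + x * Real.cos x else 2 * Real.exp x

def H (x : ℝ) : ℝ := if 0 ≤ x then 2 * Real.cos x - x * Real.sin x else 2 * Real.exp x

lemma hasDerivAt_R (x : ℝ) :
    HasDerivAt (fun y : ℝ => 2 * y + y * Real.sin y) (2 + Real.sin x + x * Real.cos x) x := by
  have h1 : HasDerivAt (fun y : ℝ => 2 * y) 2 x := by
    simpa using (hasDerivAt_id x).const_mul (2 : ℝ)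
  have h2 : HasDerivAt (fun y : ℝ => y * Real.sin y) (Real.sin x + x * Real.cos x) x := by
    simpa using (hasDerivAt_id x).fun_mul (Real.hasDerivAt_sin x)
  simpa [add_assoc] using h1.fun_add h2

lemma hasDerivAt_L (x : ℝ) :
    HasDerivAt (fun y : ℝ => 2 * (Real.exp y - 1)) (2 * Real.exp x) x := by
  simpa using ((Real.hasDerivAt_exp x).sub_const 1).const_mul (2 : ℝ)

lemma hasDerivAt_R' (x : ℝ) :
    HasDerivAt (fun y : ℝ => 2 + Real.sin y + y * Real.cos y)
      (2 * Real.cos x - x * Real.sin x) x := by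
  have h1 : HasDerivAt (fun y : ℝ => 2 + Real.sin y) (Real.cos x) x := by
    simpa using (Real.hasDerivAt_sin x).const_add (2 : ℝ)
  have h2 : HasDerivAt (fun y : ℝ => y * Real.cos y) (Real.cos x + x * -Real.sin x) x := by
    simpa using (hasDerivAt_id x).fun_mul (Real.hasDerivAt_cos x)
  have := h1.fun_add h2
  exact this.congr_deriv (by ring)

lemma hasDerivAt_L' (x : ℝ) :
    HasDerivAt (fun y : ℝ => 2 * Real.exp y) (2 * Real.exp x) x := by
  simpa using (Real.hasDerivAt_exp x).const_mul (2 : ℝ)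

lemma hasDerivAt_F (x : ℝ) : HasDerivAt F (G x) x := by
  rcases lt_trichotomy x 0 with hx | hx | hx
  · have hev : F =ᶠ[nhds x] fun y => 2 * (Real.exp y - 1) := by
      filter_upwards [Iio_mem_nhds hx] with y hy
      simp [F, not_le.mpr (Set.mem_Iio.mp hy)]
    have : G x = 2 * Real.exp x := by simp [G, not_le.mpr hx]
    rw [this]
    exact (hasDerivAt_L x).congr_of_eventuallyEq hev
  · subst hx
    have hG : G 0 = 2 := by norm_num [G]
    rw [hG]
    have hright : HasDerivWithinAt F 2 (Set.Ici (0:ℝ)) 0 := by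
      have := (hasDerivAt_R 0).hasDerivWithinAt (s := Set.Ici (0:ℝ))
      simp only [Real.sin_zero, Real.cos_zero, mul_one, mul_zero, add_zero] at this
      exact this.congr (fun y hy => by simp [F, Set.mem_Ici.mp hy]) (by simp [F])
    have hleft : HasDerivWithinAt F 2 (Set.Iic (0:ℝ)) 0 := by
      have := (hasDerivAt_L 0).hasDerivWithinAt (s := Set.Iic (0:ℝ))
      simp only [Real.exp_zero, mul_one] at this
      refine this.congr (fun y hy => ?_) (by simp [F])
      rcases eq_or_lt_of_le (Set.mem_Iic.mp hy) with h | h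
      · simp [F, h]
      · simp [F, not_le.mpr h]
    have := hleft.union hright
    rw [Set.Iic_union_Ici] at this
    exact this.hasDerivAt (by simp)
  · have hev : F =ᶠ[nhds x] fun y => 2 * y + y * Real.sin y := by
      filter_upwards [Ioi_mem_nhds hx] with y hy
      simp [F, le_of_lt (Set.mem_Ioi.mp hy)]
    have : G x = 2 + Real.sin x + x * Real.cos x := by simp [G, le_of_lt hx]
    rw [this]
    exact (hasDerivAt_R x).congr_of_eventuallyEq hev

lemma hasDerivAt_G (x : ℝ) : HasDerivAt G (H x) x := by
  rcases lt_trichotomy x 0 with hx | hx | hx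
  · have hev : G =ᶠ[nhds x] fun y => 2 * Real.exp y := by
      filter_upwards [Iio_mem_nhds hx] with y hy
      simp [G, not_le.mpr (Set.mem_Iio.mp hy)]
    have : H x = 2 * Real.exp x := by simp [H, not_le.mpr hx]
    rw [this]
    exact (hasDerivAt_L' x).congr_of_eventuallyEq hev
  · subst hx
    have hH : H 0 = 2 := by norm_num [H]
    rw [hH]
    have hright : HasDerivWithinAt G 2 (Set.Ici (0:ℝ)) 0 := by
      have := (hasDerivAt_R' 0).hasDerivWithinAt (s := Set.Ici (0:ℝ))
      simp only [Real.sin_zero, Real.cos_zero, mul_one, mul_zero, sub_zero] at this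
      exact this.congr (fun y hy => by simp [G, Set.mem_Ici.mp hy]) (by norm_num [G])
    have hleft : HasDerivWithinAt G 2 (Set.Iic (0:ℝ)) 0 := by
      have := (hasDerivAt_L' 0).hasDerivWithinAt (s := Set.Iic (0:ℝ))
      simp only [Real.exp_zero, mul_one] at this
      refine this.congr (fun y hy => ?_) (by norm_num [G])
      rcases eq_or_lt_of_le (Set.mem_Iic.mp hy) with h | h
      · norm_num [G, h]
      · simp [G, not_le.mpr h]
    have := hleft.union hright
    rw [Set.Iic_union_Ici] at this
    exact this.hasDerivAt (by simp)
  · have hev : G =ᶠ[nhds x] fun y => 2 + Real.sin y + y * Real.cos y := by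
      filter_upwards [Ioi_mem_nhds hx] with y hy
      simp [G, le_of_lt (Set.mem_Ioi.mp hy)]
    have : H x = 2 * Real.cos x - x * Real.sin x := by simp [H, le_of_lt hx]
    rw [this]
    exact (hasDerivAt_R' x).congr_of_eventuallyEq hev

lemma deriv_F : deriv F = G := funext fun x => (hasDerivAt_F x).deriv

lemma deriv_G : deriv G = H := funext fun x => (hasDerivAt_G x).deriv

lemma F_lower (x : ℝ) : -2 ≤ F x := by
  unfold F
  split_ifs with h
  · nlinarith [Real.neg_one_le_sin x]
  · nlinarith [Real.exp_pos x]

lemma F_ge_of_nonneg {x : ℝ} (h : 0 ≤ x) : x ≤ F x := by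
  simp only [F, if_pos h]
  nlinarith [Real.neg_one_le_sin x]

end Stmt1Aux

open Stmt1Aux

/-- The function `f(x) = 2x + x sin x` for `x ≥ 0`, `f(x) = 2(eˣ − 1)` for
`x < 0` is twice differentiable, bounded below, `(1, K₀, K₁)`-smooth for some `K₀, K₁ ≥ 0`,
but not `(ρ, L₀, L_ρ)`-smooth for any `ρ > 0` and `L₀, L_ρ ≥ 0`. -/
theorem statement1
    (f : ℝ → ℝ)
    (hfdef : ∀ x : ℝ, f x = if 0 ≤ x then 2 * x + x * Real.sin x else 2 * (Real.exp x - 1)) :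
    (Differentiable ℝ f ∧ Differentiable ℝ (deriv f)) ∧
    (∃ fstar : ℝ, IsGLB (Set.range f) fstar ∧
      (∃ K0 K1 : ℝ, 0 ≤ K0 ∧ 0 ≤ K1 ∧
        ∀ x : ℝ, |deriv (deriv f) x| ≤ K0 + K1 * (f x - fstar))) ∧
    (∀ ρ : ℝ, 0 < ρ → ∀ L0 Lρ : ℝ, 0 ≤ L0 → 0 ≤ Lρ →
      ∃ x : ℝ, L0 + Lρ * |deriv f x| ^ ρ < |deriv (deriv f) x|) := by
  have hfF : f = F := funext fun x => by rw [hfdef x]; rfl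
  subst hfF
  rw [deriv_F, deriv_G]
  refine ⟨⟨fun x => (hasDerivAt_F x).differentiableAt,
    fun x => (hasDerivAt_G x).differentiableAt⟩, ?_, ?_⟩
  · refine ⟨-2, ⟨?_, ?_⟩, 2, 1, by norm_num, by norm_num, ?_⟩
    · rintro y ⟨x, rfl⟩
      exact F_lower x
    · intro b hb
      refine le_of_forall_pos_le_add (fun ε hε => ?_)
      set x : ℝ := min (Real.log (ε / 2)) (-1) with hxdef
      have hx0 : x < 0 := lt_of_le_of_lt (min_le_right _ _) (by norm_num)
      have hxe : Real.exp x ≤ ε / 2 := by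
        calc Real.exp x ≤ Real.exp (Real.log (ε / 2)) :=
              Real.exp_le_exp.mpr (min_le_left _ _)
          _ = ε / 2 := Real.exp_log (by positivity)
      have hFx : F x = 2 * (Real.exp x - 1) := by simp [F, not_le.mpr hx0]
      have := hb ⟨x, rfl⟩
      rw [hFx] at this
      linarith
    · intro x
      unfold H
      split_ifs with h
      · have h1 : |2 * Real.cos x - x * Real.sin x| ≤ 2 + x := by
          calc |2 * Real.cos x - x * Real.sin x|
              ≤ |2 * Real.cos x| + |x * Real.sin x| := abs_sub _ _
            _ ≤ 2 + x := by
                rw [abs_mul, abs_mul, abs_of_nonneg h, abs_two]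
                have hs := Real.abs_sin_le_one x
                have hc := Real.abs_cos_le_one x
                nlinarith [abs_nonneg (Real.sin x), abs_nonneg (Real.cos x)]
        have := F_ge_of_nonneg h
        linarith
      · rw [abs_of_nonneg (by positivity : (0:ℝ) ≤ 2 * Real.exp x)]
        have hFx : F x = 2 * (Real.exp x - 1) := by simp [F, h]
        rw [hFx]
        linarith
  · intro ρ hρ L0 Lρ hL0 hLρ
    obtain ⟨n, hn⟩ := exists_nat_gt (L0 + Lρ)
    refine ⟨(π / 2 + π) + n * (2 * π), ?_⟩
    have hsin : Real.sin ((π / 2 + π) + n * (2 * π)) = -1 := by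
      rw [Real.sin_add_nat_mul_two_pi, Real.sin_add_pi, Real.sin_pi_div_two]
    have hcos : Real.cos ((π / 2 + π) + n * (2 * π)) = 0 := by
      rw [Real.cos_add_nat_mul_two_pi, Real.cos_add_pi, Real.cos_pi_div_two, neg_zero]
    have hpi : (3 : ℝ) < π := Real.pi_gt_three
    have hx0 : (0:ℝ) ≤ (π / 2 + π) + n * (2 * π) := by positivity
    have hxgt : L0 + Lρ < (π / 2 + π) + n * (2 * π) := by
      have h2 : (n:ℝ) ≤ (n:ℝ) * (2 * π) := by
        nlinarith [Nat.cast_nonneg (α := ℝ) n]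
      nlinarith
    have hG : G ((π / 2 + π) + n * (2 * π)) = 1 := by
      norm_num [G, hx0, hsin, hcos]
    have hH : H ((π / 2 + π) + n * (2 * π)) = (π / 2 + π) + n * (2 * π) := by
      norm_num [H, hx0, hsin, hcos]
    rw [hG, hH, abs_of_nonneg hx0, abs_one, Real.one_rpow]
    linarith

end
end

section
/- Let f : ℝ^d → ℝ be (ρ, K₀, K_ρ)-smooth with f* = inf f > −∞. Fix x, y ∈ ℝ^d and m > 0, and set a = K₀ + K_ρ(m + f(x) − f*)^ρ. If a‖y − x‖² + ‖y − x‖·‖∇f(x)‖ ≤ m, then ∫₀¹ [K₀ + K_ρ(f(x + v(y − x)) − f*)^ρ] dv ≤ a. -/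
open Real

noncomputable section

/-- Lemma on the integrated smoothness bound. If `f` is
`(ρ, K₀, K_ρ)`-smooth, `m > 0`, `a = K₀ + K_ρ(m + f(x) − f*)^ρ`, and
`a‖y − x‖² + ‖y − x‖·‖∇f(x)‖ ≤ m`, then
`∫₀¹ K₀ + K_ρ (f(x + v(y − x)) − f*)^ρ dv ≤ a`. -/
theorem statement2 (d : ℕ) (f : EuclideanSpace ℝ (Fin d) → ℝ)
    (hf : ContDiff ℝ 2 f)
    (ρ K0 Kρ : ℝ) (hρ : 0 < ρ) (hK0 : 0 ≤ K0) (hKρ : 0 ≤ Kρ)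
    (fstar : ℝ) (hglb : IsGLB (Set.range f) fstar)
    (hsmooth : ∀ w, ‖fderiv ℝ (gradient f) w‖ ≤ K0 + Kρ * (f w - fstar) ^ ρ)
    (x y : EuclideanSpace ℝ (Fin d)) (m : ℝ) (hm : 0 < m)
    (a : ℝ) (ha : a = K0 + Kρ * (m + f x - fstar) ^ ρ)
    (hcond : a * ‖y - x‖ ^ 2 + ‖y - x‖ * ‖gradient f x‖ ≤ m) :
    (∫ v in (0:ℝ)..1, (K0 + Kρ * (f (x + v • (y - x)) - fstar) ^ ρ)) ≤ a := by
  set u : EuclideanSpace ℝ (Fin d) := y - x with hu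
  set r : ℝ := ‖u‖ with hr
  set G : ℝ := ‖gradient f x‖ with hG
  have hr0 : 0 ≤ r := norm_nonneg _
  have hG0 : 0 ≤ G := norm_nonneg _
  -- basic facts
  have hfs : ∀ w, fstar ≤ f w := fun w => hglb.1 ⟨w, rfl⟩
  have hfx0 : 0 ≤ f x - fstar := sub_nonneg.2 (hfs x)
  have hbase : 0 ≤ m + f x - fstar := by linarith
  have ha0 : 0 ≤ a := by
    rw [ha]
    have := Real.rpow_nonneg hbase ρ
    positivity
  -- bound on the Hessian on the sublevel set
  have hbound : ∀ w, f w ≤ f x + m → ‖fderiv ℝ (gradient f) w‖ ≤ a := by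
    intro w hw
    refine (hsmooth w).trans ?_
    rw [ha]
    have h1 : (f w - fstar) ^ ρ ≤ (m + f x - fstar) ^ ρ :=
      Real.rpow_le_rpow (sub_nonneg.2 (hfs w)) (by linarith) hρ.le
    nlinarith
  -- differentiability
  have hfd : Differentiable ℝ f := hf.differentiable (by norm_num)
  have hgrad_diff : Differentiable ℝ (gradient f) := by
    have h1 : ContDiff ℝ 1 (fderiv ℝ f) := hf.fderiv_right (by norm_num)
    have h2 : Differentiable ℝ (fderiv ℝ f) := h1.differentiable one_ne_zero
    intro w
    exact ((InnerProductSpace.toDual ℝ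
      (EuclideanSpace ℝ (Fin d))).symm.toContinuousLinearEquiv.differentiableAt).comp w (h2 w)
  have hnormgrad : ∀ w : EuclideanSpace ℝ (Fin d), ‖gradient f w‖ = ‖fderiv ℝ f w‖ :=
    fun w => (InnerProductSpace.toDual ℝ (EuclideanSpace ℝ (Fin d))).symm.norm_map _
  -- the curve and its derivative
  set γ : ℝ → EuclideanSpace ℝ (Fin d) := fun t => x + t • u with hγ
  have hγd : ∀ t : ℝ, HasDerivAt γ u t := by
    intro t
    have h1 : HasDerivAt (fun t : ℝ => t • u) ((1:ℝ) • u) t :=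
      (hasDerivAt_id t).smul_const u
    simpa [hγ] using h1.const_add x
  have hγ0 : γ 0 = x := by simp [hγ]
  set g : ℝ → ℝ := fun t => f (γ t) with hgdef
  have hgc : Continuous g := hf.continuous.comp (by fun_prop)
  have hgd : ∀ t : ℝ, HasDerivAt g (fderiv ℝ f (γ t) u) t := fun t =>
    ((hfd (γ t)).hasFDerivAt).comp_hasDerivAt t (hγd t)
  -- gradient along the curve
  set h : ℝ → EuclideanSpace ℝ (Fin d) := fun t => gradient f (γ t) with hhdef
  have hhd : ∀ t : ℝ, HasDerivAt h (fderiv ℝ (gradient f) (γ t) u) t := fun t =>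
    ((hgrad_diff (γ t)).hasFDerivAt).comp_hasDerivAt t (hγd t)
  -- key quantitative step
  have key : ∀ c ∈ Set.Icc (0:ℝ) 1, (∀ t ∈ Set.Icc 0 c, g t ≤ f x + m) →
      g c ≤ f x + c * m := by
    intro c hc hall
    -- gradient bound along the curve
    have hgrbd : ∀ t ∈ Set.Icc (0:ℝ) c, ‖h t - h 0‖ ≤ (a * r) * (t - 0) := by
      refine norm_image_sub_le_of_norm_deriv_le_segment' (f' := fun t =>
        fderiv ℝ (gradient f) (γ t) u) (fun t ht => (hhd t).hasDerivWithinAt) ?_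
      intro t ht
      calc ‖fderiv ℝ (gradient f) (γ t) u‖ ≤ ‖fderiv ℝ (gradient f) (γ t)‖ * r :=
            (fderiv ℝ (gradient f) (γ t)).le_opNorm u
        _ ≤ a * r := by
            have := hbound (γ t) (by
              have := hall t ⟨ht.1, ht.2.le⟩
              simpa [hgdef] using this)
            nlinarith
    -- derivative bound for g
    have hgbd : ∀ t ∈ Set.Ico (0:ℝ) c, ‖fderiv ℝ f (γ t) u‖ ≤ G * r + a * r ^ 2 := by
      intro t ht
      have h1 : ‖fderiv ℝ f (γ t) u‖ ≤ ‖fderiv ℝ f (γ t)‖ * r :=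
        (fderiv ℝ f (γ t)).le_opNorm u
      have h2 : ‖gradient f (γ t)‖ ≤ G + a * r * t := by
        have h3 := hgrbd t ⟨ht.1, ht.2.le⟩
        have h4 : h 0 = gradient f x := by simp [hhdef, hγ0]
        rw [h4] at h3
        simp only [hhdef] at h3
        have h5 := norm_sub_norm_le (gradient f (γ t)) (gradient f x)
        have := h5.trans h3
        rw [hG]
        linarith
      rw [← hnormgrad] at h1
      have ht1 : t ≤ 1 := ht.2.le.trans hc.2
      nlinarith [mul_le_mul_of_nonneg_right h2 hr0,
        mul_nonneg (mul_nonneg ha0 hr0) hr0, ht.1]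
    have hmv := norm_image_sub_le_of_norm_deriv_le_segment'
      (f' := fun t => fderiv ℝ f (γ t) u) (fun t _ => (hgd t).hasDerivWithinAt)
      hgbd c ⟨hc.1, le_refl c⟩
    have hg0 : g 0 = f x := by simp [hgdef, hγ0]
    rw [hg0] at hmv
    have habs : g c - f x ≤ (G * r + a * r ^ 2) * c := by
      have := le_trans (le_abs_self _) (by simpa [Real.norm_eq_abs] using hmv)
      linarith
    have hCm : G * r + a * r ^ 2 ≤ m := by
      have h6 : r * G = G * r := mul_comm r G
      linarith
    have h7 : g c - f x ≤ m * c := habs.trans (mul_le_mul_of_nonneg_right hCm hc.1)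
    have h8 : m * c = c * m := mul_comm m c
    linarith
  -- the bootstrap set
  set S : Set ℝ := {v | v ∈ Set.Icc (0:ℝ) 1 ∧ ∀ t ∈ Set.Icc 0 v, g t ≤ f x + m} with hS
  have h0S : (0:ℝ) ∈ S := by
    constructor
    · exact ⟨le_refl 0, zero_le_one⟩
    · intro t ht
      have : t = 0 := le_antisymm ht.2 ht.1
      subst this
      simp [hgdef, hγ0]
      linarith
  have hSne : S.Nonempty := ⟨0, h0S⟩
  have hSbdd : BddAbove S := ⟨1, fun v hv => hv.1.2⟩
  set c := sSup S with hcdef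
  have hc0 : 0 ≤ c := le_csSup hSbdd h0S
  have hc1 : c ≤ 1 := csSup_le hSne fun v hv => hv.1.2
  have hcS : c ∈ S := by
    constructor
    · exact ⟨hc0, hc1⟩
    · intro t ht
      rcases lt_or_eq_of_le ht.2 with hlt | heq
      · obtain ⟨v, hvS, hv⟩ := exists_lt_of_lt_csSup hSne hlt
        exact hvS.2 t ⟨ht.1, hv.le⟩
      · rw [heq]
        rcases eq_or_lt_of_le hc0 with h0 | h0
        · rw [← h0]
          simp [hgdef, hγ0]; linarith
        · -- t = c > 0 : use continuity from the left
          have hmem : c ∈ closure (Set.Ico (0:ℝ) c) := by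
            rw [closure_Ico (ne_of_lt h0)]
            exact ⟨hc0, le_refl c⟩
          haveI hnb : (nhdsWithin c (Set.Ico (0:ℝ) c)).NeBot :=
            mem_closure_iff_nhdsWithin_neBot.1 hmem
          refine le_of_tendsto (f := g)
            ((hgc.continuousAt.tendsto).mono_left
              (nhdsWithin_le_nhds (s := Set.Ico (0:ℝ) c))) ?_
          filter_upwards [self_mem_nhdsWithin] with s hs
          obtain ⟨v, hvS, hv⟩ := exists_lt_of_lt_csSup hSne hs.2
          exact hvS.2 s ⟨hs.1, hv.le⟩
  have hcone : c = 1 := by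
    by_contra hne
    have hclt : c < 1 := lt_of_le_of_ne hc1 hne
    have hgcval : g c ≤ f x + c * m := key c ⟨hc0, hc1⟩ hcS.2
    have hstrict : g c < f x + m := by
      have := mul_lt_mul_of_pos_right hclt hm
      rw [one_mul] at this
      linarith
    have hev : ∀ᶠ t in nhds c, g t < f x + m :=
      (hgc.continuousAt (x := c)) (Iio_mem_nhds hstrict)
    obtain ⟨ε, hε, hball⟩ := Metric.eventually_nhds_iff.1 hev
    set c₂ := min (c + ε / 2) 1 with hc₂
    have hcc₂ : c < c₂ := lt_min (by linarith) hclt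
    have hc₂S : c₂ ∈ S := by
      constructor
      · exact ⟨le_trans hc0 hcc₂.le, min_le_right _ _⟩
      · intro t ht
        rcases le_or_gt t c with h | h
        · exact hcS.2 t ⟨ht.1, h⟩
        · apply le_of_lt
          apply hball
          rw [Real.dist_eq, abs_lt]
          have ht2 : t ≤ c + ε / 2 := le_trans ht.2 (min_le_left _ _)
          constructor
          · linarith
          · linarith
    have := le_csSup hSbdd hc₂S
    rw [← hcdef] at this
    linarith
  have hpt : ∀ v ∈ Set.Icc (0:ℝ) 1, K0 + Kρ * (f (x + v • (y - x)) - fstar) ^ ρ ≤ a := by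
    intro v hv
    have h1 : g v ≤ f x + m := by
      rw [← hcone] at hv
      exact hcS.2 v hv
    have h2 : f (x + v • (y - x)) - fstar ≤ m + f x - fstar := by
      have : g v = f (x + v • (y - x)) := rfl
      linarith [this ▸ h1]
    have h3 : (f (x + v • (y - x)) - fstar) ^ ρ ≤ (m + f x - fstar) ^ ρ :=
      Real.rpow_le_rpow (sub_nonneg.2 (hfs _)) h2 hρ.le
    rw [ha]
    have := mul_le_mul_of_nonneg_left h3 hKρ
    linarith
  -- conclude via monotonicity of the integral
  have hFc : Continuous fun v : ℝ => K0 + Kρ * (f (x + v • (y - x)) - fstar) ^ ρ := by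
    apply continuous_const.add
    apply continuous_const.mul
    exact ((hf.continuous.comp (by fun_prop)).sub continuous_const).rpow_const
      (fun v => Or.inr hρ.le)
  calc (∫ v in (0:ℝ)..1, (K0 + Kρ * (f (x + v • (y - x)) - fstar) ^ ρ))
      ≤ ∫ _ in (0:ℝ)..1, a := by
        apply intervalIntegral.integral_mono_on zero_le_one
          (hFc.intervalIntegrable 0 1) (intervalIntegrable_const)
        intro v hv
        exact hpt v hv
    _ = a := by simp
end
end

section
/- Let f : ℝ^d → ℝ be (ρ, K₀, K_ρ)-smooth with f* = inf f > −∞. Then for every x ∈ ℝ^d, writing Δ = f(x) − f*, the gradient satisfies ‖∇f(x)‖ ≤ 2√(K₀Δ + K_ρ·3^ρ·Δ^{ρ+1}). -/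
open Real Set Filter Topology

noncomputable section

lemma taylor_aux {φ ψ ψ' : ℝ → ℝ} {b M : ℝ}
    (hφ : ∀ t ∈ Icc (0:ℝ) b, HasDerivAt φ (ψ t) t)
    (hψ : ∀ t ∈ Icc (0:ℝ) b, HasDerivAt ψ (ψ' t) t)
    (hbd : ∀ t ∈ Icc (0:ℝ) b, |ψ' t| ≤ M) :
    ∀ t ∈ Icc (0:ℝ) b, φ t ≤ φ 0 + ψ 0 * t + M * t ^ 2 / 2 := by
  intro t ht
  have hb : (0:ℝ) ≤ b := le_trans ht.1 ht.2
  have h0m : (0:ℝ) ∈ Icc (0:ℝ) b := ⟨le_refl _, hb⟩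
  have step1 : ∀ s ∈ Icc (0:ℝ) b, ψ s ≤ ψ 0 + M * s := by
    intro s hs
    have h := Convex.norm_image_sub_le_of_norm_hasDerivWithin_le
      (fun r hr => (hψ r hr).hasDerivWithinAt)
      (fun r hr => hbd r hr) (convex_Icc 0 b) h0m hs
    rw [Real.norm_eq_abs, Real.norm_eq_abs, sub_zero, abs_of_nonneg hs.1] at h
    have := (abs_le.mp h).2
    linarith
  set χ : ℝ → ℝ := fun s => φ s - (ψ 0 * s + M * s ^ 2 / 2) with hχdef
  have hχd : ∀ s ∈ Icc (0:ℝ) b, HasDerivAt χ (ψ s - (ψ 0 + M * s)) s := by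
    intro s hs
    have h1 : HasDerivAt (fun r : ℝ => ψ 0 * r + M * r ^ 2 / 2) (ψ 0 + M * s) s := by
      have h2 : HasDerivAt (fun r : ℝ => ψ 0 * r) (ψ 0) s := by
        simpa using (hasDerivAt_id s).const_mul (ψ 0)
      have h3 : HasDerivAt (fun r : ℝ => M * r ^ 2 / 2) (M * s) s := by
        have := ((hasDerivAt_pow 2 s).const_mul M).div_const 2
        refine this.congr_deriv ?_
        ring
      exact h2.add h3
    exact (hφ s hs).sub h1
  have hanti : AntitoneOn χ (Icc 0 b) := by
    apply antitoneOn_of_deriv_nonpos (convex_Icc 0 b)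
    · exact fun s hs => ((hχd s hs).continuousAt).continuousWithinAt
    · intro s hs
      rw [interior_Icc] at hs
      exact ((hχd s ⟨hs.1.le, hs.2.le⟩).differentiableAt).differentiableWithinAt
    · intro s hs
      rw [interior_Icc] at hs
      have hs' : s ∈ Icc (0:ℝ) b := ⟨hs.1.le, hs.2.le⟩
      rw [(hχd s hs').deriv]
      have := step1 s hs'
      linarith
  have := hanti h0m ht ht.1
  simp only [hχdef] at this
  simp only [mul_zero, zero_pow, ne_eq, OfNat.ofNat_ne_zero, not_false_iff] at this
  nlinarith [this]


set_option maxHeartbeats 1000000 in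
lemma key {d : ℕ} {f : EuclideanSpace ℝ (Fin d) → ℝ} (hf : ContDiff ℝ 2 f)
    {fstar : ℝ} (hlb : ∀ w, fstar ≤ f w) {x : EuclideanSpace ℝ (Fin d)} {Δ M : ℝ}
    (hΔ : 0 < Δ) (hΔx : f x - fstar ≤ Δ) (hM : 0 < M)
    (hhess : ∀ w, f w - fstar ≤ 3 * Δ → ‖fderiv ℝ (gradient f) w‖ ≤ M) :
    ‖gradient f x‖ ≤ Real.sqrt (2 * M * Δ) := by
  by_cases hg0 : gradient f x = 0
  · rw [hg0, norm_zero]; exact Real.sqrt_nonneg _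
  set G := ‖gradient f x‖ with hGdef
  have hG : 0 < G := norm_pos_iff.mpr hg0
  set u : EuclideanSpace ℝ (Fin d) := -(G⁻¹ • gradient f x) with hudef
  have hu : ‖u‖ = 1 := by
    rw [hudef, norm_neg, norm_smul, norm_inv, Real.norm_eq_abs, abs_of_pos hG]
    field_simp
    exact hGdef.symm
  set γ : ℝ → EuclideanSpace ℝ (Fin d) := fun t => x + t • u with hγdef
  have hγ0 : γ 0 = x := by simp [hγdef]
  have hγd : ∀ t : ℝ, HasDerivAt γ u t := by
    intro t
    simpa [hγdef] using ((hasDerivAt_id t).smul_const u).const_add x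
  have hfd : Differentiable ℝ f := hf.differentiable (by norm_num)
  have hgc : ContDiff ℝ 1 (gradient f) := by
    have h1 : ContDiff ℝ 1 (fderiv ℝ f) := hf.fderiv_right (by norm_num)
    exact ((InnerProductSpace.toDual ℝ (EuclideanSpace ℝ (Fin d))).symm.contDiff).comp h1
  have hgdiff : Differentiable ℝ (gradient f) := hgc.differentiable one_ne_zero
  set ψ : ℝ → ℝ := fun t => @inner ℝ _ _ u (gradient f (γ t)) with hψdef
  set ψ' : ℝ → ℝ := fun t => @inner ℝ _ _ u ((fderiv ℝ (gradient f) (γ t)) u) with hψ'def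
  set φ : ℝ → ℝ := fun t => f (γ t) with hφdef
  have hφd : ∀ t : ℝ, HasDerivAt φ (ψ t) t := by
    intro t
    have h1 := ((hfd (γ t)).hasFDerivAt).comp_hasDerivAt t (hγd t)
    have he : ψ t = (fderiv ℝ f (γ t)) u := by
      simp only [hψdef]
      rw [real_inner_comm, gradient, InnerProductSpace.toDual_symm_apply]
    rw [he]
    exact h1
  have hψd : ∀ t : ℝ, HasDerivAt ψ (ψ' t) t := by
    intro t
    have h2 := ((hgdiff (γ t)).hasFDerivAt).comp_hasDerivAt t (hγd t)
    have h3 := ((innerSL ℝ u).hasFDerivAt).comp_hasDerivAt t h2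
    exact h3.congr_deriv rfl
  have hψ0 : ψ 0 = -G := by
    rw [hψdef]
    simp only [hγ0, hudef]
    rw [inner_neg_left, real_inner_smul_left, real_inner_self_eq_norm_sq, ← hGdef]
    field_simp
  have hψ'bd : ∀ t : ℝ, f (γ t) - fstar ≤ 3 * Δ → |ψ' t| ≤ M := by
    intro t ht
    calc |ψ' t| ≤ ‖u‖ * ‖(fderiv ℝ (gradient f) (γ t)) u‖ := abs_real_inner_le_norm _ _
      _ ≤ ‖u‖ * (‖fderiv ℝ (gradient f) (γ t)‖ * ‖u‖) := by
          gcongr; exact (fderiv ℝ (gradient f) (γ t)).le_opNorm u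
      _ = ‖fderiv ℝ (gradient f) (γ t)‖ := by rw [hu]; ring
      _ ≤ M := hhess _ ht
  clear_value G u γ ψ ψ' φ
  -- time horizon
  set T : ℝ := Real.sqrt (2 * Δ / M) with hTdef
  have hT : 0 < T := Real.sqrt_pos.mpr (by positivity)
  have hT2 : M * T ^ 2 / 2 = Δ := by
    rw [hTdef, Real.sq_sqrt (by positivity)]
    field_simp
  -- bootstrap set
  set A : Set ℝ := {t | t ∈ Icc (0:ℝ) T ∧ ∀ s ∈ Icc (0:ℝ) t, f (γ s) - fstar ≤ 3 * Δ} with hAdef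
  have hA0 : (0:ℝ) ∈ A := by
    constructor
    · exact ⟨le_refl _, hT.le⟩
    · intro s hs
      have : s = 0 := le_antisymm hs.2 hs.1
      rw [this, hγ0]; linarith
  have hAbdd : BddAbove A := ⟨T, fun t ht => ht.1.2⟩
  set t₀ : ℝ := sSup A with ht₀def
  have ht₀0 : 0 ≤ t₀ := le_csSup hAbdd hA0
  have ht₀T : t₀ ≤ T := csSup_le ⟨0, hA0⟩ (fun t ht => ht.1.2)
  have hcont : Continuous (fun r : ℝ => f (γ r) - fstar) := by
    have hγc : Continuous γ := by
      rw [hγdef]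
      exact continuous_const.add (continuous_id.smul continuous_const)
    exact (hf.continuous.comp hγc).sub continuous_const
  have hreg : ∀ s ∈ Icc (0:ℝ) t₀, f (γ s) - fstar ≤ 3 * Δ := by
    intro s hs
    rcases lt_or_eq_of_le hs.2 with h | h
    · obtain ⟨t, htA, hst⟩ := exists_lt_of_lt_csSup ⟨0, hA0⟩ h
      exact htA.2 s ⟨hs.1, hst.le⟩
    · -- s = t₀, use continuity from the left
      rw [h]
      rcases eq_or_lt_of_le ht₀0 with h0 | h0
      · rw [← h0, hγ0]; linarith
      · have hne : (nhdsWithin t₀ (Set.Iio t₀)).NeBot := nhdsLT_neBot t₀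
        have htt : Filter.Tendsto (fun r : ℝ => f (γ r) - fstar) (nhdsWithin t₀ (Set.Iio t₀))
            (nhds (f (γ t₀) - fstar)) := hcont.continuousAt.tendsto.mono_left nhdsWithin_le_nhds
        apply le_of_tendsto htt
        filter_upwards [Ioo_mem_nhdsLT_of_mem (⟨h0, le_refl t₀⟩ : t₀ ∈ Ioc 0 t₀)] with r hr
        rcases exists_lt_of_lt_csSup ⟨0, hA0⟩ hr.2 with ⟨t, htA, hrt⟩
        exact htA.2 r ⟨hr.1.le, hrt.le⟩
  -- quantitative bound on [0, t₀]
  have hquant : ∀ b : ℝ, 0 ≤ b → (∀ s ∈ Icc (0:ℝ) b, f (γ s) - fstar ≤ 3 * Δ) →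
      ∀ t ∈ Icc (0:ℝ) b, φ t ≤ φ 0 - G * t + M * t ^ 2 / 2 := by
    intro b hb hregb t ht
    have := taylor_aux (fun t _ => hφd t) (fun t _ => hψd t)
      (fun t htm => hψ'bd t (hregb t htm)) t ht
    rw [hψ0] at this
    linarith
  -- t₀ = T
  have ht₀eq : t₀ = T := by
    by_contra hne
    have ht₀lt : t₀ < T := lt_of_le_of_ne ht₀T hne
    have hval : f (γ t₀) - fstar ≤ 2 * Δ := by
      have h1 := hquant t₀ ht₀0 hreg t₀ ⟨ht₀0, le_refl _⟩
      have h2 : M * t₀ ^ 2 / 2 ≤ Δ := by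
        rw [← hT2]
        have : t₀ ^ 2 ≤ T ^ 2 := by nlinarith
        nlinarith
      have : φ t₀ - fstar ≤ Δ - G * t₀ + M * t₀ ^ 2 / 2 := by
        rw [hφdef] at h1 ⊢; simp only [hγ0] at h1; linarith [h1]
      simp only [hφdef] at this
      nlinarith
    -- continuity: find t₁ > t₀ still in A
    have hopen : ∀ᶠ r in 𝓝 t₀, f (γ r) - fstar < 3 * Δ := by
      have : f (γ t₀) - fstar < 3 * Δ := by linarith
      exact hcont.continuousAt.eventually_lt_const this
    rcases Metric.eventually_nhds_iff.mp hopen with ⟨ε, hε, hball⟩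
    set t₁ : ℝ := min T (t₀ + ε / 2) with ht₁def
    have ht₁gt : t₀ < t₁ := lt_min ht₀lt (by linarith)
    have ht₁A : t₁ ∈ A := by
      constructor
      · exact ⟨le_trans ht₀0 ht₁gt.le, min_le_left _ _⟩
      · intro s hs
        rcases le_or_gt s t₀ with hc | hc
        · exact hreg s ⟨hs.1, hc⟩
        · apply le_of_lt
          apply hball
          rw [Real.dist_eq, abs_of_pos (by linarith)]
          have : s ≤ t₀ + ε / 2 := le_trans hs.2 (min_le_right _ _)
          linarith
    have := le_csSup hAbdd ht₁A
    rw [← ht₀def] at this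
    linarith
  -- final step
  have hfinal : ∀ t ∈ Icc (0:ℝ) T, G * t - M * t ^ 2 / 2 ≤ Δ := by
    intro t ht
    have h1 := hquant T hT.le (ht₀eq ▸ hreg) t ht
    have h2 : fstar ≤ φ t := by rw [hφdef]; exact hlb _
    have h3 : φ 0 - fstar ≤ Δ := by rw [hφdef]; simp only [hγ0]; linarith
    linarith
  have hGoal : G ≤ Real.sqrt (2 * M * Δ) := by
    rcases le_or_gt (G / M) T with hc | hc
    · have ht : G / M ∈ Icc (0:ℝ) T := ⟨by positivity, hc⟩
      have h1 := hfinal _ ht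
      have e1 : G * (G / M) - M * (G / M) ^ 2 / 2 = G ^ 2 / (2 * M) := by
        field_simp
        ring
      rw [e1] at h1
      have hG2 : G ^ 2 ≤ 2 * M * Δ := by
        have := (div_le_iff₀ (by positivity : (0:ℝ) < 2 * M)).mp h1
        nlinarith
      exact le_sqrt_of_sq_le hG2
    · have ht : T ∈ Icc (0:ℝ) T := ⟨hT.le, le_refl _⟩
      have h1 := hfinal _ ht
      have h2 : G * T ≤ 2 * Δ := by linarith [hT2]
      have h3 : Real.sqrt (2 * M * Δ) * T = 2 * Δ := by
        rw [hTdef, ← Real.sqrt_mul (by positivity)]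
        rw [show 2 * M * Δ * (2 * Δ / M) = (2 * Δ) ^ 2 by field_simp]
        exact Real.sqrt_sq (by positivity)
      exact (mul_le_mul_iff_of_pos_right hT).mp (h3 ▸ h2)
  exact hGoal


/-- Bounded gradient. If `f` is `(ρ, K₀, K_ρ)`-smooth with
`f* = inf f > −∞`, then for every `x`, with `Δ = f(x) − f*`,
`‖∇f(x)‖ ≤ 2√(K₀Δ + K_ρ 3^ρ Δ^{ρ+1})`. -/
theorem statement3 (d : ℕ) (f : EuclideanSpace ℝ (Fin d) → ℝ)
    (hf : ContDiff ℝ 2 f)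
    (ρ K0 Kρ : ℝ) (hρ : 0 < ρ) (hK0 : 0 ≤ K0) (hKρ : 0 ≤ Kρ)
    (fstar : ℝ) (hglb : IsGLB (Set.range f) fstar)
    (hsmooth : ∀ w, ‖fderiv ℝ (gradient f) w‖ ≤ K0 + Kρ * (f w - fstar) ^ ρ)
    (x : EuclideanSpace ℝ (Fin d)) :
    ‖gradient f x‖ ≤
      2 * Real.sqrt (K0 * (f x - fstar) + Kρ * 3 ^ ρ * (f x - fstar) ^ (ρ + 1)) := by
  have hlb : ∀ w, fstar ≤ f w := fun w => hglb.1 ⟨w, rfl⟩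
  have hΔ0 : 0 ≤ f x - fstar := by linarith [hlb x]
  rcases eq_or_lt_of_le hΔ0 with hΔ | hΔ
  · -- Δ = 0 : x is a global minimizer, gradient is 0
    have hmin : IsLocalMin f x := by
      apply Filter.Eventually.of_forall
      intro w
      have : f x = fstar := by linarith
      rw [this]; exact hlb w
    have hfderiv : fderiv ℝ f x = 0 := hmin.fderiv_eq_zero
    have hgrad : gradient f x = 0 := by
      rw [gradient, hfderiv, map_zero]
    rw [hgrad, norm_zero, ← hΔ]
    have : (0:ℝ) ^ (ρ + 1) = 0 := Real.zero_rpow (by linarith)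
    rw [this]
    simp
  · -- Δ > 0
    set Δ : ℝ := f x - fstar with hΔdef
    set L : ℝ := K0 + Kρ * 3 ^ ρ * Δ ^ ρ with hLdef
    have hΔρ : (0:ℝ) ≤ Δ ^ ρ := Real.rpow_nonneg hΔ.le ρ
    have h3ρ : (0:ℝ) ≤ (3:ℝ) ^ ρ := Real.rpow_nonneg (by norm_num) ρ
    have hL0 : 0 ≤ L := by positivity
    have hrhs : K0 * Δ + Kρ * 3 ^ ρ * Δ ^ (ρ + 1) = L * Δ := by
      rw [Real.rpow_add_one hΔ.ne' ρ, hLdef]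
      ring
    rw [hrhs]
    -- for every ε > 0 we have the bound with L + ε
    have hε : ∀ ε : ℝ, 0 < ε → ‖gradient f x‖ ≤ 2 * Real.sqrt (L * Δ + ε * Δ) := by
      intro ε hεpos
      have hM : 0 < L + ε := by linarith
      have hhess : ∀ w, f w - fstar ≤ 3 * Δ → ‖fderiv ℝ (gradient f) w‖ ≤ L + ε := by
        intro w hw
        have h0w : 0 ≤ f w - fstar := by linarith [hlb w]
        have h1 : (f w - fstar) ^ ρ ≤ (3 * Δ) ^ ρ := Real.rpow_le_rpow h0w hw hρ.le
        have h2 : ((3:ℝ) * Δ) ^ ρ = 3 ^ ρ * Δ ^ ρ := Real.mul_rpow (by norm_num) hΔ.le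
        have h3 := hsmooth w
        have h4 : Kρ * (f w - fstar) ^ ρ ≤ Kρ * (3 ^ ρ * Δ ^ ρ) := by
          rw [← h2]; exact mul_le_mul_of_nonneg_left h1 hKρ
        rw [hLdef]
        calc ‖fderiv ℝ (gradient f) w‖ ≤ K0 + Kρ * (f w - fstar) ^ ρ := h3
          _ ≤ K0 + Kρ * (3 ^ ρ * Δ ^ ρ) := by linarith
          _ = K0 + Kρ * 3 ^ ρ * Δ ^ ρ := by ring
          _ ≤ K0 + Kρ * 3 ^ ρ * Δ ^ ρ + ε := by linarith
      have hk := key hf hlb hΔ (le_refl _) hM hhess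
      apply le_trans hk
      have h5 : 2 * (L + ε) * Δ ≤ (2 * Real.sqrt (L * Δ + ε * Δ)) ^ 2 := by
        rw [mul_pow, Real.sq_sqrt (by positivity)]
        nlinarith
      calc Real.sqrt (2 * (L + ε) * Δ) ≤ Real.sqrt ((2 * Real.sqrt (L * Δ + ε * Δ)) ^ 2) :=
            Real.sqrt_le_sqrt h5
        _ = 2 * Real.sqrt (L * Δ + ε * Δ) := Real.sqrt_sq (by positivity)
    -- take the limit ε → 0⁺
    have hc : Continuous (fun ε : ℝ => 2 * Real.sqrt (L * Δ + ε * Δ)) := by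
      apply continuous_const.mul
      exact (continuous_const.add (continuous_id.mul continuous_const)).sqrt
    have htend : Filter.Tendsto (fun ε : ℝ => 2 * Real.sqrt (L * Δ + ε * Δ))
        (nhdsWithin 0 (Set.Ioi 0)) (nhds (2 * Real.sqrt (L * Δ))) := by
      have := (hc.tendsto 0).mono_left (nhdsWithin_le_nhds (s := Set.Ioi (0:ℝ)))
      simpa using this
    exact ge_of_tendsto htend (eventually_nhdsWithin_of_forall (fun ε hεm => hε ε hεm))
end
end

section
/- Let f : ℝ^d → ℝ be (ρ, K₀, K_ρ)-smooth with f* = inf f > −∞. Fix x ∈ ℝ^d, let Δ = f(x) − f*, fix m > 0, set a = K₀ + K_ρ(m + Δ)^ρ and r = 2m / (‖∇f(x)‖ + √(‖∇f(x)‖² + 4am)). Then for every y ∈ ℝ^d with ‖y − x‖ ≤ r, one has f(y) ≤ f(x) + ⟨∇f(x), y − x⟩ + (a/2)‖y − x‖², and consequently f(y) ≤ f(x) + m. -/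
open Real
open scoped RealInnerProductSpace

set_option maxHeartbeats 1000000

noncomputable section

lemma quad_aux (h h1 h2 : ℝ → ℝ) (T M : ℝ) (hT : 0 ≤ T)
    (hd1 : ∀ t, HasDerivAt h (h1 t) t)
    (hd2 : ∀ t, HasDerivAt h1 (h2 t) t)
    (hb : ∀ t ∈ Set.Icc (0:ℝ) T, h2 t ≤ M) :
    h T ≤ h 0 + h1 0 * T + M * T ^ 2 / 2 := by
  set q : ℝ → ℝ := fun t => h 0 + h1 0 * t + M * t ^ 2 / 2 - h t with hqdef
  set q1 : ℝ → ℝ := fun t => h1 0 + M * t - h1 t with hq1def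
  have hq : ∀ t, HasDerivAt q (q1 t) t := by
    intro t
    have A : HasDerivAt (fun t : ℝ => h 0 + h1 0 * t + M * t ^ 2 / 2 - h t)
        (0 + h1 0 * 1 + M * (↑2 * t ^ 1) / 2 - h1 t) t :=
      (((hasDerivAt_const t (h 0)).add ((hasDerivAt_id t).const_mul (h1 0))).add
        (((hasDerivAt_pow 2 t).const_mul M).div_const 2)).sub (hd1 t)
    convert A using 1
    simp [hq1def]; ring
  have hq1 : ∀ t, HasDerivAt q1 (M - h2 t) t := by
    intro t
    have A : HasDerivAt (fun t : ℝ => h1 0 + M * t - h1 t) (0 + M * 1 - h2 t) t :=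
      ((hasDerivAt_const t (h1 0)).add ((hasDerivAt_id t).const_mul M)).sub (hd2 t)
    convert A using 1
    ring
  have hq1c : Continuous q1 := by
    have : Differentiable ℝ q1 := fun t => (hq1 t).differentiableAt
    exact this.continuous
  have hmono1 : MonotoneOn q1 (Set.Icc 0 T) := by
    apply monotoneOn_of_deriv_nonneg (convex_Icc 0 T) hq1c.continuousOn
      (fun t _ => (hq1 t).differentiableAt.differentiableWithinAt)
    intro t ht
    rw [interior_Icc] at ht
    rw [(hq1 t).deriv]
    have := hb t ⟨ht.1.le, ht.2.le⟩
    linarith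
  have hq10 : q1 0 = 0 := by simp [hq1def]
  have hq1nonneg : ∀ t ∈ Set.Icc (0:ℝ) T, 0 ≤ q1 t := by
    intro t ht
    have := hmono1 ⟨le_rfl, hT⟩ ht ht.1
    linarith [hq10 ▸ this]
  have hqc : Continuous q := by
    have : Differentiable ℝ q := fun t => (hq t).differentiableAt
    exact this.continuous
  have hmono2 : MonotoneOn q (Set.Icc 0 T) := by
    apply monotoneOn_of_deriv_nonneg (convex_Icc 0 T) hqc.continuousOn
      (fun t _ => (hq t).differentiableAt.differentiableWithinAt)
    intro t ht
    rw [interior_Icc] at ht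
    rw [(hq t).deriv]
    exact hq1nonneg t ⟨ht.1.le, ht.2.le⟩
  have h0 : q 0 = 0 := by simp [hqdef]
  have := hmono2 ⟨le_rfl, hT⟩ ⟨hT, le_rfl⟩ hT
  rw [h0] at this
  simp only [hqdef] at this
  linarith

/-- If `f` is `(ρ, K₀, K_ρ)`-smooth with `f* = inf f > −∞`, `Δ = f(x) − f*`,
`m > 0`, `a = K₀ + K_ρ(m + Δ)^ρ` and `r = 2m/(‖∇f(x)‖ + √(‖∇f(x)‖² + 4am))`, then for every
`y` with `‖y − x‖ ≤ r` one has `f(y) ≤ f(x) + ⟨∇f(x), y − x⟩ + (a/2)‖y − x‖²` and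
consequently `f(y) ≤ f(x) + m`. -/
theorem statement5 (d : ℕ) (f : EuclideanSpace ℝ (Fin d) → ℝ)
    (hf : ContDiff ℝ 2 f)
    (ρ K0 Kρ : ℝ) (hρ : 0 < ρ) (hK0 : 0 ≤ K0) (hKρ : 0 ≤ Kρ)
    (fstar : ℝ) (hglb : IsGLB (Set.range f) fstar)
    (hsmooth : ∀ w, ‖fderiv ℝ (gradient f) w‖ ≤ K0 + Kρ * (f w - fstar) ^ ρ)
    (x : EuclideanSpace ℝ (Fin d))
    (Δ m a r : ℝ)
    (hΔ : Δ = f x - fstar) (hm : 0 < m)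
    (ha : a = K0 + Kρ * (m + Δ) ^ ρ)
    (hr : r = 2 * m / (‖gradient f x‖ + Real.sqrt (‖gradient f x‖ ^ 2 + 4 * a * m))) :
    ∀ y : EuclideanSpace ℝ (Fin d), ‖y - x‖ ≤ r →
      f y ≤ f x + ⟪gradient f x, y - x⟫ + a / 2 * ‖y - x‖ ^ 2 ∧
      f y ≤ f x + m := by
  intro y hy
  -- basic notation
  set B := ‖gradient f x‖ with hB
  set D := Real.sqrt (B ^ 2 + 4 * a * m) with hD
  have hfstar : ∀ w, fstar ≤ f w := fun w => hglb.1 ⟨w, rfl⟩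
  have hΔ0 : 0 ≤ Δ := by rw [hΔ]; linarith [hfstar x]
  have hmΔ : 0 ≤ m + Δ := by linarith
  have ha0 : 0 ≤ a := by
    rw [ha]
    have := mul_nonneg hKρ (Real.rpow_nonneg hmΔ ρ)
    linarith
  have hB0 : (0:ℝ) ≤ B := norm_nonneg _
  have hD0 : (0:ℝ) ≤ D := Real.sqrt_nonneg _
  have hD2 : D ^ 2 = B ^ 2 + 4 * a * m := Real.sq_sqrt (by positivity)
  have hr0 : 0 ≤ r := by
    rcases eq_or_lt_of_le (by positivity : (0:ℝ) ≤ B + D) with h | h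
    · rw [hr, ← h, div_zero]
    · rw [hr]; positivity
  have hkey : a * r ^ 2 + B * r ≤ m := by
    rcases eq_or_lt_of_le (by positivity : (0:ℝ) ≤ B + D) with h | h
    · have hr' : r = 0 := by rw [hr, ← h, div_zero]
      rw [hr']; ring_nf; linarith
    · have hrBD : r * (B + D) = 2 * m := by
        rw [hr]
        field_simp
      have e1 : (a * r ^ 2 + B * r - m) * (B + D) ^ 2 = 0 := by
        linear_combination (a * (r * (B + D) + 2 * m) + B * (B + D)) * hrBD - m * hD2
      have hne : (B + D) ^ 2 ≠ 0 := pow_ne_zero _ (ne_of_gt h)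
      have := (mul_eq_zero.mp e1).resolve_right hne
      linarith
  -- Hessian bound wherever f ≤ f x + m
  have hHess : ∀ w, f w ≤ f x + m → ‖fderiv ℝ (gradient f) w‖ ≤ a := by
    intro w hw
    refine (hsmooth w).trans ?_
    rw [ha]
    have h1 : f w - fstar ≤ m + Δ := by rw [hΔ]; linarith
    have h2 : (0:ℝ) ≤ f w - fstar := sub_nonneg.mpr (hfstar w)
    have h3 := Real.rpow_le_rpow h2 h1 hρ.le
    nlinarith
  -- segment setup
  set v := y - x with hv
  have hvr : ‖v‖ ≤ r := hy
  set γ : ℝ → EuclideanSpace ℝ (Fin d) := fun t => x + t • v with hγdef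
  have hγ0 : γ 0 = x := by simp [hγdef]
  have hγ1 : γ 1 = y := by simp [hγdef, hv]
  have hγc : Continuous γ := by
    apply continuous_const.add
    exact continuous_id.smul continuous_const
  have hγd : ∀ t, HasDerivAt γ v t := by
    intro t
    simpa [hγdef] using ((hasDerivAt_id t).smul_const v).const_add x
  have hfd : Differentiable ℝ f := hf.differentiable two_ne_zero
  have hφc : Continuous (fun t => f (γ t)) := hfd.continuous.comp hγc
  have hgradC : ContDiff ℝ 1 (gradient f) := by
    have h1 : ContDiff ℝ 1 (fderiv ℝ f) := hf.fderiv_right (m := 1) (by norm_num)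
    exact (((InnerProductSpace.toDual ℝ
      (EuclideanSpace ℝ (Fin d))).symm.toContinuousLinearEquiv.toContinuousLinearMap).contDiff).comp h1
  have hgrad_inner : ∀ w (u : EuclideanSpace ℝ (Fin d)),
      ⟪gradient f w, u⟫ = fderiv ℝ f w u := fun w u =>
    InnerProductSpace.toDual_symm_apply
  have hd1 : ∀ t, HasDerivAt (fun t => f (γ t)) (⟪gradient f (γ t), v⟫) t := by
    intro t
    rw [hgrad_inner]
    exact ((hfd (γ t)).hasFDerivAt).comp_hasDerivAt t (hγd t)
  have hd2 : ∀ t, HasDerivAt (fun t => ⟪gradient f (γ t), v⟫)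
      (⟪(fderiv ℝ (gradient f) (γ t)) v, v⟫) t := by
    intro t
    have hG : HasDerivAt (fun s => gradient f (γ s)) ((fderiv ℝ (gradient f) (γ t)) v) t :=
      ((hgradC.differentiable one_ne_zero (γ t)).hasFDerivAt).comp_hasDerivAt t (hγd t)
    simpa using hG.inner ℝ (hasDerivAt_const t v)
  -- quadratic bound on any good subinterval
  have quad : ∀ T, 0 ≤ T → (∀ s ∈ Set.Icc (0:ℝ) T, f (γ s) ≤ f x + m) →
      f (γ T) ≤ f x + ⟪gradient f x, v⟫ * T + a * ‖v‖ ^ 2 * T ^ 2 / 2 := by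
    intro T hT hbseg
    have hb : ∀ s ∈ Set.Icc (0:ℝ) T,
        ⟪(fderiv ℝ (gradient f) (γ s)) v, v⟫ ≤ a * ‖v‖ ^ 2 := by
      intro s hs
      have hH : ‖fderiv ℝ (gradient f) (γ s)‖ ≤ a := hHess (γ s) (hbseg s hs)
      calc ⟪(fderiv ℝ (gradient f) (γ s)) v, v⟫
          ≤ ‖(fderiv ℝ (gradient f) (γ s)) v‖ * ‖v‖ := real_inner_le_norm _ _
        _ ≤ (‖fderiv ℝ (gradient f) (γ s)‖ * ‖v‖) * ‖v‖ :=
            mul_le_mul_of_nonneg_right ((fderiv ℝ (gradient f) (γ s)).le_opNorm v)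
              (norm_nonneg v)
        _ ≤ a * ‖v‖ ^ 2 := by
            have := mul_le_mul_of_nonneg_right
              (mul_le_mul_of_nonneg_right hH (norm_nonneg v)) (norm_nonneg v)
            nlinarith [norm_nonneg v]
    have := quad_aux (fun t => f (γ t)) (fun t => ⟪gradient f (γ t), v⟫)
      (fun t => ⟪(fderiv ℝ (gradient f) (γ t)) v, v⟫) T (a * ‖v‖ ^ 2) hT hd1 hd2 hb
    simpa [hγ0] using this
  have gvb : ⟪gradient f x, v⟫ ≤ B * r :=
    (real_inner_le_norm _ _).trans (mul_le_mul_of_nonneg_left hvr hB0)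
  have hv2 : ‖v‖ ^ 2 ≤ r ^ 2 := by nlinarith [norm_nonneg v]
  -- the whole segment stays below f x + m
  have hseg : ∀ t ∈ Set.Icc (0:ℝ) 1, f (γ t) ≤ f x + m := by
    set T : Set ℝ := {t | t ∈ Set.Icc (0:ℝ) 1 ∧ ∀ s ∈ Set.Icc (0:ℝ) t, f (γ s) ≤ f x + m}
      with hTdef
    have h0T : (0:ℝ) ∈ T := by
      refine ⟨⟨le_rfl, zero_le_one⟩, ?_⟩
      intro s hs
      have : s = 0 := le_antisymm hs.2 hs.1
      rw [this, hγ0]; linarith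
    have hTbdd : BddAbove T := ⟨1, fun t ht => ht.1.2⟩
    set c := sSup T with hc
    have hc0 : 0 ≤ c := le_csSup hTbdd h0T
    have hc1 : c ≤ 1 := csSup_le ⟨0, h0T⟩ (fun t ht => ht.1.2)
    have hcT : ∀ s ∈ Set.Icc (0:ℝ) c, f (γ s) ≤ f x + m := by
      have hlt : ∀ s, 0 ≤ s → s < c → f (γ s) ≤ f x + m := by
        intro s hs0 hsc
        obtain ⟨t, htT, hst⟩ := exists_lt_of_lt_csSup ⟨0, h0T⟩ hsc
        exact htT.2 s ⟨hs0, hst.le⟩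
      intro s hs
      rcases lt_or_eq_of_le hs.2 with h | h
      · exact hlt s hs.1 h
      · subst h
        rcases eq_or_lt_of_le hc0 with h0 | h0
        · rw [← h0, hγ0]; linarith
        · refine le_of_tendsto (hφc.continuousAt.tendsto.mono_left
            (nhdsWithin_le_nhds (s := Set.Iio c))) ?_
          filter_upwards [Ioo_mem_nhdsLT h0] with t ht
          exact hlt t ht.1.le ht.2
    have hc_eq : c = 1 := by
      by_contra hne
      have hclt : c < 1 := lt_of_le_of_ne hc1 hne
      have hquadc := quad c hc0 hcT
      have hstep : f (γ c) < f x + m := by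
        have i1 : ⟪gradient f x, v⟫ * c ≤ B * r * c :=
          mul_le_mul_of_nonneg_right gvb hc0
        have hav : a * ‖v‖ ^ 2 ≤ a * r ^ 2 := mul_le_mul_of_nonneg_left hv2 ha0
        have hc2 : c ^ 2 ≤ c := by nlinarith
        have i2 : a * ‖v‖ ^ 2 * c ^ 2 / 2 ≤ a * r ^ 2 * c / 2 := by
          nlinarith [mul_le_mul_of_nonneg_right hav (sq_nonneg c),
            mul_le_mul_of_nonneg_left hc2 (mul_nonneg ha0 (sq_nonneg r))]
        have i3 : B * r * c + a * r ^ 2 * c / 2 < m := by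
          nlinarith [mul_le_mul_of_nonneg_left hkey hc0,
            mul_nonneg hc0 (mul_nonneg ha0 (sq_nonneg r)),
            mul_pos hm (sub_pos.mpr hclt)]
        linarith [hquadc, i1, i2, i3]
      have hnb : (fun t => f (γ t)) ⁻¹' Set.Iio (f x + m) ∈ nhds c :=
        hφc.continuousAt.preimage_mem_nhds (Iio_mem_nhds hstep)
      obtain ⟨ε, hεpos, hsub⟩ := Metric.mem_nhds_iff.mp hnb
      set t₀ := min 1 (c + ε / 2) with ht₀
      have ht₀c : c < t₀ := lt_min hclt (by linarith)
      have ht₀T : t₀ ∈ T := by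
        refine ⟨⟨le_trans hc0 ht₀c.le, min_le_left _ _⟩, ?_⟩
        intro s hs
        rcases le_or_gt s c with h | h
        · exact hcT s ⟨hs.1, h⟩
        · have hst : s ≤ c + ε / 2 := le_trans hs.2 (min_le_right _ _)
          have : s ∈ Metric.ball c ε := by
            rw [Metric.mem_ball, Real.dist_eq, abs_lt]
            constructor <;> linarith
          exact le_of_lt (hsub this)
      have := le_csSup hTbdd ht₀T
      linarith
    intro t ht
    exact hcT t ⟨ht.1, by rw [hc_eq]; exact ht.2⟩
  -- conclusion
  have hfinal := quad 1 zero_le_one (fun s hs => hseg s hs)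
  rw [hγ1] at hfinal
  constructor
  · nlinarith [hfinal]
  · have hav : a * ‖v‖ ^ 2 ≤ a * r ^ 2 := mul_le_mul_of_nonneg_left hv2 ha0
    nlinarith [hfinal, gvb, hav, mul_nonneg hB0 hr0, mul_nonneg ha0 (sq_nonneg r)]

end
end

section
/- Let f : ℝ^d → ℝ be (ρ, K₀, K_ρ)-smooth with K₀, K_ρ > 0 and f* = inf f > −∞. Fix x ∈ ℝ^d, let Δ = f(x) − f*, L(Δ) = 2K₀ + K_ρ(2Δ)^ρ and r(Δ) = min{C₁Δ^{−(ρ−1)/2}, C₂}. Then for any x₁, x₂ ∈ ℝ^d satisfying ‖x₁ − x‖ ≤ r(Δ) and ‖x₂ − x‖ ≤ r(Δ), one has ‖∇f(x₁) − ∇f(x₂)‖ ≤ L(Δ)‖x₁ − x₂‖ and f(x₂) ≤ f(x₁) + ⟨∇f(x₁), x₂ − x₁⟩ + (L(Δ)/2)‖x₂ − x₁‖². -/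
open Real
open scoped RealInnerProductSpace

noncomputable section

open Set

set_option linter.unusedSectionVars false
set_option linter.unusedVariables false
set_option maxHeartbeats 1000000

namespace S6Aux

variable {E : Type*} [NormedAddCommGroup E] [InnerProductSpace ℝ E] [CompleteSpace E]

lemma grad_inner (f : E → ℝ) (y v : E) : ⟪gradient f y, v⟫ = fderiv ℝ f y v := by
  simp [gradient, InnerProductSpace.toDual_symm_apply]

lemma contDiff_gradient {f : E → ℝ} (hf : ContDiff ℝ 2 f) : ContDiff ℝ 1 (gradient f) := by
  have h1 : ContDiff ℝ 1 (fun y => fderiv ℝ f y) := hf.fderiv_right (by norm_num)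
  have h2 : ContDiff ℝ 1 (fun ℓ : E →L[ℝ] ℝ => ((InnerProductSpace.toDual ℝ E).symm ℓ : E)) :=
    (InnerProductSpace.toDual ℝ E).symm.contDiff
  exact h2.comp h1

lemma diff_gradient {f : E → ℝ} (hf : ContDiff ℝ 2 f) : Differentiable ℝ (gradient f) :=
  (contDiff_gradient hf).differentiable (by norm_num)

lemma hasDerivAt_line (x v : E) (s : ℝ) : HasDerivAt (fun s : ℝ => x + s • v) v s := by
  simpa using ((hasDerivAt_id s).smul_const v).const_add x

lemma hasDerivAt_comp_line {f : E → ℝ} (hf : ContDiff ℝ 2 f) (x v : E) (s : ℝ) :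
    HasDerivAt (fun s : ℝ => f (x + s • v)) ⟪gradient f (x + s • v), v⟫ s := by
  have hd : HasFDerivAt f (fderiv ℝ f (x + s • v)) (x + s • v) :=
    (hf.differentiable (by norm_num)).differentiableAt.hasFDerivAt
  rw [grad_inner]
  exact hd.comp_hasDerivAt s (hasDerivAt_line x v s)

lemma hasDerivAt_grad_line {f : E → ℝ} (hf : ContDiff ℝ 2 f) (x v : E) (s : ℝ) :
    HasDerivAt (fun s : ℝ => gradient f (x + s • v))
      ((fderiv ℝ (gradient f) (x + s • v)) v) s :=
  ((diff_gradient hf).differentiableAt.hasFDerivAt).comp_hasDerivAt s (hasDerivAt_line x v s)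

/-- Gradient Lipschitz along a segment where the Hessian is bounded. -/
lemma grad_lip_seg {f : E → ℝ} (hf : ContDiff ℝ 2 f) {L : ℝ} (x v : E) {t : ℝ}
    (hH : ∀ σ ∈ Icc (0:ℝ) t, ‖fderiv ℝ (gradient f) (x + σ • v)‖ ≤ L)
    {a b : ℝ} (ha : a ∈ Icc (0:ℝ) t) (hb : b ∈ Icc (0:ℝ) t) :
    ‖gradient f (x + b • v) - gradient f (x + a • v)‖ ≤ L * ‖v‖ * ‖b - a‖ := by
  refine Convex.norm_image_sub_le_of_norm_hasDerivWithin_le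
    (f := fun s : ℝ => gradient f (x + s • v))
    (f' := fun s : ℝ => (fderiv ℝ (gradient f) (x + s • v)) v) ?_ ?_ (convex_Icc 0 t) ha hb
  · exact fun s _ => (hasDerivAt_grad_line hf x v s).hasDerivWithinAt
  · intro s hs
    calc ‖(fderiv ℝ (gradient f) (x + s • v)) v‖
        ≤ ‖fderiv ℝ (gradient f) (x + s • v)‖ * ‖v‖ := ContinuousLinearMap.le_opNorm _ _
      _ ≤ L * ‖v‖ := by
          have := hH s hs
          have hv : (0:ℝ) ≤ ‖v‖ := norm_nonneg _
          nlinarith [norm_nonneg (fderiv ℝ (gradient f) (x + s • v))]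

/-- Descent lemma along a segment where the Hessian is bounded. -/
lemma descent_seg {f : E → ℝ} (hf : ContDiff ℝ 2 f) {L : ℝ} (hL : 0 ≤ L) (x v : E) {t : ℝ}
    (ht : 0 ≤ t) (hH : ∀ σ ∈ Icc (0:ℝ) t, ‖fderiv ℝ (gradient f) (x + σ • v)‖ ≤ L) :
    f (x + t • v) ≤ f x + t * ⟪gradient f x, v⟫ + L / 2 * t ^ 2 * ‖v‖ ^ 2 := by
  set g := gradient f x with hg
  set ψ : ℝ → ℝ := fun s => f (x + s • v) - s * ⟪g, v⟫ - L / 2 * s ^ 2 * ‖v‖ ^ 2 with hψ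
  have hψd : ∀ s : ℝ, HasDerivAt ψ
      (⟪gradient f (x + s • v), v⟫ - ⟪g, v⟫ - L * s * ‖v‖ ^ 2) s := by
    intro s
    have h1 := hasDerivAt_comp_line hf x v s
    have h2 : HasDerivAt (fun s : ℝ => s * ⟪g, v⟫) ⟪g, v⟫ s := by
      simpa using (hasDerivAt_id s).mul_const ⟪g, v⟫
    have h3 : HasDerivAt (fun s : ℝ => L / 2 * s ^ 2 * ‖v‖ ^ 2) (L * s * ‖v‖ ^ 2) s := by
      have : HasDerivAt (fun s : ℝ => s ^ 2) (2 * s) s := by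
        simpa using hasDerivAt_pow 2 s
      have := (this.const_mul (L / 2)).mul_const (‖v‖ ^ 2)
      rw [show L * s * ‖v‖ ^ 2 = L / 2 * (2 * s) * ‖v‖ ^ 2 by ring]
      exact this
    exact (h1.sub h2).sub h3
  have hanti : AntitoneOn ψ (Icc 0 t) := by
    apply antitoneOn_of_deriv_nonpos (convex_Icc 0 t)
    · exact fun s _ => (hψd s).continuousAt.continuousWithinAt
    · intro s hs
      exact (hψd s).differentiableAt.differentiableWithinAt
    · intro s hs
      rw [interior_Icc] at hs
      rw [(hψd s).deriv]
      have hlip : ‖gradient f (x + s • v) - gradient f (x + (0:ℝ) • v)‖ ≤ L * ‖v‖ * ‖s - 0‖ :=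
        grad_lip_seg hf x v hH ⟨le_rfl, ht⟩ ⟨le_of_lt hs.1, le_of_lt hs.2⟩
      have hx0 : x + (0:ℝ) • v = x := by simp
      rw [hx0, sub_zero] at hlip
      have hns : ‖s‖ = s := by rw [Real.norm_eq_abs, abs_of_pos hs.1]
      rw [hns] at hlip
      have h4 : ⟪gradient f (x + s • v), v⟫ - ⟪g, v⟫ = ⟪gradient f (x + s • v) - g, v⟫ := by
        rw [inner_sub_left]
      rw [h4]
      have h5 : ⟪gradient f (x + s • v) - g, v⟫ ≤ ‖gradient f (x + s • v) - g‖ * ‖v‖ :=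
        real_inner_le_norm _ _
      have h6 : ‖gradient f (x + s • v) - g‖ * ‖v‖ ≤ (L * ‖v‖ * s) * ‖v‖ :=
        mul_le_mul_of_nonneg_right hlip (norm_nonneg _)
      nlinarith [norm_nonneg v]
  have := hanti (left_mem_Icc.2 ht) (right_mem_Icc.2 ht) ht
  simp only [hψ] at this
  simp only [zero_smul, add_zero] at this
  nlinarith [this]

/-- Bootstrap: if the quadratic model stays strictly below `fstar + G` on `[0,1]`,
then `f` along the segment is bounded by the quadratic model. -/
lemma boot {f : E → ℝ} (hf : ContDiff ℝ 2 f) {fstar G L : ℝ} (hL : 0 ≤ L)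
    (hHess : ∀ w, f w ≤ fstar + G → ‖fderiv ℝ (gradient f) w‖ ≤ L) (x v : E)
    (hq : ∀ t ∈ Icc (0:ℝ) 1,
      f x + t * ⟪gradient f x, v⟫ + L / 2 * t ^ 2 * ‖v‖ ^ 2 < fstar + G) :
    ∀ t ∈ Icc (0:ℝ) 1,
      f (x + t • v) ≤ f x + t * ⟪gradient f x, v⟫ + L / 2 * t ^ 2 * ‖v‖ ^ 2 := by
  set q : ℝ → ℝ := fun t => f x + t * ⟪gradient f x, v⟫ + L / 2 * t ^ 2 * ‖v‖ ^ 2 with hqdef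
  set A : Set ℝ := {t ∈ Icc (0:ℝ) 1 | ∀ s ∈ Icc (0:ℝ) t, f (x + s • v) ≤ fstar + G} with hA
  have hfc : Continuous fun s : ℝ => f (x + s • v) := by
    have : Continuous f := (hf.differentiable (by norm_num)).continuous
    fun_prop
  have key : ∀ t ∈ A, ∀ s ∈ Icc (0:ℝ) t, f (x + s • v) ≤ q s := by
    rintro t ⟨htI, hts⟩ s hs
    apply descent_seg hf hL x v hs.1
    intro σ hσ
    exact hHess _ (hts σ ⟨hσ.1, hσ.2.trans hs.2⟩)
  have h0A : (0:ℝ) ∈ A := by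
    constructor
    · exact ⟨le_rfl, zero_le_one⟩
    · intro s hs
      have : s = 0 := le_antisymm hs.2 hs.1
      subst this
      have := hq 0 ⟨le_rfl, zero_le_one⟩
      simp only [zero_smul, add_zero]
      nlinarith [this]
  have hbdd : BddAbove A := BddAbove.mono (fun t ht => ht.1) (bddAbove_Icc (a := (0:ℝ)) (b := 1))
  have hne : A.Nonempty := ⟨0, h0A⟩
  set T := sSup A with hT
  have hT0 : 0 ≤ T := le_csSup hbdd h0A
  have hT1 : T ≤ 1 := csSup_le hne fun t ht => ht.1.2
  have hlt : ∀ s : ℝ, 0 ≤ s → s < T → f (x + s • v) ≤ fstar + G := by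
    intro s hs0 hsT
    obtain ⟨t, htA, hst⟩ := exists_lt_of_lt_csSup hne hsT
    exact htA.2 s ⟨hs0, le_of_lt hst⟩
  have hTA : T ∈ A := by
    refine ⟨⟨hT0, hT1⟩, ?_⟩
    intro s hs
    rcases lt_or_eq_of_le hs.2 with h | h
    · exact hlt s hs.1 h
    · rw [h]
      rcases eq_or_lt_of_le hT0 with h0 | h0
      · rw [← h0]
        simpa using h0A.2 0 ⟨le_rfl, le_rfl⟩
      · have hev : ∀ᶠ u in nhdsWithin T (Iio T), f (x + u • v) ≤ fstar + G := by
          have hmem : Ioo 0 T ∈ nhdsWithin T (Iio T) := Ioo_mem_nhdsLT_of_mem ⟨h0, le_rfl⟩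
          filter_upwards [hmem] with u hu
          exact hlt u hu.1.le hu.2
        have htends : Filter.Tendsto (fun u : ℝ => f (x + u • v)) (nhdsWithin T (Iio T))
            (nhds (f (x + T • v))) := (hfc.tendsto T).mono_left nhdsWithin_le_nhds
        exact le_of_tendsto htends hev
  have hTeq : T = 1 := by
    by_contra hne1
    have hTlt : T < 1 := lt_of_le_of_ne hT1 hne1
    have hfT : f (x + T • v) < fstar + G :=
      lt_of_le_of_lt (key T hTA T ⟨hT0, le_rfl⟩) (hq T ⟨hT0, hT1⟩)
    have hopen : ∃ δ > 0, ∀ u : ℝ, |u - T| < δ → f (x + u • v) < fstar + G := by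
      have hcont : ContinuousAt (fun u : ℝ => f (x + u • v)) T := hfc.continuousAt
      have := hcont.eventually_lt (g := fun _ => fstar + G) (by fun_prop) hfT
      rcases Metric.eventually_nhds_iff.1 this with ⟨δ, hδ, hball⟩
      exact ⟨δ, hδ, fun u hu => hball (by simpa [Real.dist_eq] using hu)⟩
    obtain ⟨δ, hδ, hball⟩ := hopen
    set T' := min 1 (T + δ / 2) with hT'
    have hTT' : T < T' := lt_min hTlt (by linarith)
    have hT'A : T' ∈ A := by
      refine ⟨⟨le_trans hT0 hTT'.le, min_le_left _ _⟩, ?_⟩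
      intro s hs
      rcases le_or_gt s T with h | h
      · exact hTA.2 s ⟨hs.1, h⟩
      · apply le_of_lt
        apply hball
        have : s ≤ T + δ / 2 := le_trans hs.2 (min_le_right _ _)
        rw [abs_lt]
        constructor <;> linarith
    have := le_csSup hbdd hT'A
    rw [← hT] at this
    linarith
  intro t ht
  have h1A : (1:ℝ) ∈ A := hTeq ▸ hTA
  exact key 1 h1A t ht

/-- Self-bounding gradient estimate. -/
lemma grad_bound {f : E → ℝ} (hf : ContDiff ℝ 2 f) {fstar G L : ℝ}
    (hlb : ∀ w, fstar ≤ f w) (hG : 0 < G) (hL : 0 < L)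
    (hHess : ∀ w, f w ≤ fstar + G → ‖fderiv ℝ (gradient f) w‖ ≤ L) (x : E)
    (hΔ : f x - fstar < G / 2) : ‖gradient f x‖ ≤ Real.sqrt (L * G) := by
  set g := gradient f x with hg
  by_cases hg0 : g = 0
  · rw [hg0]; simp [Real.sqrt_nonneg]
  have hgn : 0 < ‖g‖ := norm_pos_iff.2 hg0
  set s0 : ℝ := Real.sqrt (G / L) with hs0
  have hs0pos : 0 < s0 := Real.sqrt_pos.2 (by positivity)
  have hs0sq : s0 ^ 2 = G / L := Real.sq_sqrt (by positivity)
  set s : ℝ := min s0 (‖g‖ / L) with hs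
  have hspos : 0 < s := lt_min hs0pos (by positivity)
  set v : E := -((s / ‖g‖) • g) with hv
  have hinner : ⟪g, v⟫ = -(s * ‖g‖) := by
    rw [hv, inner_neg_right, real_inner_smul_right, real_inner_self_eq_norm_sq]
    field_simp
  have hnv : ‖v‖ = s := by
    rw [hv, norm_neg, norm_smul, Real.norm_eq_abs, abs_of_pos (by positivity)]
    field_simp
  have hssq : s ^ 2 ≤ G / L := by
    rw [← hs0sq]
    have : s ≤ s0 := min_le_left _ _
    nlinarith [hspos.le]
  have hLs : L / 2 * s ^ 2 ≤ G / 2 := by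
    have := mul_le_mul_of_nonneg_left hssq (by positivity : (0:ℝ) ≤ L / 2)
    calc L / 2 * s ^ 2 ≤ L / 2 * (G / L) := this
      _ = G / 2 := by field_simp
  have hq : ∀ t ∈ Icc (0:ℝ) 1,
      f x + t * ⟪g, v⟫ + L / 2 * t ^ 2 * ‖v‖ ^ 2 < fstar + G := by
    intro t ht
    rw [hinner, hnv]
    have h1 : t * -(s * ‖g‖) ≤ 0 := by
      have h0 : 0 ≤ t * (s * ‖g‖) := by
        have := ht.1
        positivity
      nlinarith
    have h2 : L / 2 * t ^ 2 * s ^ 2 ≤ L / 2 * s ^ 2 := by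
      have ht2 : t ^ 2 ≤ 1 := by nlinarith [ht.1, ht.2]
      have hm := mul_le_mul_of_nonneg_right ht2 (show (0:ℝ) ≤ L / 2 * s ^ 2 by positivity)
      nlinarith [hm]
    nlinarith [hΔ]
  have hb := boot hf hL.le hHess x v hq 1 ⟨zero_le_one, le_rfl⟩
  rw [hinner, hnv] at hb
  have hlbv := hlb (x + (1:ℝ) • v)
  have hkey : s * ‖g‖ ≤ (f x - fstar) + L / 2 * s ^ 2 := by nlinarith
  rcases le_or_gt (‖g‖ / L) s0 with hc | hc
  · have hseq : s = ‖g‖ / L := min_eq_right hc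
    have h2 : ‖g‖ ^ 2 ≤ L * G := by
      rw [hseq] at hkey
      have he : ‖g‖ / L * ‖g‖ - L / 2 * (‖g‖ / L) ^ 2 = ‖g‖ ^ 2 / (2 * L) := by
        field_simp
        ring
      have h3 : ‖g‖ ^ 2 / (2 * L) ≤ f x - fstar := by
        rw [← he]
        linarith
      rw [div_le_iff₀ (by positivity : (0:ℝ) < 2 * L)] at h3
      nlinarith
    calc ‖g‖ = Real.sqrt (‖g‖ ^ 2) := (Real.sqrt_sq (norm_nonneg g)).symm
      _ ≤ Real.sqrt (L * G) := Real.sqrt_le_sqrt h2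
  · exfalso
    have hseq : s = s0 := min_eq_left hc.le
    rw [hseq] at hkey
    have hc' : s0 * L < ‖g‖ := by
      rw [lt_div_iff₀ hL] at hc
      exact hc
    have hG' : s0 ^ 2 * L = G := by
      rw [hs0sq]
      field_simp
    have e0 : 0 < s0 * (‖g‖ - s0 * L) := mul_pos hs0pos (sub_pos.2 hc')
    have e1 : G < s0 * ‖g‖ := by nlinarith [e0, hG']
    have e2 : L / 2 * s0 ^ 2 = G / 2 := by linear_combination hG' / 2
    linarith [hkey, hΔ, e1, e2]

lemma sqrt2_lb : (1.375 : ℝ) ≤ Real.sqrt 2 := by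
  nlinarith [Real.sqrt_nonneg 2, Real.sq_sqrt (show (0:ℝ) ≤ 2 by norm_num)]

end S6Aux

open S6Aux in
/-- Two-point local descent lemma. If `f` is `(ρ, K₀, K_ρ)`-smooth with
`K₀, K_ρ > 0` and `f* = inf f > −∞`, then with `Δ = f(x) − f*`, `L(Δ) = 2K₀ + K_ρ(2Δ)^ρ`
and `r(Δ) = min{C₁Δ^{−(ρ−1)/2}, C₂}`, for any `x₁, x₂` with `‖x₁ − x‖ ≤ r(Δ)` and
`‖x₂ − x‖ ≤ r(Δ)` one has `‖∇f(x₁) − ∇f(x₂)‖ ≤ L(Δ)‖x₁ − x₂‖` and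
`f(x₂) ≤ f(x₁) + ⟨∇f(x₁), x₂ − x₁⟩ + L(Δ)/2 ‖x₂ − x₁‖²`. -/
theorem statement6 (d : ℕ) (f : EuclideanSpace ℝ (Fin d) → ℝ)
    (hf : ContDiff ℝ 2 f)
    (ρ K0 Kρ : ℝ) (hρ : 0 < ρ) (hK0 : 0 < K0) (hKρ : 0 < Kρ)
    (fstar : ℝ) (hglb : IsGLB (Set.range f) fstar)
    (hsmooth : ∀ w, ‖fderiv ℝ (gradient f) w‖ ≤ K0 + Kρ * (f w - fstar) ^ ρ)
    (C1 C2 : ℝ)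
    (hC1 : C1 = 1 / ((2 + Real.sqrt 2) * Real.sqrt (3 ^ ρ * Kρ)))
    (hC2 : C2 = (1 / (2 * Real.sqrt 3 + Real.sqrt 6)) *
      K0 ^ (1 / (2 * ρ) - 1 / 2) / Kρ ^ (1 / (2 * ρ)))
    (x : EuclideanSpace ℝ (Fin d))
    (Δ L r : ℝ)
    (hΔ : Δ = f x - fstar)
    (hL : L = 2 * K0 + Kρ * (2 * Δ) ^ ρ)
    (hr : r = min (C1 * Δ ^ (-(ρ - 1) / 2)) C2) :
    ∀ x1 x2 : EuclideanSpace ℝ (Fin d), ‖x1 - x‖ ≤ r → ‖x2 - x‖ ≤ r →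
      ‖gradient f x1 - gradient f x2‖ ≤ L * ‖x1 - x2‖ ∧
      f x2 ≤ f x1 + ⟪gradient f x1, x2 - x1⟫ + L / 2 * ‖x2 - x1‖ ^ 2 := by
  intro x1 x2 h1 h2
  have hlb : ∀ w, fstar ≤ f w := fun w => hglb.1 ⟨w, rfl⟩
  have hΔ0 : 0 ≤ Δ := by rw [hΔ]; linarith [hlb x]
  have hρ' : ρ ≠ 0 := ne_of_gt hρ
  have hr0 : 0 ≤ r := le_trans (norm_nonneg _) h1
  by_cases hcase : Δ = 0 ∧ ρ ≠ 1
  · -- degenerate case : r = 0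
    have hC2pos : 0 ≤ C2 := by rw [hC2]; positivity
    have hrz : r = 0 := by
      rw [hr, hcase.1]
      have hz : (0:ℝ) ^ (-(ρ - 1) / 2) = 0 := by
        apply Real.zero_rpow
        intro h
        apply hcase.2
        have : ρ - 1 = 0 := by linarith [neg_eq_zero.1 (by linarith [h] : -(ρ-1) = 0)]
        linarith
      rw [hz, mul_zero]
      exact min_eq_left hC2pos
    rw [hrz] at h1 h2
    have hx1 : x1 = x := by
      have := norm_le_zero_iff.1 h1
      exact sub_eq_zero.1 this
    have hx2 : x2 = x := by
      have := norm_le_zero_iff.1 h2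
      exact sub_eq_zero.1 this
    subst hx1; subst hx2
    constructor
    · simp
    · simp
  · -- main case
    push_neg at hcase
    -- either Δ > 0, or Δ = 0 and ρ = 1
    set G : ℝ := ((2 * Δ) ^ ρ + K0 / Kρ) ^ (1 / ρ) with hGdef
    have h2Δ0 : (0:ℝ) ≤ 2 * Δ := by linarith
    have hbase : 0 < (2 * Δ) ^ ρ + K0 / Kρ :=
      add_pos_of_nonneg_of_pos (Real.rpow_nonneg h2Δ0 ρ) (by positivity)
    have hGpos : 0 < G := Real.rpow_pos_of_pos hbase _
    have hGρ : G ^ ρ = (2 * Δ) ^ ρ + K0 / Kρ := by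
      rw [hGdef, ← Real.rpow_mul hbase.le, one_div, inv_mul_cancel₀ hρ', Real.rpow_one]
    have hLG : L = K0 + Kρ * G ^ ρ := by
      rw [hGρ, hL]
      field_simp
      ring
    have hLpos : 0 < L := by
      have h2d : 0 ≤ (2 * Δ) ^ ρ := Real.rpow_nonneg h2Δ0 ρ
      rw [hL]
      nlinarith
    have hHess : ∀ w, f w ≤ fstar + G → ‖fderiv ℝ (gradient f) w‖ ≤ L := by
      intro w hw
      refine le_trans (hsmooth w) ?_
      have h0 : 0 ≤ f w - fstar := by linarith [hlb w]
      have hle : (f w - fstar) ^ ρ ≤ G ^ ρ := Real.rpow_le_rpow h0 (by linarith) hρ.le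
      have hm := mul_le_mul_of_nonneg_left hle hKρ.le
      rw [hLG]
      linarith
    have h2ΔG : 2 * Δ < G := by
      by_contra hge
      push_neg at hge
      have := Real.rpow_le_rpow hGpos.le hge hρ.le
      rw [hGρ] at this
      have : K0 / Kρ ≤ 0 := by linarith
      have : 0 < K0 / Kρ := by positivity
      linarith
    have hΔG : Δ < G / 2 := by linarith
    -- r^2 * L ≤ G / 9
    have hrC2 : r ≤ C2 := by rw [hr]; exact min_le_right _ _
    have hr2C2 : r ^ 2 ≤ C2 ^ 2 := by nlinarith
    -- piece B
    have hKKle : (K0 / Kρ) ^ (1 / ρ) ≤ G := by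
      rw [hGdef]
      apply Real.rpow_le_rpow (by positivity) (by linarith [Real.rpow_nonneg h2Δ0 ρ])
        (by positivity)
    have hC2sq : C2 ^ 2 * (2 * K0) * (9 + 6 * Real.sqrt 2) = (K0 / Kρ) ^ (1 / ρ) := by
      set A := K0 ^ (1 / (2 * ρ) - 1 / 2) with hA
      set B := Kρ ^ (1 / (2 * ρ)) with hB
      set X := K0 ^ (1 / ρ - 1) with hX
      set Y := Kρ ^ (1 / ρ) with hY
      set Z := K0 ^ (1 / ρ) with hZ
      obtain ⟨D, hD⟩ : ∃ D : ℝ, D = 2 * Real.sqrt 3 + Real.sqrt 6 := ⟨_, rfl⟩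
      rw [← hD] at hC2
      have ha : A * A = X := by
        rw [hA, hX, ← Real.rpow_add hK0]
        congr 1
        ring
      have hb : B * B = Y := by
        rw [hB, hY, ← Real.rpow_add hKρ]
        congr 1
        ring
      have hc : K0 * X = Z := by
        rw [hX, hZ]
        nth_rewrite 1 [← Real.rpow_one K0]
        rw [← Real.rpow_add hK0]
        congr 1
        ring
      have hdiv : (K0 / Kρ) ^ (1 / ρ) = Z / Y := Real.div_rpow hK0.le hKρ.le _
      have hs36 : Real.sqrt 3 * Real.sqrt 6 = 3 * Real.sqrt 2 := by
        rw [← Real.sqrt_mul (by norm_num : (0:ℝ) ≤ 3)]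
        rw [show (3 * 6 : ℝ) = 9 * 2 by norm_num,
          Real.sqrt_mul (by norm_num : (0:ℝ) ≤ 9),
          show Real.sqrt 9 = 3 by
            rw [show (9:ℝ) = 3 ^ 2 by norm_num, Real.sqrt_sq (by norm_num)]]
      have hden : D ^ 2 = 18 + 12 * Real.sqrt 2 := by
        have h3 : Real.sqrt 3 ^ 2 = 3 := Real.sq_sqrt (by norm_num)
        have h6 : Real.sqrt 6 ^ 2 = 6 := Real.sq_sqrt (by norm_num)
        rw [hD]
        nlinarith [hs36]
      have hYpos : (0:ℝ) < Y := Real.rpow_pos_of_pos hKρ _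
      have e1 : C2 ^ 2 = X / ((18 + 12 * Real.sqrt 2) * Y) := by
        have e0 : C2 ^ 2 = (A * A) / (D ^ 2 * (B * B)) := by
          rw [hC2]
          ring
        rw [e0, hden, ha, hb]
      rw [e1, hdiv, ← hc]
      have hs2' : (18 + 12 * Real.sqrt 2) ≠ 0 := by positivity
      field_simp
      ring
    have hs2lb : (0:ℝ) ≤ Real.sqrt 2 - 1.375 := sub_nonneg.2 sqrt2_lb
    have hpieceB : r ^ 2 * (2 * K0) ≤ G / 17 := by
      have hB0 : 0 ≤ r ^ 2 * (2 * K0) := by positivity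
      have h1 : r ^ 2 * (2 * K0) * (9 + 6 * Real.sqrt 2)
          ≤ C2 ^ 2 * (2 * K0) * (9 + 6 * Real.sqrt 2) := by
        have : (0:ℝ) ≤ (2 * K0) * (9 + 6 * Real.sqrt 2) := by positivity
        nlinarith [hr2C2]
      rw [hC2sq] at h1
      have h2 : r ^ 2 * (2 * K0) * (9 + 6 * Real.sqrt 2) ≤ G := le_trans h1 hKKle
      nlinarith [mul_nonneg hB0 hs2lb]
    have hpieceA : r ^ 2 * (Kρ * (2 * Δ) ^ ρ) ≤ G / 23 := by
      have h3ρpos : (0:ℝ) < 3 ^ ρ := Real.rpow_pos_of_pos (by norm_num) ρ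
      have hA0 : 0 ≤ r ^ 2 * (Kρ * (2 * Δ) ^ ρ) := by
        have := Real.rpow_nonneg h2Δ0 ρ
        positivity
      have hXA : r ^ 2 * (Kρ * (2 * Δ) ^ ρ) * (6 + 4 * Real.sqrt 2) ≤ Δ := by
        rcases eq_or_lt_of_le hΔ0 with h0 | hΔpos
        · rw [← h0]
          rw [mul_zero, Real.zero_rpow hρ']
          simp
        · -- Δ > 0
          have hrC1 : r ≤ C1 * Δ ^ (-(ρ - 1) / 2) := by rw [hr]; exact min_le_left _ _
          have hr2 : r ^ 2 ≤ C1 ^ 2 * (Δ ^ (-(ρ - 1) / 2) * Δ ^ (-(ρ - 1) / 2)) := by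
            have hq0 : 0 ≤ C1 * Δ ^ (-(ρ - 1) / 2) := le_trans hr0 hrC1
            have := mul_le_mul hrC1 hrC1 hr0 hq0
            nlinarith [this]
          have hΔΔ : Δ ^ (-(ρ - 1) / 2) * Δ ^ (-(ρ - 1) / 2) = Δ ^ (1 - ρ) := by
            rw [← Real.rpow_add hΔpos]
            congr 1
            ring
          rw [hΔΔ] at hr2
          have hmulρ : (2 * Δ) ^ ρ = 2 ^ ρ * Δ ^ ρ :=
            Real.mul_rpow (by norm_num) hΔpos.le
          have hΔ1 : Δ ^ (1 - ρ) * Δ ^ ρ = Δ := by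
            rw [← Real.rpow_add hΔpos]
            norm_num
          have hXpos : (0:ℝ) < 3 ^ ρ * Kρ := by positivity
          have hsq : Real.sqrt (3 ^ ρ * Kρ) ^ 2 = 3 ^ ρ * Kρ := Real.sq_sqrt hXpos.le
          have h2s : Real.sqrt 2 ^ 2 = 2 := Real.sq_sqrt (by norm_num)
          have hC1sq : C1 ^ 2 * ((3 ^ ρ * Kρ) * (6 + 4 * Real.sqrt 2)) = 1 := by
            obtain ⟨Dd, hDd⟩ : ∃ Dd : ℝ, Dd = (2 + Real.sqrt 2) * Real.sqrt (3 ^ ρ * Kρ) :=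
              ⟨_, rfl⟩
            rw [← hDd] at hC1
            have hDdsq : Dd ^ 2 = (6 + 4 * Real.sqrt 2) * (3 ^ ρ * Kρ) := by
              rw [hDd, mul_pow, hsq]
              have h22 : (2 + Real.sqrt 2) ^ 2 = 6 + 4 * Real.sqrt 2 := by
                linear_combination h2s
              rw [h22]
            have hDdpos : 0 < Dd := by
              rw [hDd]
              have h1' : (0:ℝ) < 2 + Real.sqrt 2 := by
                have := Real.sqrt_nonneg 2
                linarith
              have h2' : (0:ℝ) < Real.sqrt (3 ^ ρ * Kρ) := Real.sqrt_pos.2 hXpos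
              positivity
            rw [hC1]
            field_simp
            linear_combination -hDdsq
          have h2ρ3ρ : (2:ℝ) ^ ρ ≤ 3 ^ ρ :=
            Real.rpow_le_rpow (by norm_num) (by norm_num) hρ.le
          -- chain of equalities/inequalities
          have hF0 : (0:ℝ) ≤ Kρ * (2 ^ ρ * Δ ^ ρ) * (6 + 4 * Real.sqrt 2) := by
            have := Real.rpow_nonneg (show (0:ℝ) ≤ 2 by norm_num) ρ
            have := Real.rpow_nonneg hΔpos.le ρ
            positivity
          have step1 : r ^ 2 * (Kρ * (2 * Δ) ^ ρ) * (6 + 4 * Real.sqrt 2)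
              ≤ C1 ^ 2 * Δ ^ (1 - ρ) * (Kρ * (2 ^ ρ * Δ ^ ρ)) * (6 + 4 * Real.sqrt 2) := by
            have hmf := mul_le_mul_of_nonneg_right hr2 hF0
            calc r ^ 2 * (Kρ * (2 * Δ) ^ ρ) * (6 + 4 * Real.sqrt 2)
                = r ^ 2 * (Kρ * (2 ^ ρ * Δ ^ ρ) * (6 + 4 * Real.sqrt 2)) := by
                  rw [hmulρ]; ring
              _ ≤ C1 ^ 2 * Δ ^ (1 - ρ) * (Kρ * (2 ^ ρ * Δ ^ ρ) * (6 + 4 * Real.sqrt 2)) := hmf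
              _ = C1 ^ 2 * Δ ^ (1 - ρ) * (Kρ * (2 ^ ρ * Δ ^ ρ)) * (6 + 4 * Real.sqrt 2) := by
                  ring
          have step2 : C1 ^ 2 * Δ ^ (1 - ρ) * (Kρ * (2 ^ ρ * Δ ^ ρ)) * (6 + 4 * Real.sqrt 2)
              * (3 ^ ρ) = 2 ^ ρ * Δ := by
            calc C1 ^ 2 * Δ ^ (1 - ρ) * (Kρ * (2 ^ ρ * Δ ^ ρ)) * (6 + 4 * Real.sqrt 2) * 3 ^ ρ
                = (C1 ^ 2 * ((3 ^ ρ * Kρ) * (6 + 4 * Real.sqrt 2))) * (2 ^ ρ)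
                  * (Δ ^ (1 - ρ) * Δ ^ ρ) := by ring
              _ = 2 ^ ρ * Δ := by rw [hC1sq, hΔ1]; ring
          have step3 : r ^ 2 * (Kρ * (2 * Δ) ^ ρ) * (6 + 4 * Real.sqrt 2) * 3 ^ ρ
              ≤ Δ * 3 ^ ρ := by
            have hm := mul_le_mul_of_nonneg_right step1 h3ρpos.le
            rw [step2] at hm
            have h23 : 2 ^ ρ * Δ ≤ 3 ^ ρ * Δ := mul_le_mul_of_nonneg_right h2ρ3ρ hΔpos.le
            have he3 : Δ * 3 ^ ρ = 3 ^ ρ * Δ := mul_comm _ _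
            linarith only [hm, h23, he3]
          exact le_of_mul_le_mul_right step3 h3ρpos
      linarith only [hXA, hΔG, mul_nonneg hA0 hs2lb, hA0]
    have hrL : r ^ 2 * L ≤ G / 9 := by
      have he : r ^ 2 * L = r ^ 2 * (2 * K0) + r ^ 2 * (Kρ * (2 * Δ) ^ ρ) := by
        rw [hL]; ring
      rw [he]
      have h917 : G / 17 + G / 23 ≤ G / 9 := by linarith only [hGpos]
      linarith only [hpieceB, hpieceA, h917]
    have hgb : ‖gradient f x‖ ≤ Real.sqrt (L * G) := by
      apply grad_bound hf hlb hGpos hLpos hHess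
      rw [← hΔ]
      exact hΔG
    have hsqLG : Real.sqrt (L * G) * r ≤ G / 3 := by
      have h1' : Real.sqrt (L * G) * r = Real.sqrt (L * G * r ^ 2) := by
        rw [show L * G * r ^ 2 = L * G * r ^ 2 by ring,
          Real.sqrt_mul (by positivity : (0:ℝ) ≤ L * G) (r ^ 2), Real.sqrt_sq hr0]
      rw [h1']
      have h2' : L * G * r ^ 2 ≤ G / 9 * G := by
        have := mul_le_mul_of_nonneg_right hrL hGpos.le
        linarith only [this]
      calc Real.sqrt (L * G * r ^ 2) ≤ Real.sqrt (G / 9 * G) := Real.sqrt_le_sqrt h2'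
        _ = G / 3 := by
            rw [show G / 9 * G = (G / 3) ^ 2 by ring, Real.sqrt_sq (by positivity)]
    have hsub : ∀ w : EuclideanSpace ℝ (Fin d), ‖w - x‖ ≤ r → f w ≤ fstar + G := by
      intro w hw
      have hq : ∀ t ∈ Icc (0:ℝ) 1, f x + t * ⟪gradient f x, w - x⟫
          + L / 2 * t ^ 2 * ‖w - x‖ ^ 2 < fstar + G := by
        intro t ht
        have e1 : t * ⟪gradient f x, w - x⟫ ≤ Real.sqrt (L * G) * r := by
          calc t * ⟪gradient f x, w - x⟫ ≤ |t * ⟪gradient f x, w - x⟫| := le_abs_self _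
            _ = |t| * |⟪gradient f x, w - x⟫| := abs_mul _ _
            _ ≤ 1 * (‖gradient f x‖ * ‖w - x‖) :=
                mul_le_mul (abs_le.2 ⟨by linarith [ht.1], ht.2⟩)
                  (abs_real_inner_le_norm _ _) (abs_nonneg _) zero_le_one
            _ = ‖gradient f x‖ * ‖w - x‖ := one_mul _
            _ ≤ Real.sqrt (L * G) * r :=
                mul_le_mul hgb hw (norm_nonneg _) (Real.sqrt_nonneg _)
        have e3 : L / 2 * t ^ 2 * ‖w - x‖ ^ 2 ≤ G / 18 := by
          have ht2 : t ^ 2 ≤ 1 := by nlinarith [ht.1, ht.2]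
          have hw2 : ‖w - x‖ ^ 2 ≤ r ^ 2 := by nlinarith [norm_nonneg (w - x), hw]
          have hmm : t ^ 2 * ‖w - x‖ ^ 2 ≤ 1 * r ^ 2 :=
            mul_le_mul ht2 hw2 (by positivity) zero_le_one
          have hmm2 := mul_le_mul_of_nonneg_left hmm (by positivity : (0:ℝ) ≤ L / 2)
          linarith only [hmm2, hrL]
        have hfx : f x = fstar + Δ := by rw [hΔ]; ring
        rw [hfx]
        linarith only [e1, e3, hΔG, hGpos, hsqLG]
      have hb := boot hf hLpos.le hHess x (w - x) hq 1 ⟨zero_le_one, le_rfl⟩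
      have hx1 : x + (1:ℝ) • (w - x) = w := by rw [one_smul]; abel
      rw [hx1] at hb
      have hq1 := hq 1 ⟨zero_le_one, le_rfl⟩
      linarith only [hb, hq1]
    have hHB : ∀ σ ∈ Icc (0:ℝ) 1, ‖fderiv ℝ (gradient f) (x1 + σ • (x2 - x1))‖ ≤ L := by
      intro σ hσ
      apply hHess
      apply hsub
      have hdec : x1 + σ • (x2 - x1) - x = (1 - σ) • (x1 - x) + σ • (x2 - x) := by
        module
      rw [hdec]
      calc ‖(1 - σ) • (x1 - x) + σ • (x2 - x)‖
          ≤ ‖(1 - σ) • (x1 - x)‖ + ‖σ • (x2 - x)‖ := norm_add_le _ _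
        _ = (1 - σ) * ‖x1 - x‖ + σ * ‖x2 - x‖ := by
            rw [norm_smul, norm_smul, Real.norm_eq_abs, Real.norm_eq_abs,
              abs_of_nonneg (by linarith [hσ.2] : (0:ℝ) ≤ 1 - σ), abs_of_nonneg hσ.1]
        _ ≤ (1 - σ) * r + σ * r := by
            apply add_le_add
            · exact mul_le_mul_of_nonneg_left h1 (by linarith [hσ.2])
            · exact mul_le_mul_of_nonneg_left h2 hσ.1
        _ = r := by ring
    constructor
    · have hlip := grad_lip_seg hf x1 (x2 - x1) hHB (a := 1) (b := 0)
        ⟨zero_le_one, le_rfl⟩ ⟨le_rfl, zero_le_one⟩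
      have hz : x1 + (0:ℝ) • (x2 - x1) = x1 := by simp
      have ho : x1 + (1:ℝ) • (x2 - x1) = x2 := by rw [one_smul]; abel
      rw [hz, ho] at hlip
      have hn : ‖(0:ℝ) - 1‖ = 1 := by norm_num
      rw [hn, mul_one] at hlip
      rw [norm_sub_rev x1 x2]
      exact hlip
    · have hd := descent_seg hf hLpos.le x1 (x2 - x1) zero_le_one hHB
      have ho : x1 + (1:ℝ) • (x2 - x1) = x2 := by rw [one_smul]; abel
      rw [ho] at hd
      linarith only [hd]
end
end

section
/- Let f : ℝ^d → ℝ be (ρ, K₀, K_ρ)-smooth with K₀, K_ρ > 0 and f* = inf f > −∞, and let w₀ ∈ ℝ^d with Δ₀ = f(w₀) − f* < ∞. Consider gradient descent with the increasing (warmup) learning rate schedule η_t = (1/(4√2 + 4)) · min{1/K₀, 1/(3^ρ K_ρ Δ_t^ρ)}, i.e. w_{t+1} = w_t − η_t ∇f(w_t), where Δ_t = f(w_t) − f*. Then for every T ≥ 1 and all t < T: Δ_{t+1} ≤ Δ_t, and min_{t < T} ‖∇f(w_t)‖² ≤ 2Δ₀ / (∑_{t=0}^{T−1} η_t). -/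
open Real InnerProductSpace intervalIntegral

noncomputable section

variable {d : ℕ}
local notation "E" => EuclideanSpace ℝ (Fin d)


lemma grad_inner (f : E → ℝ) (x y : E) :
    fderiv ℝ f x y = ⟪gradient f x, y⟫_ℝ := by
  rw [gradient, ← InnerProductSpace.toDual_apply_apply, LinearIsometryEquiv.apply_symm_apply]

lemma taylorBound (f : E → ℝ) (hf : ContDiff ℝ 2 f) (w v : E) (s L : ℝ)
    (hs : 0 ≤ s) (hL : 0 ≤ L)
    (hH : ∀ u ∈ Set.Icc (0:ℝ) s, ‖fderiv ℝ (gradient f) (w - u • v)‖ ≤ L) :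
    f (w - s • v) ≤ f w - s * ⟪gradient f w, v⟫_ℝ + L * ‖v‖ ^ 2 * s ^ 2 / 2 := by
  have hfd : Differentiable ℝ f := hf.differentiable (by norm_num)
  have hg1 : ContDiff ℝ 1 (gradient f) :=
    (InnerProductSpace.toDual ℝ E).symm.contDiff.comp (hf.fderiv_right (by norm_num))
  set p : ℝ → E := fun u => w - u • v with hp
  have hdp : ∀ u : ℝ, HasDerivAt p (-v) u := by
    intro u
    simpa using ((hasDerivAt_id u).smul_const v).const_sub w
  set ψ : ℝ → ℝ := fun u => ⟪gradient f (p u), v⟫_ℝ with hψ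
  have hdφ : ∀ u : ℝ, HasDerivAt (fun u => f (p u)) (-ψ u) u := by
    intro u
    have h1 := (hfd (p u)).hasFDerivAt.comp_hasDerivAt u (hdp u)
    have : fderiv ℝ f (p u) (-v) = -ψ u := by
      rw [grad_inner]; simp [hψ, inner_neg_right]
    rwa [this] at h1
  have hdψ : ∀ u : ℝ, HasDerivAt ψ (⟪(fderiv ℝ (gradient f) (p u)) (-v), v⟫_ℝ) u := by
    intro u
    have hg1d : HasFDerivAt (gradient f) (fderiv ℝ (gradient f) (p u)) (p u) :=
      (hg1.differentiable (by norm_num) (p u)).hasFDerivAt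
    have h2 : HasDerivAt (fun u => gradient f (p u)) ((fderiv ℝ (gradient f) (p u)) (-v)) u :=
      hg1d.comp_hasDerivAt u (hdp u)
    simpa [hψ] using (h2.inner (𝕜 := ℝ) (hasDerivAt_const u v))
  have hpcont : Continuous p := continuous_const.sub (continuous_id.smul continuous_const)
  have hψcont : Continuous ψ := (hg1.continuous.comp hpcont).inner continuous_const
  -- derivative bound for ψ on [0,s]
  have hψbd : ∀ u ∈ Set.Icc (0:ℝ) s, ‖⟪(fderiv ℝ (gradient f) (p u)) (-v), v⟫_ℝ‖ ≤ L * ‖v‖ ^ 2 := by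
    intro u hu
    calc ‖⟪(fderiv ℝ (gradient f) (p u)) (-v), v⟫_ℝ‖
        ≤ ‖(fderiv ℝ (gradient f) (p u)) (-v)‖ * ‖v‖ := norm_inner_le_norm _ _
      _ ≤ (‖fderiv ℝ (gradient f) (p u)‖ * ‖-v‖) * ‖v‖ := by
          gcongr; exact (fderiv ℝ (gradient f) (p u)).le_opNorm _
      _ ≤ (L * ‖v‖) * ‖v‖ := by rw [norm_neg]; gcongr; exact hH u hu
      _ = L * ‖v‖ ^ 2 := by ring
  -- mean value: |ψ u - ψ 0| ≤ L ‖v‖² u on [0,s]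
  have hmvt : ∀ u ∈ Set.Icc (0:ℝ) s, ‖ψ u - ψ 0‖ ≤ (L * ‖v‖ ^ 2) * (u - 0) :=
    norm_image_sub_le_of_norm_deriv_le_segment'
      (fun u hu => (hdψ u).hasDerivWithinAt)
      (fun u hu => hψbd u (Set.Ico_subset_Icc_self hu))
  -- FTC
  have hint : IntervalIntegrable (fun u => -ψ u) MeasureTheory.volume 0 s :=
    (hψcont.neg).intervalIntegrable 0 s
  have hftc : ∫ u in (0:ℝ)..s, -ψ u = f (p s) - f (p 0) :=
    integral_eq_sub_of_hasDerivAt (fun u _ => hdφ u) hint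
  have hint2 : IntervalIntegrable (fun u => -ψ 0 + (L * ‖v‖ ^ 2) * u) MeasureTheory.volume 0 s :=
    (continuous_const.add (continuous_const.mul continuous_id)).intervalIntegrable 0 s
  have hmono : ∫ u in (0:ℝ)..s, -ψ u ≤ ∫ u in (0:ℝ)..s, (-ψ 0 + (L * ‖v‖ ^ 2) * u) := by
    apply integral_mono_on hs hint hint2
    intro u hu
    have := hmvt u hu
    rw [Real.norm_eq_abs, abs_le] at this
    linarith [this.1]
  have hcomp : ∫ u in (0:ℝ)..s, (-ψ 0 + (L * ‖v‖ ^ 2) * u)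
      = s * (-ψ 0) + (L * ‖v‖ ^ 2) * (s ^ 2 / 2) := by
    rw [intervalIntegral.integral_add (intervalIntegrable_const)
      (by exact (continuous_const.mul continuous_id').intervalIntegrable 0 s :
        IntervalIntegrable (fun u => (L * ‖v‖ ^ 2) * u) MeasureTheory.volume 0 s),
      intervalIntegral.integral_const_mul, integral_id, intervalIntegral.integral_const]
    simp
  have hp0 : p 0 = w := by simp [hp]
  have hψ0 : ψ 0 = ⟪gradient f w, v⟫_ℝ := by rw [hψ]; simp [hp0]
  rw [hftc, hcomp, hp0, hψ0] at hmono
  have hps : f (p s) = f (w - s • v) := rfl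
  rw [hps] at hmono
  linarith


lemma grad_zero_of_min (f : E → ℝ) (x : E) (hmin : ∀ y, f x ≤ f y) :
    gradient f x = 0 := by
  have hd : fderiv ℝ f x = 0 :=
    ((isMinOn_univ_iff.2 hmin).isLocalMin Filter.univ_mem).fderiv_eq_zero
  rw [gradient, hd, map_zero]

lemma eta_nonneg (K0 b : ℝ) (hK0 : 0 < K0) (hb : 0 ≤ b) :
    0 ≤ (1 / (4 * Real.sqrt 2 + 4)) * min (1 / K0) (1 / b) := by
  have h2 : (0:ℝ) < 4 * Real.sqrt 2 + 4 := by positivity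
  have : 0 ≤ min (1 / K0) (1 / b) := le_min (by positivity) (by positivity)
  positivity

lemma step_lemma (f : E → ℝ) (hf : ContDiff ℝ 2 f)
    (ρ K0 Kρ : ℝ) (hρ : 0 < ρ) (hK0 : 0 < K0) (hKρ : 0 < Kρ)
    (fstar : ℝ) (hglb : IsGLB (Set.range f) fstar)
    (hsmooth : ∀ v, ‖fderiv ℝ (gradient f) v‖ ≤ K0 + Kρ * (f v - fstar) ^ ρ)
    (x : E) (η : ℝ)
    (hη : η = (1 / (4 * Real.sqrt 2 + 4)) *
      min (1 / K0) (1 / (3 ^ ρ * Kρ * (f x - fstar) ^ ρ))) :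
    f (x - η • gradient f x) - fstar ≤ (f x - fstar) - (η / 2) * ‖gradient f x‖ ^ 2 := by
  have hlow : ∀ y, fstar ≤ f y := fun y => hglb.1 ⟨y, rfl⟩
  set Δ := f x - fstar with hΔdef
  have hΔ0 : 0 ≤ Δ := by simp [hΔdef, sub_nonneg, hlow x]
  set g := gradient f x with hg
  rcases eq_or_lt_of_le hΔ0 with hΔ | hΔ
  · -- Δ = 0 : x is a global minimizer
    have hfx : f x = fstar := by simp [hΔdef] at hΔ; linarith
    have hgz : g = 0 := grad_zero_of_min f x (fun y => hfx ▸ hlow y)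
    rw [hgz]
    simp [hfx, ← hΔ]
  · -- Δ > 0
    have hsq2 : (0:ℝ) < 4 * Real.sqrt 2 + 4 := by positivity
    set c : ℝ := 1 / (4 * Real.sqrt 2 + 4) with hc
    have hcpos : 0 < c := by positivity
    have h2c : 2 * c ≤ 1 := by
      rw [hc, mul_one_div, div_le_one hsq2]
      nlinarith [Real.sqrt_nonneg 2]
    have h3ρ : (0:ℝ) < 3 ^ ρ := Real.rpow_pos_of_pos (by norm_num) ρ
    have hΔρ : (0:ℝ) < Δ ^ ρ := Real.rpow_pos_of_pos hΔ ρ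
    set b : ℝ := 3 ^ ρ * Kρ * Δ ^ ρ with hb
    have hbpos : 0 < b := by positivity
    have hηpos : 0 < η := by
      rw [hη]; exact mul_pos hcpos (lt_min (by positivity) (by positivity))
    set L : ℝ := K0 + Kρ * (3 * Δ) ^ ρ with hL
    have h3Δρ : Kρ * (3 * Δ) ^ ρ = b := by
      rw [hb, Real.mul_rpow (by norm_num) hΔ0]; ring
    have hLpos : 0 < L := by rw [hL, h3Δρ]; positivity
    have hηK0 : η * K0 ≤ c := by
      have h1 : η ≤ c * (1 / K0) := by rw [hη]; gcongr; exact min_le_left _ _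
      calc η * K0 ≤ (c * (1 / K0)) * K0 := by gcongr
        _ = c := by field_simp
    have hηb : η * b ≤ c := by
      have h1 : η ≤ c * (1 / b) := by rw [hη]; gcongr; exact min_le_right _ _
      calc η * b ≤ (c * (1 / b)) * b := by gcongr
        _ = c := by field_simp
    have hηL : η * L ≤ 1 := by
      rw [hL, h3Δρ, mul_add]; linarith
    -- the function along the segment
    set φ : ℝ → ℝ := fun s => f (x - s • (η • g)) - fstar with hφdef
    have hφcont : Continuous φ := by
      apply Continuous.sub _ continuous_const
      exact hf.continuous.comp (continuous_const.sub (continuous_id.smul continuous_const))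
    have hφ0 : φ 0 = Δ := by simp [hφdef, hΔdef]
    have hφnn : ∀ s, 0 ≤ φ s := fun s => by simp [hφdef, sub_nonneg, hlow]
    -- key Taylor consequence
    have key : ∀ s ∈ Set.Icc (0:ℝ) 1, (∀ u ∈ Set.Icc (0:ℝ) s, φ u ≤ 3 * Δ) →
        φ s ≤ Δ - (s * η / 2) * ‖g‖ ^ 2 := by
      intro s hs hsmall
      have hHb : ∀ u ∈ Set.Icc (0:ℝ) s, ‖fderiv ℝ (gradient f) (x - u • (η • g))‖ ≤ L := by
        intro u hu
        refine (hsmooth _).trans ?_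
        rw [hL]
        gcongr
        · exact sub_nonneg.2 (hlow _)
        · exact hsmall u hu
      have ht := taylorBound f hf x (η • g) s L hs.1 hLpos.le hHb
      have hinner : ⟪g, η • g⟫_ℝ = η * ‖g‖ ^ 2 := by
        rw [real_inner_smul_right, real_inner_self_eq_norm_sq]
      have hnrm : ‖η • g‖ ^ 2 = η ^ 2 * ‖g‖ ^ 2 := by
        rw [norm_smul, mul_pow, Real.norm_eq_abs, sq_abs]
      rw [← hg, hinner, hnrm] at ht
      have hφs : φ s ≤ Δ - s * (η * ‖g‖ ^ 2) + L * (η ^ 2 * ‖g‖ ^ 2) * s ^ 2 / 2 := by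
        rw [hφdef]; dsimp only; linarith [ht]
      have h1 : L * η * s ≤ 1 := by
        calc L * η * s ≤ L * η * 1 := by
              have : 0 ≤ L * η := mul_nonneg hLpos.le hηpos.le
              gcongr; exact hs.2
          _ = η * L := by ring
          _ ≤ 1 := hηL
      have h2 : L * (η ^ 2 * ‖g‖ ^ 2) * s ^ 2 / 2 ≤ s * η * ‖g‖ ^ 2 / 2 := by
        have hnn : 0 ≤ s * η * ‖g‖ ^ 2 :=
          mul_nonneg (mul_nonneg hs.1 hηpos.le) (sq_nonneg ‖g‖)
        calc L * (η ^ 2 * ‖g‖ ^ 2) * s ^ 2 / 2 = (L * η * s) * (s * η * ‖g‖ ^ 2) / 2 := by ring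
          _ ≤ 1 * (s * η * ‖g‖ ^ 2) / 2 := by gcongr
          _ = s * η * ‖g‖ ^ 2 / 2 := by ring
      linarith [hφs, h2]
    -- bootstrap set
    set S : Set ℝ := {s | s ∈ Set.Icc (0:ℝ) 1 ∧ ∀ u ∈ Set.Icc (0:ℝ) s, φ u ≤ 3 * Δ} with hS
    have h0S : (0:ℝ) ∈ S := ⟨⟨le_rfl, zero_le_one⟩, fun u hu => by
      have hu0 : u = 0 := le_antisymm hu.2 hu.1
      rw [hu0, hφ0]; linarith⟩
    have hne : S.Nonempty := ⟨0, h0S⟩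
    have hbdd : BddAbove S := ⟨1, fun s hsS => hsS.1.2⟩
    set β := sSup S with hβ
    have hβ0 : 0 ≤ β := le_csSup hbdd h0S
    have hβ1 : β ≤ 1 := csSup_le hne (fun s hsS => hsS.1.2)
    have hβS : β ∈ S := by
      refine ⟨⟨hβ0, hβ1⟩, ?_⟩
      intro u hu
      rcases lt_or_eq_of_le hu.2 with hlt | hequ
      · obtain ⟨s', hs'S, hus'⟩ := exists_lt_of_lt_csSup hne hlt
        exact hs'S.2 u ⟨hu.1, hus'.le⟩
      · rcases eq_or_lt_of_le hβ0 with hβz | hβpos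
        · rw [hequ, ← hβz, hφ0]; linarith
        · have htd : Filter.Tendsto φ (nhdsWithin β (Set.Iio β)) (nhds (φ β)) :=
            (hφcont.continuousAt).continuousWithinAt.tendsto
          have hev : ∀ᶠ u in nhdsWithin β (Set.Iio β), φ u ≤ 3 * Δ := by
            filter_upwards [Ioo_mem_nhdsLT_of_mem (⟨hβpos, le_rfl⟩ : β ∈ Set.Ioc 0 β)]
              with u hu'
            obtain ⟨s', hs'S, hus'⟩ := exists_lt_of_lt_csSup hne hu'.2
            exact hs'S.2 u ⟨hu'.1.le, hus'.le⟩
          rw [hequ]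
          exact le_of_tendsto htd hev
    have hβeq : β = 1 := by
      by_contra hne1
      have hβlt : β < 1 := lt_of_le_of_ne hβ1 hne1
      have hφβ : φ β ≤ Δ := by
        have hk := key β ⟨hβ0, hβ1⟩ hβS.2
        have hnn : 0 ≤ β * η / 2 * ‖g‖ ^ 2 := by positivity
        exact le_trans hk (sub_le_self Δ hnn)
      have hφβ3 : φ β < 3 * Δ := by linarith
      have hnb : φ ⁻¹' (Set.Iio (3 * Δ)) ∈ nhds β :=
        hφcont.continuousAt.preimage_mem_nhds (Iio_mem_nhds hφβ3)
      obtain ⟨ε, hε, hball⟩ := Metric.mem_nhds_iff.1 hnb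
      set β' := min 1 (β + ε / 2) with hβ'
      have hββ' : β < β' := lt_min hβlt (by linarith)
      have hβ'S : β' ∈ S := by
        refine ⟨⟨le_trans hβ0 hββ'.le, min_le_left _ _⟩, ?_⟩
        intro u hu
        rcases le_or_gt u β with h | h
        · exact hβS.2 u ⟨hu.1, h⟩
        · have hu2 : u ≤ β + ε / 2 := le_trans hu.2 (min_le_right _ _)
          have hmem : u ∈ Metric.ball β ε := by
            rw [Metric.mem_ball, Real.dist_eq, abs_lt]
            constructor <;> linarith
          exact (hball hmem).le
      have := le_csSup hbdd hβ'S
      linarith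
    have hfin := key 1 ⟨zero_le_one, le_rfl⟩ (by rw [← hβeq]; exact hβS.2)
    have h1s : φ 1 = f (x - η • g) - fstar := by rw [hφdef]; simp
    rw [h1s] at hfin
    linarith


/-- GD with the warmup schedule, nonconvex case. For a
`(ρ, K₀, K_ρ)`-smooth function with `K₀, K_ρ > 0`, gradient descent with learning rates
`η_t = (1/(4√2+4)) min{1/K₀, 1/(3^ρ K_ρ Δ_t^ρ)}` satisfies `Δ_{t+1} ≤ Δ_t` and
`min_{t<T} ‖∇f(w_t)‖² ≤ 2Δ₀ / ∑_{t<T} η_t`. -/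
theorem statement8 (d : ℕ) (f : EuclideanSpace ℝ (Fin d) → ℝ)
    (hf : ContDiff ℝ 2 f)
    (ρ K0 Kρ : ℝ) (hρ : 0 < ρ) (hK0 : 0 < K0) (hKρ : 0 < Kρ)
    (fstar : ℝ) (hglb : IsGLB (Set.range f) fstar)
    (hsmooth : ∀ v, ‖fderiv ℝ (gradient f) v‖ ≤ K0 + Kρ * (f v - fstar) ^ ρ)
    (w : ℕ → EuclideanSpace ℝ (Fin d))
    (η : ℕ → ℝ)
    (hη : ∀ t, η t = (1 / (4 * Real.sqrt 2 + 4)) *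
      min (1 / K0) (1 / (3 ^ ρ * Kρ * (f (w t) - fstar) ^ ρ)))
    (hrec : ∀ t, w (t + 1) = w t - η t • gradient f (w t))
    (T : ℕ) (hT : 1 ≤ T) :
    (∀ t < T, f (w (t + 1)) - fstar ≤ f (w t) - fstar) ∧
    (∃ t < T, ‖gradient f (w t)‖ ^ 2 ≤
      2 * (f (w 0) - fstar) / ∑ t ∈ Finset.range T, η t) := by
  have hlow : ∀ y, fstar ≤ f y := fun y => hglb.1 ⟨y, rfl⟩
  have hΔnn : ∀ t, 0 ≤ f (w t) - fstar := fun t => sub_nonneg.2 (hlow _)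
  have hηnn : ∀ t, 0 ≤ η t := by
    intro t
    rw [hη t]
    have hb : 0 ≤ 3 ^ ρ * Kρ * (f (w t) - fstar) ^ ρ :=
      mul_nonneg (mul_nonneg (Real.rpow_nonneg (by norm_num) ρ) hKρ.le)
        (Real.rpow_nonneg (hΔnn t) ρ)
    exact eta_nonneg K0 _ hK0 hb
  have hstep : ∀ t, f (w (t + 1)) - fstar ≤
      (f (w t) - fstar) - (η t / 2) * ‖gradient f (w t)‖ ^ 2 := by
    intro t
    rw [hrec t]
    exact step_lemma f hf ρ K0 Kρ hρ hK0 hKρ fstar hglb hsmooth (w t) (η t) (hη t)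
  have hmono : ∀ t, f (w (t + 1)) - fstar ≤ f (w t) - fstar := by
    intro t
    have h1 : 0 ≤ (η t / 2) * ‖gradient f (w t)‖ ^ 2 := by
      have := hηnn t; positivity
    linarith [hstep t]
  refine ⟨fun t _ => hmono t, ?_⟩
  -- telescoping
  have htel : ∑ t ∈ Finset.range T, ((f (w t) - fstar) - (f (w (t + 1)) - fstar))
      = (f (w 0) - fstar) - (f (w T) - fstar) :=
    Finset.sum_range_sub' (fun t => f (w t) - fstar) T
  have hsum : ∑ t ∈ Finset.range T, (η t / 2) * ‖gradient f (w t)‖ ^ 2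
      ≤ f (w 0) - fstar := by
    calc ∑ t ∈ Finset.range T, (η t / 2) * ‖gradient f (w t)‖ ^ 2
        ≤ ∑ t ∈ Finset.range T, ((f (w t) - fstar) - (f (w (t + 1)) - fstar)) := by
          apply Finset.sum_le_sum
          intro t _
          linarith [hstep t]
      _ = (f (w 0) - fstar) - (f (w T) - fstar) := htel
      _ ≤ f (w 0) - fstar := by linarith [hΔnn T]
  obtain ⟨t0, ht0T, ht0min⟩ := Finset.exists_min_image (Finset.range T)
    (fun t => ‖gradient f (w t)‖ ^ 2) ⟨0, Finset.mem_range.2 hT⟩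
  rw [Finset.mem_range] at ht0T
  set sEta := ∑ t ∈ Finset.range T, η t with hsEta
  have hsnn : 0 ≤ sEta := Finset.sum_nonneg (fun t _ => hηnn t)
  rcases eq_or_lt_of_le hsnn with hsz | hspos
  · -- the sum of step sizes is zero : then η 0 = 0 and Δ₀ = 0
    have hη0 : η 0 = 0 := by
      have := (Finset.sum_eq_zero_iff_of_nonneg (fun t _ => hηnn t)).1 hsz.symm
      exact this 0 (Finset.mem_range.2 hT)
    have hc : (0:ℝ) < 1 / (4 * Real.sqrt 2 + 4) := by positivity
    have hmin0 : min (1 / K0) (1 / (3 ^ ρ * Kρ * (f (w 0) - fstar) ^ ρ)) = 0 := by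
      have := hη 0
      rw [hη0] at this
      rcases mul_eq_zero.1 this.symm with h | h
      · exact absurd h hc.ne'
      · exact h
    have hb0 : 1 / (3 ^ ρ * Kρ * (f (w 0) - fstar) ^ ρ) = 0 := by
      rcases min_eq_iff.1 hmin0 with ⟨h, _⟩ | ⟨h, _⟩
      · exact absurd h (by positivity)
      · exact h
    have hden : 3 ^ ρ * Kρ * (f (w 0) - fstar) ^ ρ = 0 := by
      rcases div_eq_zero_iff.1 hb0 with h | h
      · exact absurd h one_ne_zero
      · exact h
    have hΔ0ρ : (f (w 0) - fstar) ^ ρ = 0 := by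
      have h3 : (0:ℝ) < 3 ^ ρ := Real.rpow_pos_of_pos (by norm_num) ρ
      rcases mul_eq_zero.1 hden with h | h
      · rcases mul_eq_zero.1 h with h' | h'
        · exact absurd h' h3.ne'
        · exact absurd h' hKρ.ne'
      · exact h
    have hΔ0 : f (w 0) - fstar = 0 := by
      by_contra hne
      exact (Real.rpow_pos_of_pos (lt_of_le_of_ne (hΔnn 0) (Ne.symm hne)) ρ).ne' hΔ0ρ
    have hg0 : gradient f (w 0) = 0 := by
      apply grad_zero_of_min
      intro y
      have : f (w 0) = fstar := by linarith
      rw [this]; exact hlow y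
    exact ⟨0, hT, by rw [hg0, hΔ0]; simp⟩
  · -- positive sum of step sizes
    refine ⟨t0, ht0T, ?_⟩
    rw [le_div_iff₀ hspos]
    calc ‖gradient f (w t0)‖ ^ 2 * sEta
        = ∑ t ∈ Finset.range T, ‖gradient f (w t0)‖ ^ 2 * η t := by
          rw [hsEta, Finset.mul_sum]
      _ ≤ ∑ t ∈ Finset.range T, ‖gradient f (w t)‖ ^ 2 * η t := by
          apply Finset.sum_le_sum
          intro t ht
          exact mul_le_mul_of_nonneg_right (ht0min t ht) (hηnn t)
      _ = ∑ t ∈ Finset.range T, 2 * ((η t / 2) * ‖gradient f (w t)‖ ^ 2) := by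
          apply Finset.sum_congr rfl; intro t _; ring
      _ = 2 * ∑ t ∈ Finset.range T, (η t / 2) * ‖gradient f (w t)‖ ^ 2 := by
          rw [Finset.mul_sum]
      _ ≤ 2 * (f (w 0) - fstar) := by linarith [hsum]
end
end

section
/- Let f : ℝ^d → ℝ be (ρ, K₀, K_ρ)-smooth with K₀, K_ρ > 0 and f* = inf f > −∞, and let w₀ ∈ ℝ^d with Δ₀ = f(w₀) − f* < ∞. Consider gradient descent with the constant learning rate η = (1/(4√2 + 4)) · min{1/K₀, 1/(3^ρ K_ρ Δ₀^ρ)}, i.e. w_{t+1} = w_t − η ∇f(w_t). Then for every T ≥ 1 and all t < T: Δ_{t+1} ≤ Δ_t, where Δ_t = f(w_t) − f*, and min_{t < T} ‖∇f(w_t)‖² ≤ 2Δ₀ / (η T). -/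
open Real

noncomputable section

section Aux

variable {d : ℕ}

lemma fderiv_apply_eq_inner_grad (f : EuclideanSpace ℝ (Fin d) → ℝ)
    (v u : EuclideanSpace ℝ (Fin d)) :
    fderiv ℝ f v u = inner ℝ (gradient f v) u := by
  rw [show gradient f v
      = (InnerProductSpace.toDual ℝ (EuclideanSpace ℝ (Fin d))).symm (fderiv ℝ f v) from rfl,
    ← InnerProductSpace.toDual_apply_apply, LinearIsometryEquiv.apply_symm_apply]

/-- The key descent lemma: if the Hessian norm is bounded by `L` on the sublevel set
`{v | f v ≤ f w + ε}` and `η L ≤ 1/2`, then one gradient step decreases `f` by at least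
`(η/2)‖∇f(w)‖²`. -/
lemma descent_helper (f : EuclideanSpace ℝ (Fin d) → ℝ) (hf : ContDiff ℝ 2 f)
    (L ε : ℝ) (hε : 0 < ε)
    (w : EuclideanSpace ℝ (Fin d)) (η : ℝ) (hη0 : 0 ≤ η) (hηL : η * L ≤ 1 / 2)
    (hhess : ∀ v, f v ≤ f w + ε → ‖fderiv ℝ (gradient f) v‖ ≤ L) :
    f (w - η • gradient f w) ≤ f w - η / 2 * ‖gradient f w‖ ^ 2 := by
  set g := gradient f w with hg
  set G := ‖g‖ with hG
  have hG0 : 0 ≤ G := norm_nonneg _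
  have hL0 : 0 ≤ L := le_trans (norm_nonneg _) (hhess w (by linarith))
  have hdf : Differentiable ℝ f := hf.differentiable (by norm_num)
  have hdg : Differentiable ℝ (gradient f) := by
    have h1 : ContDiff ℝ 1 (fderiv ℝ f) := hf.fderiv_right (by norm_num)
    have h2 : Differentiable ℝ
        (fun x => (InnerProductSpace.toDual ℝ (EuclideanSpace ℝ (Fin d))).symm
          (fderiv ℝ f x)) :=
      (InnerProductSpace.toDual ℝ
        (EuclideanSpace ℝ (Fin d))).symm.toContinuousLinearEquiv.toContinuousLinearMap.differentiable.comp
        (h1.differentiable (by norm_num))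
    exact h2
  set v0 : EuclideanSpace ℝ (Fin d) := -(η • g) with hv0
  set c : ℝ → EuclideanSpace ℝ (Fin d) := fun s => w + s • v0 with hc
  have hc0 : c 0 = w := by simp [hc]
  have hc1 : c 1 = w - η • g := by simp [hc, hv0, sub_eq_add_neg]
  have hcd : ∀ s : ℝ, HasDerivAt c v0 s := by
    intro s
    have := ((hasDerivAt_id s).smul_const v0).const_add w
    simp only [one_smul] at this; exact this
  have hφd : ∀ s : ℝ, HasDerivAt (fun s => f (c s)) (inner ℝ (gradient f (c s)) v0 : ℝ) s := by
    intro s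
    have h1 : HasDerivAt (fun s => f (c s)) (fderiv ℝ f (c s) v0) s :=
      (hdf (c s)).hasFDerivAt.comp_hasDerivAt s (hcd s)
    rwa [fderiv_apply_eq_inner_grad] at h1
  have hcont : Continuous fun s => f (c s) := by
    have : Continuous c := continuous_const.add (continuous_id.smul continuous_const)
    exact hdf.continuous.comp this
  -- Lipschitz bound on gradient along the path, given the region condition up to s
  have grad_lip : ∀ s ∈ Set.Icc (0:ℝ) 1, (∀ u ∈ Set.Icc 0 s, f (c u) ≤ f w + ε) →
      ‖gradient f (c s) - g‖ ≤ L * (η * G) := by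
    intro s hs hreg
    have hseg : ∀ x ∈ segment ℝ w (c s), ‖fderiv ℝ (gradient f) x‖ ≤ L := by
      intro x hx
      rw [segment_eq_image' ℝ w (c s)] at hx
      obtain ⟨θ, hθ, rfl⟩ := hx
      have hx' : w + θ • (c s - w) = c (θ * s) := by
        simp only [hc, add_sub_cancel_left, smul_smul]
      show ‖fderiv ℝ (gradient f) (w + θ • (c s - w))‖ ≤ L
      rw [hx']
      refine hhess _ (hreg (θ * s) ⟨mul_nonneg hθ.1 hs.1, ?_⟩)
      calc θ * s ≤ 1 * s := by
            apply mul_le_mul_of_nonneg_right hθ.2 hs.1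
        _ = s := one_mul s
    have := (convex_segment w (c s)).norm_image_sub_le_of_norm_fderiv_le
      (fun x _ => hdg x) hseg (left_mem_segment ℝ w (c s)) (right_mem_segment ℝ w (c s))
    have hdist : ‖c s - w‖ = s * (η * G) := by
      have : c s - w = s • v0 := by simp [hc]
      rw [this, hv0, norm_smul, norm_neg, norm_smul]
      simp [abs_of_nonneg hs.1, abs_of_nonneg hη0, hG, mul_assoc]
    calc ‖gradient f (c s) - g‖ ≤ L * ‖c s - w‖ := by simpa [hc0] using this
      _ = L * (s * (η * G)) := by rw [hdist]
      _ ≤ L * (1 * (η * G)) := by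
          apply mul_le_mul_of_nonneg_left _ hL0
          apply mul_le_mul_of_nonneg_right hs.2 (by positivity)
      _ = L * (η * G) := by ring
  -- derivative bound, given region condition up to s
  have deriv_bound : ∀ s ∈ Set.Icc (0:ℝ) 1, (∀ u ∈ Set.Icc 0 s, f (c u) ≤ f w + ε) →
      (inner ℝ (gradient f (c s)) v0 : ℝ) ≤ -(η * G ^ 2 * (1 - η * L)) := by
    intro s hs hreg
    have hlip := grad_lip s hs hreg
    have hsplit : (inner ℝ (gradient f (c s) - g) g : ℝ)
        = inner ℝ (gradient f (c s)) g - inner ℝ g g := inner_sub_left _ _ _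
    have hinner : (inner ℝ (gradient f (c s)) v0 : ℝ)
        = -η * (inner ℝ g g : ℝ) + -η * (inner ℝ (gradient f (c s) - g) g : ℝ) := by
      rw [hv0, inner_neg_right, real_inner_smul_right, hsplit]
      ring
    rw [hinner]
    have h1 : (inner ℝ g g : ℝ) = G ^ 2 := real_inner_self_eq_norm_sq g
    have h2 : |(inner ℝ (gradient f (c s) - g) g : ℝ)| ≤ L * (η * G) * G := by
      calc |(inner ℝ (gradient f (c s) - g) g : ℝ)| ≤ ‖gradient f (c s) - g‖ * ‖g‖ :=
            abs_real_inner_le_norm _ _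
        _ ≤ L * (η * G) * G := by
            apply mul_le_mul_of_nonneg_right hlip hG0
    have h3 : -η * (inner ℝ (gradient f (c s) - g) g : ℝ) ≤ η * (L * (η * G) * G) := by
      calc -η * (inner ℝ (gradient f (c s) - g) g : ℝ)
          = η * (-(inner ℝ (gradient f (c s) - g) g : ℝ)) := by ring
        _ ≤ η * |(inner ℝ (gradient f (c s) - g) g : ℝ)| :=
            mul_le_mul_of_nonneg_left (neg_le_abs _) hη0
        _ ≤ η * (L * (η * G) * G) := mul_le_mul_of_nonneg_left h2 hη0
    rw [h1]
    have h4 : η * (L * (η * G) * G) = η * G ^ 2 * (η * L) := by ring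
    linarith
  -- monotone decrease on [0, b] given region condition on [0, b]
  set C : ℝ := η * G ^ 2 * (1 - η * L) with hCdef
  have hC0 : 0 ≤ C := by
    apply mul_nonneg (mul_nonneg hη0 (sq_nonneg G))
    linarith
  have mono : ∀ b ∈ Set.Icc (0:ℝ) 1, (∀ u ∈ Set.Icc 0 b, f (c u) ≤ f w + ε) →
      f (c b) ≤ f w - C * b := by
    intro b hb hreg
    set ψ : ℝ → ℝ := fun s => f (c s) + C * s with hψ
    have hψd : ∀ s, HasDerivAt ψ ((inner ℝ (gradient f (c s)) v0 : ℝ) + C) s := by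
      intro s
      exact (hφd s).add ((hasDerivAt_id s).const_mul C |>.congr_deriv (by ring))
    have hanti : AntitoneOn ψ (Set.Icc 0 b) := by
      apply antitoneOn_of_deriv_nonpos (convex_Icc 0 b)
      · exact (hcont.add (continuous_const.mul continuous_id)).continuousOn
      · intro x _
        exact ((hψd x).differentiableAt).differentiableWithinAt
      · intro x hx
        rw [interior_Icc] at hx
        rw [(hψd x).deriv]
        have hx1 : x ∈ Set.Icc (0:ℝ) 1 := ⟨hx.1.le, hx.2.le.trans hb.2⟩
        have hreg' : ∀ u ∈ Set.Icc 0 x, f (c u) ≤ f w + ε := fun u hu =>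
          hreg u ⟨hu.1, hu.2.trans hx.2.le⟩
        have := deriv_bound x hx1 hreg'
        linarith
    have := hanti (Set.left_mem_Icc.mpr hb.1) (Set.mem_Icc.mpr ⟨hb.1, le_rfl⟩) hb.1
    simp only [hψ, hc0, mul_zero, add_zero] at this
    linarith
  -- the region condition holds on all of [0,1]
  have region_all : ∀ s ∈ Set.Icc (0:ℝ) 1, f (c s) ≤ f w + ε := by
    by_contra hcon
    push_neg at hcon
    obtain ⟨s₀, hs₀, hs₀'⟩ := hcon
    set B : Set ℝ := {s ∈ Set.Icc (0:ℝ) 1 | f w + ε < f (c s)} with hB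
    have hBne : B.Nonempty := ⟨s₀, hs₀, hs₀'⟩
    have hBbdd : BddBelow B := ⟨0, fun x hx => hx.1.1⟩
    set b := sInf B with hbdef
    have hble : ∀ x ∈ B, b ≤ x := fun x hx => csInf_le hBbdd hx
    have hb0 : 0 ≤ b := le_csInf hBne fun x hx => hx.1.1
    have hb1 : b ≤ 1 := le_trans (hble s₀ ⟨hs₀, hs₀'⟩) hs₀.2
    have hbcl : b ∈ closure B := csInf_mem_closure hBne hBbdd
    have hb_ge : f w + ε ≤ f (c b) := by
      have hcl : closure B ⊆ {s : ℝ | f w + ε ≤ f (c s)} := by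
        apply closure_minimal _ (isClosed_le continuous_const hcont)
        exact fun s hs => hs.2.le
      exact hcl hbcl
    have hbpos : 0 < b := by
      rcases lt_or_eq_of_le hb0 with h | h
      · exact h
      · exfalso
        rw [← h] at hb_ge
        rw [hc0] at hb_ge
        linarith
    have hlt : ∀ u ∈ Set.Ico (0:ℝ) b, f (c u) ≤ f w + ε := by
      intro u hu
      by_contra hucon
      push_neg at hucon
      have : u ∈ B := ⟨⟨hu.1, hu.2.le.trans hb1⟩, hucon⟩
      exact absurd (hble u this) (not_le.mpr hu.2)
    have hb_le : f (c b) ≤ f w + ε := by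
      have htd : Filter.Tendsto (fun u => f (c u)) (nhdsWithin b (Set.Iio b))
          (nhds (f (c b))) := (hcont.continuousAt).continuousWithinAt.tendsto
      refine le_of_tendsto htd ?_
      filter_upwards [Ioo_mem_nhdsLT hbpos] with u hu
      exact hlt u ⟨hu.1.le, hu.2⟩
    have hregb : ∀ u ∈ Set.Icc 0 b, f (c u) ≤ f w + ε := by
      intro u hu
      rcases lt_or_eq_of_le hu.2 with h | h
      · exact hlt u ⟨hu.1, h⟩
      · rw [h]; exact hb_le
    have hmb := mono b ⟨hb0, hb1⟩ hregb
    have := mul_nonneg hC0 hb0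
    linarith
  -- conclude
  have hfinal := mono 1 ⟨zero_le_one, le_rfl⟩ (fun u hu => region_all u hu)
  rw [hc1] at hfinal
  have h12 : (1:ℝ) / 2 ≤ 1 - η * L := by linarith
  have : η / 2 * G ^ 2 ≤ C * 1 := by
    calc η / 2 * G ^ 2 = (η * G ^ 2) * (1 / 2) := by ring
      _ ≤ (η * G ^ 2) * (1 - η * L) :=
          mul_le_mul_of_nonneg_left h12 (mul_nonneg hη0 (sq_nonneg G))
      _ = C * 1 := by rw [hCdef]; ring
  linarith

end Aux

/-- GD with constant learning rate, nonconvex case. For a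
`(ρ, K₀, K_ρ)`-smooth function with `K₀, K_ρ > 0`, gradient descent with the constant
learning rate `η = (1/(4√2+4)) min{1/K₀, 1/(3^ρ K_ρ Δ₀^ρ)}` satisfies `Δ_{t+1} ≤ Δ_t` and
`min_{t<T} ‖∇f(w_t)‖² ≤ 2Δ₀ / (ηT)`. -/
theorem statement9 (d : ℕ) (f : EuclideanSpace ℝ (Fin d) → ℝ)
    (hf : ContDiff ℝ 2 f)
    (ρ K0 Kρ : ℝ) (hρ : 0 < ρ) (hK0 : 0 < K0) (hKρ : 0 < Kρ)
    (fstar : ℝ) (hglb : IsGLB (Set.range f) fstar)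
    (hsmooth : ∀ v, ‖fderiv ℝ (gradient f) v‖ ≤ K0 + Kρ * (f v - fstar) ^ ρ)
    (w : ℕ → EuclideanSpace ℝ (Fin d))
    (η : ℝ)
    (hη : η = (1 / (4 * Real.sqrt 2 + 4)) *
      min (1 / K0) (1 / (3 ^ ρ * Kρ * (f (w 0) - fstar) ^ ρ)))
    (hrec : ∀ t, w (t + 1) = w t - η • gradient f (w t))
    (T : ℕ) (hT : 1 ≤ T) :
    (∀ t < T, f (w (t + 1)) - fstar ≤ f (w t) - fstar) ∧
    (∃ t < T, ‖gradient f (w t)‖ ^ 2 ≤ 2 * (f (w 0) - fstar) / (η * T)) := by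
  have hlow : ∀ v, fstar ≤ f v := fun v => hglb.1 ⟨v, rfl⟩
  have hD0 : 0 ≤ f (w 0) - fstar := sub_nonneg.mpr (hlow _)
  by_cases hΔ : f (w 0) - fstar = 0
  · -- degenerate case: w 0 is a global minimizer, η = 0
    have hfw0 : f (w 0) = fstar := by linarith
    have hmin : IsLocalMin f (w 0) :=
      Filter.Eventually.of_forall fun v => by rw [hfw0]; exact hlow v
    have hgrad0 : gradient f (w 0) = 0 := by
      rw [show gradient f (w 0)
          = (InnerProductSpace.toDual ℝ (EuclideanSpace ℝ (Fin d))).symm (fderiv ℝ f (w 0))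
          from rfl, hmin.fderiv_eq_zero, map_zero]
    have hη0 : η = 0 := by
      rw [hη, hΔ, Real.zero_rpow hρ.ne', mul_zero, div_zero]
      rw [min_eq_right (by positivity), mul_zero]
    have hwconst : ∀ t, w t = w 0 := by
      intro t
      induction t with
      | zero => rfl
      | succ n ih => rw [hrec n, hη0, zero_smul, sub_zero, ih]
    constructor
    · intro t _
      rw [hwconst (t + 1), hwconst t]
    · refine ⟨0, hT, ?_⟩
      rw [hgrad0, hΔ]
      simp
  · -- main case
    have hD : 0 < f (w 0) - fstar := lt_of_le_of_ne hD0 (Ne.symm hΔ)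
    set D := f (w 0) - fstar with hDdef
    set L := K0 + Kρ * (3 * D) ^ ρ with hLdef
    have h3D : (3 * D) ^ ρ = 3 ^ ρ * D ^ ρ := Real.mul_rpow (by norm_num) hD.le
    have h3ρ : (0:ℝ) < 3 ^ ρ := Real.rpow_pos_of_pos (by norm_num) ρ
    have hDρ : (0:ℝ) < D ^ ρ := Real.rpow_pos_of_pos hD ρ
    have hsqrt2 : (0:ℝ) ≤ Real.sqrt 2 := Real.sqrt_nonneg 2
    have hcpos : (0:ℝ) < 4 * Real.sqrt 2 + 4 := by linarith
    have hηpos : 0 < η := by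
      rw [hη]
      apply mul_pos (by positivity)
      apply lt_min (by positivity) (by positivity)
    have hηK0 : η * K0 ≤ 1 / (4 * Real.sqrt 2 + 4) := by
      have h1 : η ≤ (1 / (4 * Real.sqrt 2 + 4)) * (1 / K0) := by
        rw [hη]
        apply mul_le_mul_of_nonneg_left (min_le_left _ _) (by positivity)
      calc η * K0 ≤ ((1 / (4 * Real.sqrt 2 + 4)) * (1 / K0)) * K0 :=
            mul_le_mul_of_nonneg_right h1 hK0.le
        _ = 1 / (4 * Real.sqrt 2 + 4) := by field_simp
    have hηKρ : η * (Kρ * (3 * D) ^ ρ) ≤ 1 / (4 * Real.sqrt 2 + 4) := by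
      have h1 : η ≤ (1 / (4 * Real.sqrt 2 + 4)) * (1 / (3 ^ ρ * Kρ * D ^ ρ)) := by
        rw [hη]
        apply mul_le_mul_of_nonneg_left (min_le_right _ _) (by positivity)
      have h2 : (0:ℝ) < 3 ^ ρ * Kρ * D ^ ρ := by positivity
      calc η * (Kρ * (3 * D) ^ ρ)
          = η * (3 ^ ρ * Kρ * D ^ ρ) := by rw [h3D]; ring
        _ ≤ ((1 / (4 * Real.sqrt 2 + 4)) * (1 / (3 ^ ρ * Kρ * D ^ ρ)))
            * (3 ^ ρ * Kρ * D ^ ρ) := mul_le_mul_of_nonneg_right h1 h2.le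
        _ = 1 / (4 * Real.sqrt 2 + 4) := by field_simp
    have hηL : η * L ≤ 1 / 2 := by
      have h1 : 1 / (4 * Real.sqrt 2 + 4) ≤ 1 / 4 := by
        apply one_div_le_one_div_of_le (by norm_num) (by linarith)
      have : η * L = η * K0 + η * (Kρ * (3 * D) ^ ρ) := by rw [hLdef]; ring
      linarith
    -- one descent step
    have descent : ∀ t, f (w t) - fstar ≤ D →
        f (w (t + 1)) ≤ f (w t) - η / 2 * ‖gradient f (w t)‖ ^ 2 := by
      intro t ht
      rw [hrec t]
      apply descent_helper f hf L (2 * D) (by linarith) (w t) η hηpos.le hηL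
      intro v hv
      refine le_trans (hsmooth v) ?_
      rw [hLdef]
      have hfv : f v - fstar ≤ 3 * D := by linarith
      have : (f v - fstar) ^ ρ ≤ (3 * D) ^ ρ :=
        Real.rpow_le_rpow (sub_nonneg.mpr (hlow v)) hfv hρ.le
      nlinarith
    have bound : ∀ t, f (w t) - fstar ≤ D := by
      intro t
      induction t with
      | zero => exact le_of_eq hDdef.symm
      | succ n ih =>
        have h1 := descent n ih
        nlinarith [sq_nonneg ‖gradient f (w n)‖]
    have dec : ∀ t, f (w (t + 1)) ≤ f (w t) - η / 2 * ‖gradient f (w t)‖ ^ 2 :=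
      fun t => descent t (bound t)
    constructor
    · intro t _
      have := dec t
      nlinarith [sq_nonneg ‖gradient f (w t)‖]
    · have hsum : ∑ t ∈ Finset.range T, (η / 2 * ‖gradient f (w t)‖ ^ 2) ≤ D := by
        calc ∑ t ∈ Finset.range T, (η / 2 * ‖gradient f (w t)‖ ^ 2)
            ≤ ∑ t ∈ Finset.range T, (f (w t) - f (w (t + 1))) :=
              Finset.sum_le_sum fun t _ => by linarith [dec t]
          _ = f (w 0) - f (w T) := Finset.sum_range_sub' (fun t => f (w t)) T
          _ ≤ D := by have := hlow (w T); rw [hDdef]; linarith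
      by_contra hcon
      push_neg at hcon
      have hTpos : (0:ℝ) < T := by exact_mod_cast Nat.lt_of_lt_of_le Nat.zero_lt_one hT
      have hlt : ∀ t ∈ Finset.range T,
          η / 2 * (2 * D / (η * T)) < η / 2 * ‖gradient f (w t)‖ ^ 2 := by
        intro t ht
        have := hcon t (Finset.mem_range.mp ht)
        apply mul_lt_mul_of_pos_left this (by positivity)
      have hsum2 : ∑ t ∈ Finset.range T, (η / 2 * (2 * D / (η * T)))
          < ∑ t ∈ Finset.range T, (η / 2 * ‖gradient f (w t)‖ ^ 2) :=
        Finset.sum_lt_sum_of_nonempty (by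
          rw [Finset.nonempty_range_iff]; omega) hlt
      have hconst : ∑ t ∈ Finset.range T, (η / 2 * (2 * D / (η * T))) = D := by
        rw [Finset.sum_const, Finset.card_range, nsmul_eq_mul]
        field_simp
      rw [hconst] at hsum2
      linarith
end
end

section
/- Let f : ℝ^d → ℝ be convex and (ρ, K₀, K_ρ)-smooth with K₀, K_ρ > 0 and f* = inf f > −∞, attained at a minimizer w* ∈ ℝ^d. Let w₀ ∈ ℝ^d, D₀ = ‖w₀ − w*‖ and Δ₀ = f(w₀) − f* < ∞. Consider gradient descent with the warmup schedule η_t = (1/(8√2 + 8)) · min{1/K₀, 1/(3^ρ K_ρ Δ_t^ρ)}, i.e. w_{t+1} = w_t − η_t ∇f(w_t), where Δ_t = f(w_t) − f*. Then for every T ≥ 1: Δ_{t+1} ≤ Δ_t for all t < T, ∑_{t=0}^{T−1} η_t Δ_t ≤ D₀²/2, and consequently Δ_{T−1} ≤ D₀² / (2 ∑_{t=0}^{T−1} η_t). -/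
open Real Set InnerProductSpace

noncomputable section

variable {E : Type*} [NormedAddCommGroup E] [InnerProductSpace ℝ E] [CompleteSpace E]

lemma grad_contDiff {f : E → ℝ} (hf : ContDiff ℝ 2 f) : ContDiff ℝ 1 (gradient f) := by
  have h1 : ContDiff ℝ 1 (fderiv ℝ f) := hf.fderiv_right (by norm_num)
  exact (toDual ℝ E).symm.contDiff.comp h1

lemma line_hasDerivAt {f : E → ℝ} (hf : ContDiff ℝ 2 f) (x v : E) (s : ℝ) :
    HasDerivAt (fun r : ℝ => f (x + r • v)) ⟪gradient f (x + s • v), v⟫_ℝ s := by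
  have hdiff : DifferentiableAt ℝ f (x + s • v) :=
    (hf.differentiable (by norm_num)) _
  have hp : HasDerivAt (fun r : ℝ => x + r • v) v s := by
    simpa using ((hasDerivAt_id s).smul_const v).const_add x
  have h := hdiff.hasFDerivAt.comp_hasDerivAt s hp
  have hg : ⟪gradient f (x + s • v), v⟫_ℝ = fderiv ℝ f (x + s • v) v :=
    toDual_symm_apply
  rw [hg]; exact h

lemma taylor_ub {f : E → ℝ} (hf : ContDiff ℝ 2 f) {x v : E} {M : ℝ}
    (hb : ∀ s ∈ Icc (0:ℝ) 1, ‖fderiv ℝ (gradient f) (x + s • v)‖ ≤ M) :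
    f (x + v) ≤ f x + ⟪gradient f x, v⟫_ℝ + M / 2 * ‖v‖ ^ 2 := by
  have hgC : ContDiff ℝ 1 (gradient f) := grad_contDiff hf
  set ψ : ℝ → ℝ := fun s => ⟪gradient f (x + s • v), v⟫_ℝ with hψ
  have hψcont : Continuous ψ := by
    exact (hgC.continuous.comp (by continuity)).inner continuous_const
  -- Lipschitz bound on gradient along the segment
  have hlip : ∀ s ∈ Icc (0:ℝ) 1, ‖gradient f (x + s • v) - gradient f x‖ ≤ M * (s * ‖v‖) := by
    intro s hs
    set S : Set E := (fun θ : ℝ => x + θ • v) '' Icc 0 1 with hS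
    have hconvS : Convex ℝ S := by
      have : S = segment ℝ x (x + v) := by
        rw [segment_eq_image' ℝ x (x + v)]; simp [hS]
      rw [this]; exact convex_segment _ _
    have hd : ∀ y ∈ S, DifferentiableAt ℝ (gradient f) y :=
      fun y _ => (hgC.differentiable (by norm_num)) y
    have hbS : ∀ y ∈ S, ‖fderiv ℝ (gradient f) y‖ ≤ M := by
      rintro y ⟨θ, hθ, rfl⟩; exact hb θ hθ
    have hx0 : x ∈ S := ⟨0, by constructor <;> norm_num, by simp⟩
    have hx1 : x + s • v ∈ S := ⟨s, hs, rfl⟩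
    have := hconvS.norm_image_sub_le_of_norm_fderiv_le hd hbS hx0 hx1
    calc ‖gradient f (x + s • v) - gradient f x‖ ≤ M * ‖x + s • v - x‖ := this
      _ = M * (s * ‖v‖) := by
          rw [add_sub_cancel_left, norm_smul, Real.norm_eq_abs, abs_of_nonneg hs.1]
  -- FTC
  have hftc : ∫ s in (0:ℝ)..1, ψ s = f (x + v) - f x := by
    have := intervalIntegral.integral_eq_sub_of_hasDerivAt
      (f := fun r : ℝ => f (x + r • v)) (f' := ψ)
      (fun s _ => line_hasDerivAt hf x v s)
      (hψcont.intervalIntegrable 0 1)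
    simpa using this
  have hint2 : IntervalIntegrable (fun s : ℝ => ψ 0 + M * ‖v‖ ^ 2 * s) MeasureTheory.volume 0 1 := by
    apply Continuous.intervalIntegrable; continuity
  have hmono : ∫ s in (0:ℝ)..1, ψ s ≤ ∫ s in (0:ℝ)..1, (ψ 0 + M * ‖v‖ ^ 2 * s) := by
    apply intervalIntegral.integral_mono_on zero_le_one (hψcont.intervalIntegrable 0 1) hint2
    intro s hs
    have h1 : ψ s - ψ 0 ≤ M * ‖v‖ ^ 2 * s := by
      have he : ψ s - ψ 0 = ⟪gradient f (x + s • v) - gradient f x, v⟫_ℝ := by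
        simp [hψ, inner_sub_left]
      rw [he]
      calc ⟪gradient f (x + s • v) - gradient f x, v⟫_ℝ
          ≤ ‖gradient f (x + s • v) - gradient f x‖ * ‖v‖ := real_inner_le_norm _ _
        _ ≤ M * (s * ‖v‖) * ‖v‖ :=
            mul_le_mul_of_nonneg_right (hlip s hs) (norm_nonneg v)
        _ = M * ‖v‖ ^ 2 * s := by ring
    linarith
  have hcomp : ∫ s in (0:ℝ)..1, (ψ 0 + M * ‖v‖ ^ 2 * s) = ψ 0 + M * ‖v‖ ^ 2 / 2 := by
    have hi1 : IntervalIntegrable (fun s : ℝ => M * ‖v‖ ^ 2 * s) MeasureTheory.volume 0 1 := by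
      apply Continuous.intervalIntegrable; continuity
    rw [intervalIntegral.integral_add intervalIntegrable_const hi1,
      intervalIntegral.integral_const_mul, integral_id]
    simp; ring
  have hψ0 : ψ 0 = ⟪gradient f x, v⟫_ℝ := by simp [hψ]
  nlinarith [hftc, hmono, hcomp]

lemma bootstrap {φ : ℝ → ℝ} {c1 c3 : ℝ} (hφ : ContinuousOn φ (Icc 0 1))
    (h13 : c1 < c3) (h0 : φ 0 ≤ c3)
    (key : ∀ s ∈ Icc (0:ℝ) 1, (∀ r ∈ Icc (0:ℝ) s, φ r ≤ c3) → φ s ≤ c1) :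
    ∀ s ∈ Icc (0:ℝ) 1, φ s ≤ c1 := by
  set S : Set ℝ := {s ∈ Icc (0:ℝ) 1 | ∀ r ∈ Icc (0:ℝ) s, φ r ≤ c3} with hS
  have h0S : (0:ℝ) ∈ S := by
    refine ⟨⟨le_refl _, zero_le_one⟩, ?_⟩
    intro r hr
    have : r = 0 := le_antisymm hr.2 hr.1
    rwa [this]
  have hbdd : BddAbove S := BddAbove.mono (fun s hs => hs.1) (bddAbove_Icc)
  set m := sSup S with hm
  have hmS0 : 0 ≤ m := le_csSup hbdd h0S
  have hm1 : m ≤ 1 := csSup_le ⟨0, h0S⟩ (fun s hs => hs.1.2)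
  have hmIcc : m ∈ Icc (0:ℝ) 1 := ⟨hmS0, hm1⟩
  -- every r in [0, m] has φ r ≤ c3
  have Hm : ∀ r ∈ Icc (0:ℝ) m, φ r ≤ c3 := by
    intro r hr
    rcases lt_or_eq_of_le hr.2 with hlt | heq
    · obtain ⟨s, hsS, hrs⟩ := exists_lt_of_lt_csSup ⟨0, h0S⟩ hlt
      exact hsS.2 r ⟨hr.1, le_of_lt hrs⟩
    · subst heq
      rcases eq_or_lt_of_le hr.1 with h0m | h0m
      · rw [← h0m]; exact h0
      · -- m > 0 : take limit from the left
        have hcw : ContinuousWithinAt φ (Ico 0 m) m := by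
          apply (hφ m hmIcc).mono
          intro y hy; exact ⟨hy.1, le_of_lt (lt_of_lt_of_le hy.2 hm1)⟩
        have hne : m ∈ closure (Ico (0:ℝ) m) := by
          rw [closure_Ico (ne_of_lt h0m)]; exact ⟨hmS0, le_refl _⟩
        have htend : Filter.Tendsto φ (nhdsWithin m (Ico 0 m)) (nhds (φ m)) := hcw
        have hnb : (nhdsWithin m (Ico (0:ℝ) m)).NeBot :=
          mem_closure_iff_nhdsWithin_neBot.mp hne
        refine le_of_tendsto htend ?_
        filter_upwards [eventually_mem_nhdsWithin] with y hy
        obtain ⟨s, hsS, hys⟩ := exists_lt_of_lt_csSup ⟨0, h0S⟩ hy.2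
        exact hsS.2 y ⟨hy.1, le_of_lt hys⟩
  -- conclude on [0, m]
  have Hc1 : ∀ s ∈ Icc (0:ℝ) m, φ s ≤ c1 := by
    intro s hs
    exact key s ⟨hs.1, le_trans hs.2 hm1⟩ (fun r hr => Hm r ⟨hr.1, le_trans hr.2 hs.2⟩)
  -- m = 1
  have hm_eq : m = 1 := by
    by_contra hne
    have hmlt : m < 1 := lt_of_le_of_ne hm1 hne
    have hφm : φ m ≤ c1 := Hc1 m ⟨hmS0, le_refl _⟩
    have hcw : ContinuousWithinAt φ (Icc 0 1) m := hφ m hmIcc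
    have htend : Filter.Tendsto φ (nhdsWithin m (Icc 0 1)) (nhds (φ m)) := hcw
    have hev : ∀ᶠ y in nhdsWithin m (Icc 0 1), φ y < c3 :=
      htend.eventually_lt_const (lt_of_le_of_lt hφm h13)
    rw [Filter.eventually_iff, Metric.mem_nhdsWithin_iff] at hev
    obtain ⟨ε, hε, hball⟩ := hev
    set s' := min 1 (m + ε / 2) with hs'
    have hms' : m < s' := lt_min hmlt (by linarith)
    have hs'1 : s' ≤ 1 := min_le_left _ _
    have hs'0 : 0 ≤ s' := le_of_lt (lt_of_le_of_lt hmS0 hms')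
    have hs'S : s' ∈ S := by
      refine ⟨⟨hs'0, hs'1⟩, ?_⟩
      intro r hr
      rcases le_or_gt r m with hrm | hrm
      · exact Hm r ⟨hr.1, hrm⟩
      · have hr1 : r ≤ 1 := le_trans hr.2 hs'1
        have hd : r ∈ Metric.ball m ε := by
          rw [Metric.mem_ball, Real.dist_eq, abs_of_pos (by linarith)]
          have : r ≤ m + ε / 2 := le_trans hr.2 (min_le_right _ _)
          linarith
        exact le_of_lt (hball ⟨hd, ⟨hr.1, hr1⟩⟩)
    have := le_csSup hbdd hs'S
    linarith
  intro s hs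
  exact Hc1 s ⟨hs.1, by rw [hm_eq]; exact hs.2⟩

lemma taylor_on_sub {f : E → ℝ} (hf : ContDiff ℝ 2 f) {fstar Δ L : ℝ}
    (hLK : ∀ u, f u - fstar ≤ 3 * Δ → ‖fderiv ℝ (gradient f) u‖ ≤ L)
    {x v : E} {s : ℝ} (hs : s ∈ Icc (0:ℝ) 1)
    (hsub : ∀ r ∈ Icc (0:ℝ) s, f (x + r • v) - fstar ≤ 3 * Δ) :
    f (x + s • v) ≤ f x + s * ⟪gradient f x, v⟫_ℝ + L / 2 * s ^ 2 * ‖v‖ ^ 2 := by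
  have hb : ∀ r ∈ Icc (0:ℝ) 1, ‖fderiv ℝ (gradient f) (x + r • (s • v))‖ ≤ L := by
    intro r hr
    have h1 : x + r • s • v = x + (r * s) • v := by rw [smul_smul]
    rw [h1]
    apply hLK
    apply hsub
    constructor
    · exact mul_nonneg hr.1 hs.1
    · calc r * s ≤ 1 * s := mul_le_mul_of_nonneg_right hr.2 hs.1
        _ = s := one_mul s
  have := taylor_ub hf hb
  calc f (x + s • v) ≤ f x + ⟪gradient f x, s • v⟫_ℝ + L / 2 * ‖s • v‖ ^ 2 := this
    _ = f x + s * ⟪gradient f x, v⟫_ℝ + L / 2 * s ^ 2 * ‖v‖ ^ 2 := by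
        rw [real_inner_smul_right, norm_smul, Real.norm_eq_abs, abs_of_nonneg hs.1,
          mul_pow]
        ring

lemma descent_core {f : E → ℝ} (hf : ContDiff ℝ 2 f) {fstar Δ L τ : ℝ}
    {x : E}
    (hΔ : 0 < Δ) (hx : f x - fstar ≤ Δ)
    (hLK : ∀ u, f u - fstar ≤ 3 * Δ → ‖fderiv ℝ (gradient f) u‖ ≤ L)
    (hL : 0 < L) (hτ : 0 ≤ τ) (hτL : τ * L ≤ 1) :
    f (x - τ • gradient f x) ≤ f x - τ / 2 * ‖gradient f x‖ ^ 2 := by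
  set g := gradient f x with hg
  set v := -(τ • g) with hv
  have hgsq : (0:ℝ) ≤ ‖g‖ ^ 2 := sq_nonneg _
  have hinner : ⟪g, v⟫_ℝ = -(τ * ‖g‖ ^ 2) := by
    rw [hv, inner_neg_right, real_inner_smul_right, real_inner_self_eq_norm_sq]
  have hnv : ‖v‖ ^ 2 = τ ^ 2 * ‖g‖ ^ 2 := by
    rw [hv, norm_neg, norm_smul, Real.norm_eq_abs, abs_of_nonneg hτ, mul_pow]
  have hall : ∀ s ∈ Icc (0:ℝ) 1, f (x + s • v) ≤ fstar + Δ := by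
    apply bootstrap (c3 := fstar + 3 * Δ)
    · exact (hf.continuous.comp (by continuity)).continuousOn
    · linarith
    · simp only [zero_smul, add_zero]; linarith
    · intro s hs hsub
      have hT := taylor_on_sub hf hLK hs (fun r hr => by linarith [hsub r hr])
      rw [hinner, hnv] at hT
      have h1 : s * τ * L ≤ 1 := by
        calc s * τ * L ≤ 1 * (τ * L) := by
              rw [mul_assoc]
              exact mul_le_mul_of_nonneg_right hs.2 (mul_nonneg hτ (le_of_lt hL))
          _ ≤ 1 := by rw [one_mul]; exact hτL
      have h2 : 0 ≤ s * τ * ‖g‖ ^ 2 := mul_nonneg (mul_nonneg hs.1 hτ) hgsq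
      nlinarith [hs.1, hs.2]
  have hsub1 : ∀ r ∈ Icc (0:ℝ) 1, f (x + r • v) - fstar ≤ 3 * Δ := by
    intro r hr; linarith [hall r hr]
  have hT := taylor_on_sub hf hLK (⟨zero_le_one, le_refl 1⟩ : (1:ℝ) ∈ Icc (0:ℝ) 1) hsub1
  rw [hinner, hnv] at hT
  have hx1 : x + (1:ℝ) • v = x - τ • g := by rw [one_smul, hv]; abel
  rw [hx1] at hT
  have h3 : 0 ≤ (1 - τ * L) * (τ * ‖g‖ ^ 2) :=
    mul_nonneg (by linarith) (mul_nonneg hτ hgsq)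
  nlinarith [hT, h3]

lemma wstar_core {f : E → ℝ} (hf : ContDiff ℝ 2 f) {fstar Δ L : ℝ}
    {x wstar : E}
    (hΔ : 0 < Δ)
    (hLK : ∀ u, f u - fstar ≤ 3 * Δ → ‖fderiv ℝ (gradient f) u‖ ≤ L)
    (hL : 0 < L)
    (hgs : ‖gradient f x‖ ^ 2 ≤ 2 * L * Δ)
    (hgw : gradient f wstar = 0) (hwf : f wstar = fstar) :
    f (wstar + (1 / L) • gradient f x) ≤ fstar + ‖gradient f x‖ ^ 2 / (2 * L) := by
  set g := gradient f x with hg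
  set v := (1 / L) • g with hv
  have hgsq : (0:ℝ) ≤ ‖g‖ ^ 2 := sq_nonneg _
  have hnv : ‖v‖ ^ 2 = (1 / L) ^ 2 * ‖g‖ ^ 2 := by
    rw [hv, norm_smul, Real.norm_eq_abs, abs_of_nonneg (by positivity : (0:ℝ) ≤ 1 / L),
      mul_pow]
  have hinner : ⟪gradient f wstar, v⟫_ℝ = 0 := by rw [hgw, inner_zero_left]
  have hall : ∀ s ∈ Icc (0:ℝ) 1, f (wstar + s • v) ≤ fstar + Δ := by
    apply bootstrap (c3 := fstar + 3 * Δ)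
    · exact (hf.continuous.comp (by continuity)).continuousOn
    · linarith
    · simp only [zero_smul, add_zero]; linarith
    · intro s hs hsub
      have hT := taylor_on_sub hf hLK hs (fun r hr => by linarith [hsub r hr])
      rw [hinner, hnv, hwf] at hT
      have hkey : L / 2 * s ^ 2 * ((1 / L) ^ 2 * ‖g‖ ^ 2) ≤ s ^ 2 * Δ := by
        have h1 : L / 2 * s ^ 2 * ((1 / L) ^ 2 * ‖g‖ ^ 2) = s ^ 2 * (‖g‖ ^ 2 / (2 * L)) := by
          field_simp
        rw [h1]
        have h2 : ‖g‖ ^ 2 / (2 * L) ≤ Δ := by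
          rw [div_le_iff₀ (by positivity)]; linarith
        exact mul_le_mul_of_nonneg_left h2 (sq_nonneg s)
      have hs2 : s ^ 2 ≤ 1 := by nlinarith [hs.1, hs.2]
      have : s ^ 2 * Δ ≤ Δ := by nlinarith [hΔ]
      linarith [hT]
  have hsub1 : ∀ r ∈ Icc (0:ℝ) 1, f (wstar + r • v) - fstar ≤ 3 * Δ := by
    intro r hr; linarith [hall r hr]
  have hT := taylor_on_sub hf hLK (⟨zero_le_one, le_refl 1⟩ : (1:ℝ) ∈ Icc (0:ℝ) 1) hsub1
  rw [hinner, hnv, hwf, one_smul] at hT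
  have hE : L / 2 * 1 ^ 2 * ((1 / L) ^ 2 * ‖g‖ ^ 2) = ‖g‖ ^ 2 / (2 * L) := by
    field_simp
  rw [hE] at hT
  linarith [hT]

lemma convex_grad_le {f : E → ℝ} (hf : ContDiff ℝ 2 f) (hconv : ConvexOn ℝ univ f)
    (x y : E) : f x + ⟪gradient f x, y - x⟫_ℝ ≤ f y := by
  set q : ℝ → ℝ := fun s => f (x + s • (y - x)) with hqdef
  have hq : ConvexOn ℝ univ q := by
    have h := hconv.comp_affineMap (AffineMap.lineMap x y : ℝ →ᵃ[ℝ] E)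
    have he : (f ∘ (AffineMap.lineMap x y : ℝ →ᵃ[ℝ] E)) = q := by
      funext s
      simp only [Function.comp_apply, AffineMap.lineMap_apply, hqdef]
      congr 1
      rw [vsub_eq_sub, vadd_eq_add]
      abel
    rw [he] at h
    simpa using h
  have hd : HasDerivAt q ⟪gradient f x, y - x⟫_ℝ 0 := by
    have := line_hasDerivAt hf x (y - x) 0
    simpa using this
  have hslope := hq.le_slope_of_hasDerivAt (mem_univ (0:ℝ)) (mem_univ (1:ℝ)) zero_lt_one hd
  have hq0 : q 0 = f x := by simp [hqdef]
  have hq1 : q 1 = f y := by simp [hqdef]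
  rw [slope_def_field, hq0, hq1] at hslope
  simp only [sub_zero, div_one] at hslope
  linarith [hslope]

lemma grad_min_zero {f : E → ℝ} {x0 : E} (hmin : ∀ v, f x0 ≤ f v) :
    gradient f x0 = 0 := by
  have h : IsLocalMin f x0 := Filter.Eventually.of_forall (fun v => hmin v)
  simp [gradient, h.fderiv_eq_zero]

lemma step_main {f : E → ℝ} (hf : ContDiff ℝ 2 f) (hconv : ConvexOn ℝ univ f)
    {ρ K0 Kρ fstar : ℝ} (hρ : 0 < ρ) (hK0 : 0 < K0) (hKρ : 0 < Kρ)
    (hlb : ∀ v, fstar ≤ f v)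
    (hsmooth : ∀ v, ‖fderiv ℝ (gradient f) v‖ ≤ K0 + Kρ * (f v - fstar) ^ ρ)
    {wstar : E} (hmin : ∀ v, f wstar ≤ f v) (hfstar : f wstar = fstar)
    (x : E) (ηv : ℝ)
    (hηv : ηv = (1 / (8 * Real.sqrt 2 + 8)) *
      min (1 / K0) (1 / (3 ^ ρ * Kρ * (f x - fstar) ^ ρ))) :
    f (x - ηv • gradient f x) - fstar ≤ f x - fstar ∧
    ‖x - ηv • gradient f x - wstar‖ ^ 2 ≤ ‖x - wstar‖ ^ 2 - 2 * ηv * (f x - fstar) := by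
  have hΔ0 : 0 ≤ f x - fstar := by linarith [hlb x]
  rcases eq_or_lt_of_le hΔ0 with hΔz | hΔpos
  · -- f x = fstar : x is a global minimizer, gradient is zero
    have hxmin : ∀ v, f x ≤ f v := by intro v; have := hlb v; linarith
    have hg0 : gradient f x = 0 := grad_min_zero hxmin
    rw [hg0]
    constructor
    · simp
    · simp [← hΔz]
  · -- main case
    set Δ := f x - fstar with hΔdef
    set g := gradient f x with hg
    have hΔ : 0 < Δ := hΔpos
    set L := K0 + Kρ * (3 * Δ) ^ ρ with hLdef
    have h3Δ : (0:ℝ) ≤ 3 * Δ := by linarith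
    have hL : 0 < L := by
      have := Real.rpow_nonneg h3Δ ρ
      nlinarith
    have hLK : ∀ u, f u - fstar ≤ 3 * Δ → ‖fderiv ℝ (gradient f) u‖ ≤ L := by
      intro u hu
      refine (hsmooth u).trans ?_
      have h1 : (f u - fstar) ^ ρ ≤ (3 * Δ) ^ ρ :=
        Real.rpow_le_rpow (by linarith [hlb u]) hu (le_of_lt hρ)
      rw [hLdef]
      have := mul_le_mul_of_nonneg_left h1 hKρ.le
      linarith
    have hsplit : (3 * Δ) ^ ρ = 3 ^ ρ * Δ ^ ρ := Real.mul_rpow (by norm_num) hΔ0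
    set P := 3 ^ ρ * Kρ * Δ ^ ρ with hPdef
    have hP : 0 < P := by
      exact mul_pos (mul_pos (Real.rpow_pos_of_pos (by norm_num) ρ) hKρ)
        (Real.rpow_pos_of_pos hΔ ρ)
    have hLP : L = K0 + P := by rw [hLdef, hsplit, hPdef]; ring
    have hc : (0:ℝ) < 8 * Real.sqrt 2 + 8 := by positivity
    have hmin_nn : (0:ℝ) ≤ min (1 / K0) (1 / P) := le_min (by positivity) (by positivity)
    have hη0 : 0 ≤ ηv := by
      rw [hηv]; exact mul_nonneg (by positivity) hmin_nn
    have hηL : ηv * L ≤ 1 := by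
      have h1 : min (1 / K0) (1 / P) * K0 ≤ 1 := by
        calc min (1 / K0) (1 / P) * K0 ≤ (1 / K0) * K0 :=
              mul_le_mul_of_nonneg_right (min_le_left _ _) hK0.le
          _ = 1 := one_div_mul_cancel hK0.ne'
      have h2 : min (1 / K0) (1 / P) * P ≤ 1 := by
        calc min (1 / K0) (1 / P) * P ≤ (1 / P) * P :=
              mul_le_mul_of_nonneg_right (min_le_right _ _) hP.le
          _ = 1 := one_div_mul_cancel hP.ne'
      have h3 : min (1 / K0) (1 / P) * (K0 + P) ≤ 2 := by
        have he : min (1 / K0) (1 / P) * (K0 + P)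
            = min (1 / K0) (1 / P) * K0 + min (1 / K0) (1 / P) * P := by ring
        linarith [he.le, he.ge]
      have hc2 : 2 * (1 / (8 * Real.sqrt 2 + 8)) ≤ 1 := by
        rw [mul_one_div, div_le_one hc]
        nlinarith [Real.sqrt_nonneg 2]
      calc ηv * L = (1 / (8 * Real.sqrt 2 + 8)) * (min (1 / K0) (1 / P) * (K0 + P)) := by
            rw [hηv, hLP]; ring
        _ ≤ (1 / (8 * Real.sqrt 2 + 8)) * 2 :=
            mul_le_mul_of_nonneg_left h3 (by positivity)
        _ ≤ 1 := by linarith [hc2]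
    have hη_le : ηv ≤ 1 / L := by
      rw [le_div_iff₀ hL]; exact hηL
    -- gradient norm bound via descent with step 1/L
    have hdesc1 : f (x - (1 / L) • g) ≤ f x - (1 / L) / 2 * ‖g‖ ^ 2 :=
      descent_core hf hΔ (le_of_eq hΔdef) hLK hL (by positivity)
        (le_of_eq (one_div_mul_cancel hL.ne'))
    have hgs : ‖g‖ ^ 2 ≤ 2 * L * Δ := by
      have hfl := hlb (x - (1 / L) • g)
      have h1 : (1 / L) / 2 * ‖g‖ ^ 2 ≤ Δ := by
        rw [hΔdef]; linarith
      have h2 : ‖g‖ ^ 2 = (2 * L) * ((1 / L) / 2 * ‖g‖ ^ 2) := by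
        field_simp
      rw [h2]
      calc (2 * L) * ((1 / L) / 2 * ‖g‖ ^ 2) ≤ (2 * L) * Δ :=
            mul_le_mul_of_nonneg_left h1 (by positivity)
        _ = 2 * L * Δ := by ring
    -- part 1: descent
    have hdesc : f (x - ηv • g) ≤ f x - ηv / 2 * ‖g‖ ^ 2 :=
      descent_core hf hΔ (le_of_eq hΔdef) hLK hL hη0 hηL
    have part1 : f (x - ηv • g) - fstar ≤ f x - fstar := by
      have : 0 ≤ ηv / 2 * ‖g‖ ^ 2 := by positivity
      linarith
    refine ⟨part1, ?_⟩
    -- cocoercivity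
    have hgw : gradient f wstar = 0 := grad_min_zero hmin
    have hwc := wstar_core hf hΔ hLK hL hgs hgw hfstar
    rw [← hg] at hwc
    have hcg := convex_grad_le hf hconv x (wstar + (1 / L) • g)
    have hip : ⟪g, wstar + (1 / L) • g - x⟫_ℝ
        = ⟪g, wstar - x⟫_ℝ + (1 / L) * ‖g‖ ^ 2 := by
      have he : wstar + (1 / L) • g - x = (wstar - x) + (1 / L) • g := by abel
      rw [he, inner_add_right, real_inner_smul_right, real_inner_self_eq_norm_sq]
    rw [hip] at hcg
    clear_value Δ g L P
    have hco : Δ + (1 / L) * ‖g‖ ^ 2 - ‖g‖ ^ 2 / (2 * L) ≤ ⟪g, x - wstar⟫_ℝ := by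
      have hswap : ⟪g, x - wstar⟫_ℝ = - ⟪g, wstar - x⟫_ℝ := by
        rw [← inner_neg_right]; congr 1; abel
      rw [hswap, hΔdef]
      linarith [hcg, hwc]
    -- distance recursion
    have hexp : ‖x - ηv • g - wstar‖ ^ 2
        = ‖x - wstar‖ ^ 2 - 2 * (ηv * ⟪g, x - wstar⟫_ℝ) + ηv ^ 2 * ‖g‖ ^ 2 := by
      have he : x - ηv • g - wstar = (x - wstar) - ηv • g := by abel
      rw [he, norm_sub_sq_real, real_inner_smul_right, norm_smul, Real.norm_eq_abs,
        mul_pow, sq_abs, real_inner_comm]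
    rw [hexp]
    have hmul := mul_le_mul_of_nonneg_left hco (by linarith : (0:ℝ) ≤ 2 * ηv)
    have hsq : ηv ^ 2 * ‖g‖ ^ 2 ≤ ηv * ‖g‖ ^ 2 / L := by
      have h1 : ηv * ηv ≤ ηv * (1 / L) := mul_le_mul_of_nonneg_left hη_le hη0
      calc ηv ^ 2 * ‖g‖ ^ 2 = (ηv * ηv) * ‖g‖ ^ 2 := by ring
        _ ≤ (ηv * (1 / L)) * ‖g‖ ^ 2 :=
            mul_le_mul_of_nonneg_right h1 (sq_nonneg _)
        _ = ηv * ‖g‖ ^ 2 / L := by ring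
    have hfin : 2 * ηv * ((1 / L) * ‖g‖ ^ 2 - ‖g‖ ^ 2 / (2 * L)) = ηv * ‖g‖ ^ 2 / L := by
      field_simp; ring
    linarith [hmul, hsq, hfin]

/-- GD with the warmup schedule, convex case. For a convex
`(ρ, K₀, K_ρ)`-smooth function with minimizer `w*`, gradient descent with learning rates
`η_t = (1/(8√2+8)) min{1/K₀, 1/(3^ρ K_ρ Δ_t^ρ)}` satisfies `Δ_{t+1} ≤ Δ_t`,
`∑_{t<T} η_t Δ_t ≤ D₀²/2` and `Δ_{T−1} ≤ D₀² / (2 ∑_{t<T} η_t)`. -/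
theorem statement10 (d : ℕ) (f : EuclideanSpace ℝ (Fin d) → ℝ)
    (hf : ContDiff ℝ 2 f)
    (hconv : ConvexOn ℝ Set.univ f)
    (ρ K0 Kρ : ℝ) (hρ : 0 < ρ) (hK0 : 0 < K0) (hKρ : 0 < Kρ)
    (fstar : ℝ) (hglb : IsGLB (Set.range f) fstar)
    (hsmooth : ∀ v, ‖fderiv ℝ (gradient f) v‖ ≤ K0 + Kρ * (f v - fstar) ^ ρ)
    (wstar : EuclideanSpace ℝ (Fin d))
    (hmin : ∀ v, f wstar ≤ f v) (hfstar : f wstar = fstar)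
    (w : ℕ → EuclideanSpace ℝ (Fin d))
    (η : ℕ → ℝ)
    (hη : ∀ t, η t = (1 / (8 * Real.sqrt 2 + 8)) *
      min (1 / K0) (1 / (3 ^ ρ * Kρ * (f (w t) - fstar) ^ ρ)))
    (hrec : ∀ t, w (t + 1) = w t - η t • gradient f (w t))
    (T : ℕ) (hT : 1 ≤ T) :
    (∀ t < T, f (w (t + 1)) - fstar ≤ f (w t) - fstar) ∧
    (∑ t ∈ Finset.range T, η t * (f (w t) - fstar) ≤ ‖w 0 - wstar‖ ^ 2 / 2) ∧
    (f (w (T - 1)) - fstar ≤ ‖w 0 - wstar‖ ^ 2 / (2 * ∑ t ∈ Finset.range T, η t)) := by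
  have hlb : ∀ v, fstar ≤ f v := fun v => hglb.1 ⟨v, rfl⟩
  have step : ∀ t, f (w (t + 1)) - fstar ≤ f (w t) - fstar ∧
      ‖w (t + 1) - wstar‖ ^ 2 ≤ ‖w t - wstar‖ ^ 2 - 2 * η t * (f (w t) - fstar) := by
    intro t
    have h := step_main hf hconv hρ hK0 hKρ hlb hsmooth hmin hfstar (w t) (η t) (hη t)
    rw [← hrec t] at h
    exact h
  have Δnn : ∀ t, 0 ≤ f (w t) - fstar := fun t => by linarith [hlb (w t)]
  have ηnn : ∀ t, 0 ≤ η t := by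
    intro t; rw [hη t]
    apply mul_nonneg (by positivity)
    apply le_min (by positivity)
    apply one_div_nonneg.mpr
    have h1 : (0:ℝ) ≤ (f (w t) - fstar) ^ ρ := Real.rpow_nonneg (Δnn t) ρ
    have h2 : (0:ℝ) ≤ (3:ℝ) ^ ρ := (Real.rpow_pos_of_pos (by norm_num) ρ).le
    exact mul_nonneg (mul_nonneg h2 hKρ.le) h1
  have sumbound : ∀ N : ℕ, ‖w N - wstar‖ ^ 2
      + 2 * ∑ t ∈ Finset.range N, η t * (f (w t) - fstar) ≤ ‖w 0 - wstar‖ ^ 2 := by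
    intro N
    induction N with
    | zero => simp
    | succ n ih =>
      rw [Finset.sum_range_succ]
      linarith [(step n).2, ih]
  have part2 : ∑ t ∈ Finset.range T, η t * (f (w t) - fstar) ≤ ‖w 0 - wstar‖ ^ 2 / 2 := by
    have h := sumbound T
    have hn : (0:ℝ) ≤ ‖w T - wstar‖ ^ 2 := sq_nonneg _
    linarith
  refine ⟨fun t _ => (step t).1, part2, ?_⟩
  have anti : Antitone (fun t => f (w t) - fstar) :=
    antitone_nat_of_succ_le (fun n => (step n).1)
  set S := ∑ t ∈ Finset.range T, η t with hS
  have hSnn : 0 ≤ S := Finset.sum_nonneg (fun t _ => ηnn t)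
  have hT1 : T - 1 < T := Nat.sub_lt (by omega) one_pos
  rcases eq_or_lt_of_le hSnn with hS0 | hSpos
  · have hall : ∀ t ∈ Finset.range T, η t = 0 :=
      (Finset.sum_eq_zero_iff_of_nonneg (fun t _ => ηnn t)).mp hS0.symm
    have hηT := hall (T - 1) (Finset.mem_range.mpr hT1)
    have hΔT : f (w (T - 1)) - fstar ≤ 0 := by
      by_contra hpos
      push_neg at hpos
      have hP : 0 < 3 ^ ρ * Kρ * (f (w (T - 1)) - fstar) ^ ρ :=
        mul_pos (mul_pos (Real.rpow_pos_of_pos (by norm_num) ρ) hKρ)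
          (Real.rpow_pos_of_pos hpos ρ)
      rw [hη (T - 1)] at hηT
      have h1 : 0 < (1 / (8 * Real.sqrt 2 + 8)) *
          min (1 / K0) (1 / (3 ^ ρ * Kρ * (f (w (T - 1)) - fstar) ^ ρ)) := by
        apply mul_pos (by positivity)
        exact lt_min (by positivity) (by positivity)
      linarith
    rw [← hS0]
    simpa using hΔT
  · have hsum2 : (f (w (T - 1)) - fstar) * S
        ≤ ∑ t ∈ Finset.range T, η t * (f (w t) - fstar) := by
      rw [hS, Finset.mul_sum]
      apply Finset.sum_le_sum
      intro t ht
      have htT : t ≤ T - 1 := by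
        have := Finset.mem_range.mp ht; omega
      have hΔle : f (w (T - 1)) - fstar ≤ f (w t) - fstar := anti htT
      rw [mul_comm]
      exact mul_le_mul_of_nonneg_left hΔle (ηnn t)
    rw [le_div_iff₀ (by positivity : (0:ℝ) < 2 * S)]
    nlinarith [hsum2, part2]
end
end
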